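/- arXiv:2010.15685 — 10 statements merged into one kernel-verified Lean document; each statement's English description precedes it below -/
import Mathlib

section
/- Let α ∈ (0,1), Λ > 0 and v₀ ∈ (0,1). Then there exist a speed c > 0, a free boundary 0 < R < ∞, and a function v : ℝ → ℝ that is continuously differentiable on [0,R] and twice differentiable on [0,R), such that Λ·v''(ξ) − c·v'(ξ) = v(ξ)^α for all ξ ∈ (0,R), v(0) = v₀, v'(0) = −(c/Λ)·(1−v₀), v(R) = 0, v'(R) = 0, and moreover v(ξ) > 0, v'(ξ) < 0 and v''(ξ) > 0 for all ξ ∈ [0,R). -/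
open Real Set MeasureTheory Filter intervalIntegral Topology

noncomputable section

namespace FBPAux

/-- exponent of the subsolution -/
def pp (α : ℝ) : ℝ := 2 / (1 - α)
/-- exponent of the supersolution -/
def qq (α : ℝ) : ℝ := (1 - α)⁻¹
/-- coefficient of the subsolution -/
def eps (α : ℝ) : ℝ := (Real.exp (-2⁻¹) / (pp α * (pp α - 1))) ^ (1 - α)⁻¹
/-- subsolution -/
def psi0 (α : ℝ) (s : ℝ) : ℝ := eps α * (max 0 (min s 2⁻¹)) ^ pp α
/-- supersolution -/
def Psi (α : ℝ) (s : ℝ) : ℝ := (max s 0) ^ qq α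
/-- inner primitive -/
def G (α : ℝ) (f : ℝ → ℝ) (u : ℝ) : ℝ := ∫ t in (0:ℝ)..u, Real.exp t * f t ^ α
/-- iteration operator -/
def T (α : ℝ) (f : ℝ → ℝ) (s : ℝ) : ℝ := ∫ u in (0:ℝ)..s, Real.exp (-u) * G α f u
/-- iterates -/
def seq (α : ℝ) : ℕ → ℝ → ℝ := fun n => (T α)^[n] (psi0 α)
/-- the solution of `ψ'' = ψ^α - ψ'`, `ψ(0) = ψ'(0) = 0` -/
def psi (α : ℝ) (s : ℝ) : ℝ := ⨆ n, seq α n s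

variable {α : ℝ}

section Basic

lemma one_sub_pos (hα : α ∈ Set.Ioo (0:ℝ) 1) : 0 < 1 - α := by
  have := hα.2; linarith

lemma pp_gt_two (hα : α ∈ Set.Ioo (0:ℝ) 1) : 2 < pp α := by
  have h1 : 0 < 1 - α := one_sub_pos hα
  have h2 : 1 - α < 1 := by have := hα.1; linarith
  rw [pp, lt_div_iff₀ h1]; nlinarith

lemma pp_pos (hα : α ∈ Set.Ioo (0:ℝ) 1) : 0 < pp α := by linarith [pp_gt_two hα]

lemma pp_mul (hα : α ∈ Set.Ioo (0:ℝ) 1) : pp α * (1 - α) = 2 := by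
  rw [pp]; field_simp [ne_of_gt (one_sub_pos hα)]

lemma pa_eq (hα : α ∈ Set.Ioo (0:ℝ) 1) : pp α * α = pp α - 2 := by
  have := pp_mul hα; nlinarith

lemma qq_ge_one (hα : α ∈ Set.Ioo (0:ℝ) 1) : 1 ≤ qq α := by
  rw [qq]
  rw [le_inv_comm₀ one_pos (one_sub_pos hα)]
  linarith [hα.1]

lemma qq_pos (hα : α ∈ Set.Ioo (0:ℝ) 1) : 0 < qq α := lt_of_lt_of_le one_pos (qq_ge_one hα)

lemma qa_eq (hα : α ∈ Set.Ioo (0:ℝ) 1) : qq α * α = qq α - 1 := by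
  have h1 : (1 - α) ≠ 0 := ne_of_gt (one_sub_pos hα)
  rw [qq]; field_simp; ring

lemma eps_pos (hα : α ∈ Set.Ioo (0:ℝ) 1) : 0 < eps α := by
  apply Real.rpow_pos_of_pos
  apply div_pos (Real.exp_pos _)
  nlinarith [pp_gt_two hα]

lemma eps_le_one (hα : α ∈ Set.Ioo (0:ℝ) 1) : eps α ≤ 1 := by
  rw [eps]
  apply Real.rpow_le_one (le_of_lt (div_pos (Real.exp_pos _) (by nlinarith [pp_gt_two hα])))
  · rw [div_le_one (by nlinarith [pp_gt_two hα])]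
    calc Real.exp (-2⁻¹) ≤ 1 := by
            apply Real.exp_le_one_iff.mpr; norm_num
      _ ≤ pp α * (pp α - 1) := by nlinarith [pp_gt_two hα]
  · have := one_sub_pos hα; positivity

lemma eps_key (hα : α ∈ Set.Ioo (0:ℝ) 1) :
    Real.exp (-2⁻¹) * eps α ^ α / (pp α * (pp α - 1)) = eps α := by
  have hD : (0:ℝ) < pp α * (pp α - 1) := by nlinarith [pp_gt_two hα]
  set b : ℝ := Real.exp (-2⁻¹) / (pp α * (pp α - 1)) with hbdef
  have hb : 0 < b := div_pos (Real.exp_pos _) hD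
  have h1 : eps α ^ α = b ^ ((1 - α)⁻¹ * α) := by
    rw [eps, ← Real.rpow_mul hb.le]
  have key : (1:ℝ) + (1 - α)⁻¹ * α = (1 - α)⁻¹ := by
    have h1 : (1 - α) ≠ 0 := ne_of_gt (one_sub_pos hα)
    field_simp
    ring
  calc Real.exp (-2⁻¹) * eps α ^ α / (pp α * (pp α - 1))
      = b * b ^ ((1 - α)⁻¹ * α) := by rw [h1, hbdef]; ring
    _ = b ^ ((1:ℝ) + (1 - α)⁻¹ * α) := by
        rw [Real.rpow_add hb, Real.rpow_one]
    _ = eps α := by rw [key, eps]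

end Basic

section Barriers

lemma base_mem (s : ℝ) : 0 ≤ max 0 (min s 2⁻¹) := le_max_left _ _

lemma psi0_nonneg (hα : α ∈ Set.Ioo (0:ℝ) 1) (s : ℝ) : 0 ≤ psi0 α s :=
  mul_nonneg (eps_pos hα).le (Real.rpow_nonneg (base_mem s) _)

lemma psi0_continuous (hα : α ∈ Set.Ioo (0:ℝ) 1) : Continuous (psi0 α) := by
  apply continuous_const.mul
  apply Continuous.rpow_const (continuous_const.max (continuous_id.min continuous_const))
  intro x; right; exact (pp_pos hα).le

lemma psi0_monotone (hα : α ∈ Set.Ioo (0:ℝ) 1) : Monotone (psi0 α) := by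
  intro x y hxy
  apply mul_le_mul_of_nonneg_left _ (eps_pos hα).le
  exact Real.rpow_le_rpow (base_mem x) (max_le_max le_rfl (min_le_min hxy le_rfl)) (pp_pos hα).le

lemma psi0_eq (hα : α ∈ Set.Ioo (0:ℝ) 1) {s : ℝ} (h0 : 0 ≤ s) (h1 : s ≤ 2⁻¹) :
    psi0 α s = eps α * s ^ pp α := by
  rw [psi0, min_eq_left h1, max_eq_right h0]

lemma psi0_pos (hα : α ∈ Set.Ioo (0:ℝ) 1) {s : ℝ} (h0 : 0 < s) : 0 < psi0 α s := by
  have : 0 < max 0 (min s 2⁻¹) := by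
    rw [lt_max_iff]; right; exact lt_min h0 (by norm_num)
  exact mul_pos (eps_pos hα) (Real.rpow_pos_of_pos this _)

lemma psi0_zero (hα : α ∈ Set.Ioo (0:ℝ) 1) {s : ℝ} (h0 : s ≤ 0) : psi0 α s = 0 := by
  have : max 0 (min s 2⁻¹) = 0 := by
    apply max_eq_left; exact le_trans (min_le_left _ _) h0
  rw [psi0, this, Real.zero_rpow (ne_of_gt (pp_pos hα)), mul_zero]

lemma psi0_const (hα : α ∈ Set.Ioo (0:ℝ) 1) {s : ℝ} (h : 2⁻¹ ≤ s) :
    psi0 α s = psi0 α 2⁻¹ := by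
  rw [psi0, psi0, min_eq_right h, min_self]

lemma Psi_nonneg (hα : α ∈ Set.Ioo (0:ℝ) 1) (s : ℝ) : 0 ≤ Psi α s :=
  Real.rpow_nonneg (le_max_right _ _) _

lemma Psi_monotone (hα : α ∈ Set.Ioo (0:ℝ) 1) : Monotone (Psi α) := fun x y hxy =>
  Real.rpow_le_rpow (le_max_right _ _) (max_le_max hxy le_rfl) (qq_pos hα).le

lemma Psi_of_nonneg {s : ℝ} (h0 : 0 ≤ s) : Psi α s = s ^ qq α := by
  rw [Psi, max_eq_left h0]

lemma Psi_zero (hα : α ∈ Set.Ioo (0:ℝ) 1) {s : ℝ} (h0 : s ≤ 0) : Psi α s = 0 := by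
  rw [Psi, max_eq_right h0, Real.zero_rpow (ne_of_gt (qq_pos hα))]

lemma Psi_continuous (hα : α ∈ Set.Ioo (0:ℝ) 1) : Continuous (Psi α) := by
  apply Continuous.rpow_const (continuous_id.max continuous_const)
  intro x; right; exact (qq_pos hα).le

lemma psi0_le_Psi (hα : α ∈ Set.Ioo (0:ℝ) 1) (s : ℝ) : psi0 α s ≤ Psi α s := by
  rcases le_or_gt s 0 with h | h
  · rw [psi0_zero hα h, Psi_zero hα h]
  rcases le_or_gt s 2⁻¹ with h2 | h2
  · rw [psi0_eq hα h.le h2, Psi_of_nonneg h.le]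
    calc eps α * s ^ pp α ≤ 1 * s ^ qq α := by
          apply mul_le_mul (eps_le_one hα) _ (Real.rpow_nonneg h.le _) zero_le_one
          exact Real.rpow_le_rpow_of_exponent_ge h (by linarith) (by
            rw [pp, qq, inv_eq_one_div, div_le_div_iff₀ (one_sub_pos hα) (one_sub_pos hα)]
            nlinarith [one_sub_pos hα])
      _ = s ^ qq α := one_mul _
  · rw [psi0_const hα h2.le, psi0_eq hα (by norm_num) le_rfl, Psi_of_nonneg h.le]
    calc eps α * (2⁻¹:ℝ) ^ pp α ≤ 1 * (2⁻¹:ℝ) ^ qq α := by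
          apply mul_le_mul (eps_le_one hα) _ (Real.rpow_nonneg (by norm_num) _) zero_le_one
          exact Real.rpow_le_rpow_of_exponent_ge (by norm_num) (by norm_num) (by
            rw [pp, qq, inv_eq_one_div, div_le_div_iff₀ (one_sub_pos hα) (one_sub_pos hα)]
            nlinarith [one_sub_pos hα])
      _ = (2⁻¹:ℝ) ^ qq α := one_mul _
    exact le_trans (by norm_num [Real.rpow_natCast]) (Real.rpow_le_rpow (by norm_num) h2.le (qq_pos hα).le)

end Barriers

section Operator

/-- the invariant class of functions for the iteration -/
def Good (α : ℝ) (f : ℝ → ℝ) : Prop :=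
  Continuous f ∧ Monotone f ∧ (∀ s, 0 ≤ f s) ∧ (∀ s, f s ≤ Psi α s)

variable {f g : ℝ → ℝ}

lemma Good.psi0 (hα : α ∈ Set.Ioo (0:ℝ) 1) : Good α (psi0 α) :=
  ⟨psi0_continuous hα, psi0_monotone hα, psi0_nonneg hα, psi0_le_Psi hα⟩

lemma Good.zero (hα : α ∈ Set.Ioo (0:ℝ) 1) (hg : Good α f) {s : ℝ} (h : s ≤ 0) : f s = 0 :=
  le_antisymm (by simpa [Psi_zero hα h] using hg.2.2.2 s) (hg.2.2.1 s)

lemma cont_inner (hα : α ∈ Set.Ioo (0:ℝ) 1) (hf : Continuous f) :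
    Continuous fun t => Real.exp t * f t ^ α :=
  Real.continuous_exp.mul (hf.rpow_const fun _ => Or.inr hα.1.le)

lemma G_zero_of_nonpos (hα : α ∈ Set.Ioo (0:ℝ) 1) (hg : Good α f) {u : ℝ} (hu : u ≤ 0) :
    G α f u = 0 := by
  have h : EqOn (fun t => Real.exp t * f t ^ α) (fun _ => (0:ℝ)) (Set.uIcc 0 u) := by
    intro t ht
    have htle : t ≤ 0 := by
      rw [Set.uIcc_of_ge hu] at ht; exact ht.2
    simp only
    rw [Good.zero hα hg htle, Real.zero_rpow (ne_of_gt hα.1), mul_zero]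
  rw [G, intervalIntegral.integral_congr h, intervalIntegral.integral_zero]

lemma G_nonneg (hα : α ∈ Set.Ioo (0:ℝ) 1) (hg : Good α f) (u : ℝ) : 0 ≤ G α f u := by
  rcases le_or_gt u 0 with h | h
  · rw [G_zero_of_nonpos hα hg h]
  · rw [G]
    apply intervalIntegral.integral_nonneg h.le
    intro t _
    exact mul_nonneg (Real.exp_pos _).le (Real.rpow_nonneg (hg.2.2.1 t) _)

lemma G_cont (hα : α ∈ Set.Ioo (0:ℝ) 1) (hf : Continuous f) : Continuous (G α f) :=
  intervalIntegral.continuous_primitive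
    (fun _ _ => (cont_inner hα hf).intervalIntegrable _ _) 0

lemma G_le (hα : α ∈ Set.Ioo (0:ℝ) 1) (hg : Good α f) {u : ℝ} (hu : 0 ≤ u) :
    G α f u ≤ (Real.exp u - 1) * f u ^ α := by
  have : G α f u ≤ ∫ t in (0:ℝ)..u, Real.exp t * f u ^ α := by
    rw [G]
    apply intervalIntegral.integral_mono_on hu
      ((cont_inner hα hg.1).intervalIntegrable _ _)
      ((Real.continuous_exp.mul continuous_const).intervalIntegrable _ _)
    intro t ht
    exact mul_le_mul_of_nonneg_left
      (Real.rpow_le_rpow (hg.2.2.1 t) (hg.2.1 ht.2) hα.1.le) (Real.exp_pos t).le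
  calc G α f u ≤ ∫ t in (0:ℝ)..u, Real.exp t * f u ^ α := this
    _ = (Real.exp u - 1) * f u ^ α := by
        rw [intervalIntegral.integral_mul_const, integral_exp, Real.exp_zero]

lemma cont_outer (hα : α ∈ Set.Ioo (0:ℝ) 1) (hf : Continuous f) :
    Continuous fun u => Real.exp (-u) * G α f u :=
  (Real.continuous_exp.comp continuous_neg).mul (G_cont hα hf)

lemma T_cont (hα : α ∈ Set.Ioo (0:ℝ) 1) (hf : Continuous f) : Continuous (T α f) :=
  intervalIntegral.continuous_primitive
    (fun _ _ => (cont_outer hα hf).intervalIntegrable _ _) 0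

lemma T_zero_of_nonpos (hα : α ∈ Set.Ioo (0:ℝ) 1) (hg : Good α f) {s : ℝ} (hs : s ≤ 0) :
    T α f s = 0 := by
  have h : EqOn (fun u => Real.exp (-u) * G α f u) (fun _ => (0:ℝ)) (Set.uIcc 0 s) := by
    intro u hu
    have hule : u ≤ 0 := by rw [Set.uIcc_of_ge hs] at hu; exact hu.2
    simp only
    rw [G_zero_of_nonpos hα hg hule, mul_zero]
  rw [T, intervalIntegral.integral_congr h, intervalIntegral.integral_zero]

lemma T_monotone (hα : α ∈ Set.Ioo (0:ℝ) 1) (hg : Good α f) : Monotone (T α f) := by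
  intro x y hxy
  have h1 : T α f y - T α f x = ∫ u in x..y, Real.exp (-u) * G α f u := by
    rw [T, T, ← intervalIntegral.integral_add_adjacent_intervals
      ((cont_outer hα hg.1).intervalIntegrable 0 x)
      ((cont_outer hα hg.1).intervalIntegrable x y)]
    ring
  have h2 : 0 ≤ ∫ u in x..y, Real.exp (-u) * G α f u :=
    intervalIntegral.integral_nonneg hxy
      (fun u _ => mul_nonneg (Real.exp_pos _).le (G_nonneg hα hg u))
  linarith [h1, h2]

lemma T_nonneg (hα : α ∈ Set.Ioo (0:ℝ) 1) (hg : Good α f) (s : ℝ) : 0 ≤ T α f s := by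
  rcases le_or_gt s 0 with h | h
  · rw [T_zero_of_nonpos hα hg h]
  · rw [← T_zero_of_nonpos hα hg le_rfl]
    exact T_monotone hα hg h.le

lemma T_le_Psi (hα : α ∈ Set.Ioo (0:ℝ) 1) (hg : Good α f) (s : ℝ) : T α f s ≤ Psi α s := by
  rcases le_or_gt s 0 with h | h
  · rw [T_zero_of_nonpos hα hg h, Psi_zero hα h]
  have key : ∀ u ∈ Set.Icc (0:ℝ) s, Real.exp (-u) * G α f u ≤ u ^ (qq α - 1) := by
    intro u hu
    have h1 : Real.exp (-u) * G α f u ≤ Real.exp (-u) * ((Real.exp u - 1) * f u ^ α) :=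
      mul_le_mul_of_nonneg_left (G_le hα hg hu.1) (Real.exp_pos _).le
    have h2 : Real.exp (-u) * ((Real.exp u - 1) * f u ^ α) ≤ 1 * f u ^ α := by
      rw [← mul_assoc]
      apply mul_le_mul_of_nonneg_right _ (Real.rpow_nonneg (hg.2.2.1 u) _)
      have he : Real.exp (-u) * (Real.exp u - 1) = 1 - Real.exp (-u) := by
        rw [mul_sub, ← Real.exp_add, neg_add_cancel, Real.exp_zero, mul_one]
      rw [he]
      linarith [Real.exp_pos (-u)]
    have h3 : f u ^ α ≤ u ^ (qq α - 1) := by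
      have := hg.2.2.2 u
      calc f u ^ α ≤ Psi α u ^ α :=
            Real.rpow_le_rpow (hg.2.2.1 u) this hα.1.le
        _ = u ^ (qq α - 1) := by
            rw [Psi_of_nonneg hu.1, ← Real.rpow_mul hu.1, qa_eq hα]
    calc Real.exp (-u) * G α f u ≤ 1 * f u ^ α := le_trans h1 h2
      _ = f u ^ α := one_mul _
      _ ≤ u ^ (qq α - 1) := h3
  have hint : IntervalIntegrable (fun u : ℝ => u ^ (qq α - 1)) volume 0 s := by
    apply intervalIntegral.intervalIntegrable_rpow'
    linarith [qq_ge_one hα]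
  have h4 : T α f s ≤ ∫ u in (0:ℝ)..s, u ^ (qq α - 1) :=
    intervalIntegral.integral_mono_on h.le
      ((cont_outer hα hg.1).intervalIntegrable 0 s) hint key
  have h5 : ∫ u in (0:ℝ)..s, u ^ (qq α - 1) = s ^ qq α / qq α := by
    rw [integral_rpow (Or.inl (by linarith [qq_ge_one hα]))]
    rw [sub_add_cancel, Real.zero_rpow (ne_of_gt (qq_pos hα)), sub_zero]
  calc T α f s ≤ s ^ qq α / qq α := le_trans h4 (le_of_eq h5)
    _ ≤ s ^ qq α := by
        apply div_le_self (Real.rpow_nonneg h.le _) (qq_ge_one hα)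
    _ = Psi α s := (Psi_of_nonneg h.le).symm

lemma Good.T (hα : α ∈ Set.Ioo (0:ℝ) 1) (hg : Good α f) : Good α (T α f) :=
  ⟨T_cont hα hg.1, T_monotone hα hg, T_nonneg hα hg, T_le_Psi hα hg⟩

lemma G_mono_f (hα : α ∈ Set.Ioo (0:ℝ) 1) (hf : Good α f) (hg : Good α g)
    (hle : ∀ s, f s ≤ g s) (u : ℝ) : G α f u ≤ G α g u := by
  rcases le_or_gt u 0 with h | h
  · rw [G_zero_of_nonpos hα hf h, G_zero_of_nonpos hα hg h]
  · apply intervalIntegral.integral_mono_on h.le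
      ((cont_inner hα hf.1).intervalIntegrable _ _)
      ((cont_inner hα hg.1).intervalIntegrable _ _)
    intro t _
    exact mul_le_mul_of_nonneg_left
      (Real.rpow_le_rpow (hf.2.2.1 t) (hle t) hα.1.le) (Real.exp_pos t).le

lemma T_mono_f (hα : α ∈ Set.Ioo (0:ℝ) 1) (hf : Good α f) (hg : Good α g)
    (hle : ∀ s, f s ≤ g s) (s : ℝ) : T α f s ≤ T α g s := by
  rcases le_or_gt s 0 with h | h
  · rw [T_zero_of_nonpos hα hf h, T_zero_of_nonpos hα hg h]
  · apply intervalIntegral.integral_mono_on h.le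
      ((cont_outer hα hf.1).intervalIntegrable _ _)
      ((cont_outer hα hg.1).intervalIntegrable _ _)
    intro u _
    exact mul_le_mul_of_nonneg_left (G_mono_f hα hf hg hle u) (Real.exp_pos _).le

lemma G_psi0_lower (hα : α ∈ Set.Ioo (0:ℝ) 1) {u : ℝ} (h0 : 0 ≤ u) (h1 : u ≤ 2⁻¹) :
    eps α ^ α / (pp α - 1) * u ^ (pp α - 1) ≤ G α (psi0 α) u := by
  have hP := pp_gt_two hα
  have key : ∀ t ∈ Set.Icc (0:ℝ) u,
      eps α ^ α * t ^ (pp α - 2) ≤ Real.exp t * psi0 α t ^ α := by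
    intro t ht
    have ht2 : t ≤ 2⁻¹ := le_trans ht.2 h1
    have hrw : psi0 α t ^ α = eps α ^ α * t ^ (pp α - 2) := by
      rw [psi0_eq hα ht.1 ht2, Real.mul_rpow (eps_pos hα).le (Real.rpow_nonneg ht.1 _),
        ← Real.rpow_mul ht.1, pa_eq hα]
    rw [hrw]
    have h1exp : (1:ℝ) ≤ Real.exp t := by
      calc (1:ℝ) = Real.exp 0 := Real.exp_zero.symm
        _ ≤ Real.exp t := Real.exp_le_exp.mpr ht.1
    nlinarith [mul_nonneg (Real.rpow_nonneg (eps_pos hα).le α) (Real.rpow_nonneg ht.1 (pp α - 2))]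
  have hint : IntervalIntegrable (fun t : ℝ => eps α ^ α * t ^ (pp α - 2)) volume 0 u :=
    (intervalIntegral.intervalIntegrable_rpow' (by linarith)).const_mul _
  have h2 : (∫ t in (0:ℝ)..u, eps α ^ α * t ^ (pp α - 2)) ≤ G α (psi0 α) u :=
    intervalIntegral.integral_mono_on h0 hint
      ((cont_inner hα (psi0_continuous hα)).intervalIntegrable _ _) key
  have h3 : (∫ t in (0:ℝ)..u, eps α ^ α * t ^ (pp α - 2))
      = eps α ^ α / (pp α - 1) * u ^ (pp α - 1) := by
    rw [intervalIntegral.integral_const_mul, integral_rpow (Or.inl (by linarith))]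
    rw [show pp α - 2 + 1 = pp α - 1 by ring, Real.zero_rpow (ne_of_gt (by linarith : (0:ℝ) < pp α - 1))]
    ring
  linarith [h2, h3.symm.le]

lemma psi0_le_T_psi0 (hα : α ∈ Set.Ioo (0:ℝ) 1) (s : ℝ) : psi0 α s ≤ T α (psi0 α) s := by
  have hP := pp_gt_two hα
  have hgood := Good.psi0 hα
  have main : ∀ s, 0 ≤ s → s ≤ 2⁻¹ → psi0 α s ≤ T α (psi0 α) s := by
    intro s h0 h1
    have key : ∀ u ∈ Set.Icc (0:ℝ) s,
        Real.exp (-2⁻¹) * (eps α ^ α / (pp α - 1)) * u ^ (pp α - 1)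
          ≤ Real.exp (-u) * G α (psi0 α) u := by
      intro u hu
      have hu2 : u ≤ 2⁻¹ := le_trans hu.2 h1
      have he : Real.exp (-2⁻¹) ≤ Real.exp (-u) := Real.exp_le_exp.mpr (by linarith)
      have hg := G_psi0_lower hα hu.1 hu2
      have hnn : (0:ℝ) ≤ eps α ^ α / (pp α - 1) * u ^ (pp α - 1) := by
        apply mul_nonneg (div_nonneg (Real.rpow_nonneg (eps_pos hα).le _) (by linarith))
          (Real.rpow_nonneg hu.1 _)
      calc Real.exp (-2⁻¹) * (eps α ^ α / (pp α - 1)) * u ^ (pp α - 1)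
          = Real.exp (-2⁻¹) * (eps α ^ α / (pp α - 1) * u ^ (pp α - 1)) := by ring
        _ ≤ Real.exp (-u) * (eps α ^ α / (pp α - 1) * u ^ (pp α - 1)) :=
            mul_le_mul_of_nonneg_right he hnn
        _ ≤ Real.exp (-u) * G α (psi0 α) u :=
            mul_le_mul_of_nonneg_left hg (Real.exp_pos _).le
    have hint : IntervalIntegrable
        (fun u : ℝ => Real.exp (-2⁻¹) * (eps α ^ α / (pp α - 1)) * u ^ (pp α - 1))
        volume 0 s :=
      (intervalIntegral.intervalIntegrable_rpow' (by linarith)).const_mul _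
    have h2 : (∫ u in (0:ℝ)..s, Real.exp (-2⁻¹) * (eps α ^ α / (pp α - 1)) * u ^ (pp α - 1))
        ≤ T α (psi0 α) s :=
      intervalIntegral.integral_mono_on h0 hint
        ((cont_outer hα (psi0_continuous hα)).intervalIntegrable _ _) key
    have h3 : (∫ u in (0:ℝ)..s, Real.exp (-2⁻¹) * (eps α ^ α / (pp α - 1)) * u ^ (pp α - 1))
        = (Real.exp (-2⁻¹) * eps α ^ α / (pp α * (pp α - 1))) * s ^ pp α := by
      rw [intervalIntegral.integral_const_mul, integral_rpow (Or.inl (by linarith))]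
      rw [show pp α - 1 + 1 = pp α by ring, Real.zero_rpow (ne_of_gt (by linarith : (0:ℝ) < pp α))]
      field_simp
      ring
    rw [psi0_eq hα h0 h1]
    calc eps α * s ^ pp α
        = (Real.exp (-2⁻¹) * eps α ^ α / (pp α * (pp α - 1))) * s ^ pp α := by
          rw [eps_key hα]
      _ ≤ T α (psi0 α) s := by rw [← h3]; exact h2
  rcases le_or_gt s 0 with h | h
  · rw [psi0_zero hα h, T_zero_of_nonpos hα hgood h]
  rcases le_or_gt s 2⁻¹ with h2 | h2
  · exact main s h.le h2
  · calc psi0 α s = psi0 α 2⁻¹ := psi0_const hα h2.le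
      _ ≤ T α (psi0 α) 2⁻¹ := main 2⁻¹ (by norm_num) le_rfl
      _ ≤ T α (psi0 α) s := T_monotone hα hgood h2.le

end Operator

section Limit

variable {f g : ℝ → ℝ}

lemma seq_succ (n : ℕ) : seq α (n + 1) = T α (seq α n) := by
  rw [seq, Function.iterate_succ_apply']; rfl

lemma seq_good (hα : α ∈ Set.Ioo (0:ℝ) 1) : ∀ n, Good α (seq α n) := by
  intro n
  induction n with
  | zero => exact Good.psi0 hα
  | succ n ih => rw [seq_succ]; exact Good.T hα ih

lemma seq_mono_succ (hα : α ∈ Set.Ioo (0:ℝ) 1) : ∀ n s, seq α n s ≤ seq α (n + 1) s := by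
  intro n
  induction n with
  | zero => exact psi0_le_T_psi0 hα
  | succ n ih =>
      intro s
      rw [seq_succ, seq_succ]
      exact T_mono_f hα (seq_good hα n) (seq_good hα (n + 1)) ih s

lemma seq_mono (hα : α ∈ Set.Ioo (0:ℝ) 1) (s : ℝ) : Monotone fun n => seq α n s :=
  monotone_nat_of_le_succ fun n => seq_mono_succ hα n s

lemma seq_bdd (hα : α ∈ Set.Ioo (0:ℝ) 1) (s : ℝ) :
    BddAbove (Set.range fun n => seq α n s) := by
  refine ⟨Psi α s, ?_⟩
  rintro x ⟨n, rfl⟩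
  exact (seq_good hα n).2.2.2 s

lemma seq_le_psi (hα : α ∈ Set.Ioo (0:ℝ) 1) (n : ℕ) (s : ℝ) : seq α n s ≤ psi α s :=
  le_ciSup (seq_bdd hα s) n

lemma psi_le_Psi (hα : α ∈ Set.Ioo (0:ℝ) 1) (s : ℝ) : psi α s ≤ Psi α s :=
  ciSup_le fun n => (seq_good hα n).2.2.2 s

lemma psi0_le_psi (hα : α ∈ Set.Ioo (0:ℝ) 1) (s : ℝ) : psi0 α s ≤ psi α s :=
  seq_le_psi hα 0 s

lemma psi_nonneg (hα : α ∈ Set.Ioo (0:ℝ) 1) (s : ℝ) : 0 ≤ psi α s :=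
  le_trans ((seq_good hα 0).2.2.1 s) (seq_le_psi hα 0 s)

lemma psi_zero_of_nonpos (hα : α ∈ Set.Ioo (0:ℝ) 1) {s : ℝ} (hs : s ≤ 0) : psi α s = 0 :=
  le_antisymm (by simpa [Psi_zero hα hs] using psi_le_Psi hα s) (psi_nonneg hα s)

lemma psi_monotone (hα : α ∈ Set.Ioo (0:ℝ) 1) : Monotone (psi α) := fun x y hxy =>
  ciSup_mono (seq_bdd hα y) fun n => (seq_good hα n).2.1 hxy

lemma psi_tendsto (hα : α ∈ Set.Ioo (0:ℝ) 1) (s : ℝ) :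
    Tendsto (fun n => seq α n s) atTop (𝓝 (psi α s)) :=
  tendsto_atTop_ciSup (seq_mono hα s) (seq_bdd hα s)

lemma psi_measurable (hα : α ∈ Set.Ioo (0:ℝ) 1) : Measurable (psi α) := by
  apply measurable_of_tendsto_metrizable (fun n => (seq_good hα n).1.measurable)
  exact tendsto_pi_nhds.mpr (psi_tendsto hα)

lemma psi_pos (hα : α ∈ Set.Ioo (0:ℝ) 1) {s : ℝ} (hs : 0 < s) : 0 < psi α s :=
  lt_of_lt_of_le (psi0_pos hα hs) (psi0_le_psi hα s)

lemma rpow_cont_base (hα : α ∈ Set.Ioo (0:ℝ) 1) :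
    Continuous fun x : ℝ => x ^ α :=
  continuous_id.rpow_const fun _ => Or.inr hα.1.le

lemma inner_psi_integrable (hα : α ∈ Set.Ioo (0:ℝ) 1) (a b : ℝ) :
    IntervalIntegrable (fun t => Real.exp t * psi α t ^ α) volume a b := by
  rw [intervalIntegrable_iff]
  apply Measure.integrableOn_of_bounded (by rw [Set.uIoc]; exact measure_Ioc_lt_top.ne)
  · exact (Real.measurable_exp.mul
      (((rpow_cont_base hα).measurable).comp (psi_measurable hα))).aestronglyMeasurable
  · apply ae_restrict_of_forall_mem measurableSet_uIoc
    intro t ht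
    have htle : t ≤ max a b := by
      rcases Set.mem_uIoc.mp ht with h | h
      · exact le_trans h.2 (le_max_right a b)
      · exact le_trans h.2 (le_max_left a b)
    have h1 : ‖Real.exp t * psi α t ^ α‖ = Real.exp t * psi α t ^ α := by
      rw [Real.norm_eq_abs, abs_of_nonneg
        (mul_nonneg (Real.exp_pos _).le (Real.rpow_nonneg (psi_nonneg hα t) _))]
    rw [h1]
    calc Real.exp t * psi α t ^ α
        ≤ Real.exp (max a b) * Psi α (max a b) ^ α := by
          apply mul_le_mul (Real.exp_le_exp.mpr htle)
            (Real.rpow_le_rpow (psi_nonneg hα t)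
              (le_trans (psi_le_Psi hα t) (Psi_monotone hα htle)) hα.1.le)
            (Real.rpow_nonneg (psi_nonneg hα t) _) (Real.exp_pos _).le
      _ ≤ Real.exp (max a b) * Psi α (max a b) ^ α := le_rfl

lemma G_psi_cont (hα : α ∈ Set.Ioo (0:ℝ) 1) : Continuous (G α (psi α)) :=
  intervalIntegral.continuous_primitive (fun a b => inner_psi_integrable hα a b) 0

lemma G_psi_tendsto (hα : α ∈ Set.Ioo (0:ℝ) 1) {u : ℝ} (hu : 0 ≤ u) :
    Tendsto (fun n => G α (seq α n) u) atTop (𝓝 (G α (psi α) u)) := by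
  simp only [G, intervalIntegral.integral_of_le hu]
  apply MeasureTheory.integral_tendsto_of_tendsto_of_monotone
  · exact fun n => ((cont_inner hα (seq_good hα n).1).integrableOn_Ioc)
  · exact (inner_psi_integrable hα 0 u).1.mono_set
      Set.Subset.rfl
  · apply Filter.Eventually.of_forall
    intro t m k hmk
    exact mul_le_mul_of_nonneg_left
      (Real.rpow_le_rpow ((seq_good hα m).2.2.1 t) (seq_mono hα t hmk) hα.1.le)
      (Real.exp_pos t).le
  · apply Filter.Eventually.of_forall
    intro t
    exact (((rpow_cont_base hα).tendsto _).comp (psi_tendsto hα t)).const_mul _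

lemma outer_psi_integrable (hα : α ∈ Set.Ioo (0:ℝ) 1) (a b : ℝ) :
    IntervalIntegrable (fun u => Real.exp (-u) * G α (psi α) u) volume a b :=
  (((Real.continuous_exp.comp continuous_neg).mul (G_psi_cont hα))).intervalIntegrable a b

lemma psi_eq_T (hα : α ∈ Set.Ioo (0:ℝ) 1) (s : ℝ) : psi α s = T α (psi α) s := by
  rcases le_or_gt s 0 with hs | hs
  · rw [psi_zero_of_nonpos hα hs]
    have h : EqOn (fun u => Real.exp (-u) * G α (psi α) u) (fun _ => (0:ℝ)) (Set.uIcc 0 s) := by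
      intro u hu
      have hule : u ≤ 0 := by rw [Set.uIcc_of_ge hs] at hu; exact hu.2
      have hG : G α (psi α) u = 0 := by
        have h2 : EqOn (fun t => Real.exp t * psi α t ^ α) (fun _ => (0:ℝ)) (Set.uIcc 0 u) := by
          intro t ht
          have htle : t ≤ 0 := by rw [Set.uIcc_of_ge hule] at ht; exact ht.2
          simp only
          rw [psi_zero_of_nonpos hα htle, Real.zero_rpow (ne_of_gt hα.1), mul_zero]
        rw [G, intervalIntegral.integral_congr h2, intervalIntegral.integral_zero]
      simp only [hG, mul_zero]
    rw [T, intervalIntegral.integral_congr h, intervalIntegral.integral_zero]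
  · have h1 : Tendsto (fun n => seq α (n + 1) s) atTop (𝓝 (psi α s)) :=
      (psi_tendsto hα s).comp (tendsto_add_atTop_nat 1)
    have h2 : Tendsto (fun n => seq α (n + 1) s) atTop (𝓝 (T α (psi α) s)) := by
      have e : ∀ n, seq α (n + 1) s = T α (seq α n) s := fun n => by rw [seq_succ]
      simp only [e, T, intervalIntegral.integral_of_le hs.le]
      apply MeasureTheory.integral_tendsto_of_tendsto_of_monotone
      · exact fun n => ((cont_outer hα (seq_good hα n).1).integrableOn_Ioc)
      · exact (outer_psi_integrable hα 0 s).1.mono_set Set.Subset.rfl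
      · apply Filter.Eventually.of_forall
        intro u m k hmk
        exact mul_le_mul_of_nonneg_left
          (G_mono_f hα (seq_good hα m) (seq_good hα k)
            (fun t => seq_mono hα t hmk) u) (Real.exp_pos _).le
      · apply ae_restrict_of_forall_mem measurableSet_Ioc
        intro u hu
        exact (G_psi_tendsto hα hu.1.le).const_mul _
    exact tendsto_nhds_unique h1 h2
  
end Limit

section Analysis

/-- derivative of psi -/
def psid (α : ℝ) (s : ℝ) : ℝ := Real.exp (-s) * G α (psi α) s

lemma psi_continuous (hα : α ∈ Set.Ioo (0:ℝ) 1) : Continuous (psi α) := by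
  have h : psi α = T α (psi α) := funext (psi_eq_T hα)
  rw [h]
  exact intervalIntegral.continuous_primitive (fun a b => outer_psi_integrable hα a b) 0

lemma psid_cont (hα : α ∈ Set.Ioo (0:ℝ) 1) : Continuous (psid α) :=
  (Real.continuous_exp.comp continuous_neg).mul (G_psi_cont hα)

lemma hasDerivAt_psi (hα : α ∈ Set.Ioo (0:ℝ) 1) (s : ℝ) :
    HasDerivAt (psi α) (psid α s) s := by
  have h : psi α = T α (psi α) := funext (psi_eq_T hα)
  rw [h]
  exact (((Real.continuous_exp.comp continuous_neg).mul
    (G_psi_cont hα)).integral_hasStrictDerivAt 0 s).hasDerivAt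

lemma hasDerivAt_G_psi (hα : α ∈ Set.Ioo (0:ℝ) 1) (u : ℝ) :
    HasDerivAt (G α (psi α)) (Real.exp u * psi α u ^ α) u :=
  ((cont_inner hα (psi_continuous hα)).integral_hasStrictDerivAt 0 u).hasDerivAt

lemma hasDerivAt_psid (hα : α ∈ Set.Ioo (0:ℝ) 1) (s : ℝ) :
    HasDerivAt (psid α) (psi α s ^ α - psid α s) s := by
  have h1 : HasDerivAt (fun u => Real.exp (-u)) (-Real.exp (-s)) s := by
    have h := (Real.hasDerivAt_exp (-s)).comp s (hasDerivAt_neg s)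
    simp only [mul_neg, mul_one] at h
    exact h
  have h2 := (h1.mul (hasDerivAt_G_psi hα s))
  have e : -Real.exp (-s) * G α (psi α) s + Real.exp (-s) * (Real.exp s * psi α s ^ α)
      = psi α s ^ α - psid α s := by
    have : Real.exp (-s) * Real.exp s = 1 := by
      rw [← Real.exp_add, neg_add_cancel, Real.exp_zero]
    rw [psid]
    linear_combination (psi α s ^ α) * this
  rw [← e]
  exact h2

lemma G_psi_nonneg (hα : α ∈ Set.Ioo (0:ℝ) 1) (u : ℝ) : 0 ≤ G α (psi α) u := by
  rcases le_or_gt u 0 with h | h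
  · have h2 : EqOn (fun t => Real.exp t * psi α t ^ α) (fun _ => (0:ℝ)) (Set.uIcc 0 u) := by
      intro t ht
      have htle : t ≤ 0 := by rw [Set.uIcc_of_ge h] at ht; exact ht.2
      simp only
      rw [psi_zero_of_nonpos hα htle, Real.zero_rpow (ne_of_gt hα.1), mul_zero]
    rw [G, intervalIntegral.integral_congr h2, intervalIntegral.integral_zero]
  · rw [G]
    apply intervalIntegral.integral_nonneg h.le
    intro t _
    exact mul_nonneg (Real.exp_pos _).le (Real.rpow_nonneg (psi_nonneg hα t) _)

lemma psid_nonneg (hα : α ∈ Set.Ioo (0:ℝ) 1) (s : ℝ) : 0 ≤ psid α s :=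
  mul_nonneg (Real.exp_pos _).le (G_psi_nonneg hα s)

lemma psid_zero (hα : α ∈ Set.Ioo (0:ℝ) 1) {s : ℝ} (hs : s ≤ 0) : psid α s = 0 := by
  have h2 : EqOn (fun t => Real.exp t * psi α t ^ α) (fun _ => (0:ℝ)) (Set.uIcc 0 s) := by
    intro t ht
    have htle : t ≤ 0 := by rw [Set.uIcc_of_ge hs] at ht; exact ht.2
    simp only
    rw [psi_zero_of_nonpos hα htle, Real.zero_rpow (ne_of_gt hα.1), mul_zero]
  rw [psid, G, intervalIntegral.integral_congr h2, intervalIntegral.integral_zero, mul_zero]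

lemma psid_pos (hα : α ∈ Set.Ioo (0:ℝ) 1) {s : ℝ} (hs : 0 < s) : 0 < psid α s := by
  apply mul_pos (Real.exp_pos _)
  rw [G]
  apply intervalIntegral.intervalIntegral_pos_of_pos_on
    ((cont_inner hα (psi_continuous hα)).intervalIntegrable _ _)
  · intro t ht
    exact mul_pos (Real.exp_pos _) (Real.rpow_pos_of_pos (psi_pos hα ht.1) _)
  · exact hs

lemma psid_lt (hα : α ∈ Set.Ioo (0:ℝ) 1) {s : ℝ} (hs : 0 < s) : psid α s < psi α s ^ α := by
  have hG : G α (psi α) s ≤ (Real.exp s - 1) * psi α s ^ α := by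
    have key : ∀ t ∈ Set.Icc (0:ℝ) s,
        Real.exp t * psi α t ^ α ≤ Real.exp t * psi α s ^ α := by
      intro t ht
      exact mul_le_mul_of_nonneg_left
        (Real.rpow_le_rpow (psi_nonneg hα t) (psi_monotone hα ht.2) hα.1.le)
        (Real.exp_pos t).le
    calc G α (psi α) s ≤ ∫ t in (0:ℝ)..s, Real.exp t * psi α s ^ α :=
          intervalIntegral.integral_mono_on hs.le (inner_psi_integrable hα 0 s)
            ((Real.continuous_exp.mul continuous_const).intervalIntegrable _ _) key
      _ = (Real.exp s - 1) * psi α s ^ α := by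
          rw [intervalIntegral.integral_mul_const, integral_exp, Real.exp_zero]
  have hpos : 0 < psi α s ^ α := Real.rpow_pos_of_pos (psi_pos hα hs) _
  calc psid α s ≤ Real.exp (-s) * ((Real.exp s - 1) * psi α s ^ α) :=
        mul_le_mul_of_nonneg_left hG (Real.exp_pos _).le
    _ = (1 - Real.exp (-s)) * psi α s ^ α := by
        rw [← mul_assoc, mul_sub, ← Real.exp_add, neg_add_cancel, Real.exp_zero, mul_one]
    _ < 1 * psi α s ^ α := by
        apply mul_lt_mul_of_pos_right _ hpos
        linarith [Real.exp_pos (-s)]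
    _ = psi α s ^ α := one_mul _

lemma psid_ge_of_two_le (hα : α ∈ Set.Ioo (0:ℝ) 1) {s : ℝ} (hs : 2 ≤ s) :
    (1 - Real.exp (-1)) * psi α 1 ^ α ≤ psid α s := by
  have h1s : (1:ℝ) ≤ s - 1 := by linarith
  have hsplit : G α (psi α) s
      = (∫ t in (0:ℝ)..(s-1), Real.exp t * psi α t ^ α)
        + ∫ t in (s-1)..s, Real.exp t * psi α t ^ α := by
    rw [G, ← intervalIntegral.integral_add_adjacent_intervals
      (inner_psi_integrable hα 0 (s-1)) (inner_psi_integrable hα (s-1) s)]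
  have h1 : (0:ℝ) ≤ ∫ t in (0:ℝ)..(s-1), Real.exp t * psi α t ^ α :=
    intervalIntegral.integral_nonneg (by linarith)
      (fun t _ => mul_nonneg (Real.exp_pos _).le (Real.rpow_nonneg (psi_nonneg hα t) _))
  have h2 : (Real.exp s - Real.exp (s-1)) * psi α 1 ^ α
      ≤ ∫ t in (s-1)..s, Real.exp t * psi α t ^ α := by
    have key : ∀ t ∈ Set.Icc (s-1) s,
        Real.exp t * psi α 1 ^ α ≤ Real.exp t * psi α t ^ α := by
      intro t ht
      apply mul_le_mul_of_nonneg_left _ (Real.exp_pos t).le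
      exact Real.rpow_le_rpow (psi_nonneg hα 1)
        (psi_monotone hα (le_trans h1s ht.1)) hα.1.le
    calc (Real.exp s - Real.exp (s-1)) * psi α 1 ^ α
        = ∫ t in (s-1)..s, Real.exp t * psi α 1 ^ α := by
          rw [intervalIntegral.integral_mul_const, integral_exp]
      _ ≤ ∫ t in (s-1)..s, Real.exp t * psi α t ^ α :=
          intervalIntegral.integral_mono_on (by linarith)
            ((Real.continuous_exp.mul continuous_const).intervalIntegrable _ _)
            (inner_psi_integrable hα _ _) key
  have hG : (Real.exp s - Real.exp (s-1)) * psi α 1 ^ α ≤ G α (psi α) s := by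
    rw [hsplit]; linarith
  have ha : Real.exp (-s) * Real.exp s = 1 := by
    rw [← Real.exp_add, neg_add_cancel, Real.exp_zero]
  have hb : Real.exp (-s) * Real.exp (s-1) = Real.exp (-1) := by
    rw [← Real.exp_add]
    congr 1
    ring
  calc (1 - Real.exp (-1)) * psi α 1 ^ α
      = Real.exp (-s) * ((Real.exp s - Real.exp (s-1)) * psi α 1 ^ α) := by
        linear_combination (psi α 1 ^ α) * hb - (psi α 1 ^ α) * ha
      _ ≤ psid α s := mul_le_mul_of_nonneg_left hG (Real.exp_pos _).le

lemma psi_unbounded (hα : α ∈ Set.Ioo (0:ℝ) 1) (B : ℝ) : ∃ s : ℝ, 0 < s ∧ B ≤ psi α s := by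
  set κ := (1 - Real.exp (-1)) * psi α 1 ^ α with hκdef
  have hκ : 0 < κ := by
    apply mul_pos _ (Real.rpow_pos_of_pos (psi_pos hα one_pos) _)
    have : Real.exp (-1 : ℝ) < 1 := by
      rw [Real.exp_lt_one_iff]; norm_num
    linarith
  have hmono : ∀ X, 2 ≤ X → psi α 2 - 2 * κ + κ * X ≤ psi α X := by
    intro X hX
    have hMono : MonotoneOn (fun s => psi α s - κ * s) (Set.Ici 2) := by
      apply monotoneOn_of_deriv_nonneg (convex_Ici 2)
      · exact ((psi_continuous hα).sub (continuous_const.mul continuous_id)).continuousOn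
      · intro x _
        exact ((hasDerivAt_psi hα x).sub
          ((hasDerivAt_id x).const_mul κ)).differentiableAt.differentiableWithinAt
      · intro x hx
        rw [interior_Ici] at hx
        have hd : deriv (fun s => psi α s - κ * s) x = psid α x - κ := by
          apply HasDerivAt.deriv
          have h := (hasDerivAt_psi hα x).sub ((hasDerivAt_id x).const_mul κ)
          simp only [mul_one] at h
          exact h
        rw [hd, sub_nonneg]
        exact psid_ge_of_two_le hα (le_of_lt hx)
    have := hMono (Set.mem_Ici.mpr le_rfl) (Set.mem_Ici.mpr hX) hX
    simp only at this
    linarith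
  refine ⟨max 2 ((B - psi α 2 + 2 * κ) / κ + 1), lt_of_lt_of_le two_pos (le_max_left _ _), ?_⟩
  set X := max 2 ((B - psi α 2 + 2 * κ) / κ + 1)
  have hX2 : 2 ≤ X := le_max_left _ _
  have hXB : (B - psi α 2 + 2 * κ) / κ + 1 ≤ X := le_max_right _ _
  have h2 : B - psi α 2 + 2 * κ ≤ κ * X := by
    rw [div_add' _ _ _ (ne_of_gt hκ), div_le_iff₀ hκ] at hXB
    nlinarith
  linarith [hmono X hX2]

end Analysis

section Shooting

lemma exists_ratio_big (hα : α ∈ Set.Ioo (0:ℝ) 1) {M δ : ℝ} (hM : 0 < M) (hδ : 0 < δ) :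
    ∃ s, 0 < s ∧ s ≤ δ ∧ M * psi α s < psid α s := by
  by_contra hcon
  push_neg at hcon
  have hder : ∀ x, HasDerivAt (fun s => psi α s * Real.exp (-M * s))
      ((psid α x - M * psi α x) * Real.exp (-M * x)) x := by
    intro x
    have h1 : HasDerivAt (fun s : ℝ => Real.exp (-M * s)) (Real.exp (-M * x) * (-M)) x := by
      have h0 : HasDerivAt (fun s : ℝ => -M * s) (-M) x := by
        simpa using (hasDerivAt_id x).const_mul (-M)
      exact h0.exp
    have h2 := (hasDerivAt_psi hα x).mul h1
    have e : psid α x * Real.exp (-M * x) + psi α x * (Real.exp (-M * x) * (-M))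
        = (psid α x - M * psi α x) * Real.exp (-M * x) := by ring
    rw [← e]
    exact h2
  have hanti : AntitoneOn (fun s => psi α s * Real.exp (-M * s)) (Set.Icc 0 δ) := by
    apply antitoneOn_of_deriv_nonpos (convex_Icc 0 δ)
    · exact ((psi_continuous hα).mul
        (Real.continuous_exp.comp (continuous_const.mul continuous_id))).continuousOn
    · intro x _
      exact (hder x).differentiableAt.differentiableWithinAt
    · intro x hx
      rw [interior_Icc] at hx
      rw [(hder x).deriv]
      apply mul_nonpos_of_nonpos_of_nonneg _ (Real.exp_pos _).le
      have := hcon x hx.1 hx.2.le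
      linarith
  have h0 : psi α 0 * Real.exp (-M * 0) = 0 := by
    rw [psi_zero_of_nonpos hα le_rfl, zero_mul]
  have hle := hanti (Set.mem_Icc.mpr ⟨le_rfl, hδ.le⟩) (Set.mem_Icc.mpr ⟨hδ.le, le_rfl⟩) hδ.le
  simp only [h0] at hle
  have : 0 < psi α δ * Real.exp (-M * δ) :=
    mul_pos (psi_pos hα hδ) (Real.exp_pos _)
  linarith

lemma exists_ratio_small (hα : α ∈ Set.Ioo (0:ℝ) 1) {M : ℝ} (hM : 0 < M) :
    ∃ s, 0 < s ∧ psid α s < M * psi α s := by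
  set B := (1 / M + 1) ^ (1 - α)⁻¹ with hBdef
  have hB1 : (0:ℝ) < 1 / M + 1 := by positivity
  have hBpos : 0 < B := Real.rpow_pos_of_pos hB1 _
  obtain ⟨s, hs, hsB⟩ := psi_unbounded hα B
  refine ⟨s, hs, ?_⟩
  have hψ : 0 < psi α s := psi_pos hα hs
  have hkey : 1 / M + 1 ≤ psi α s ^ (1 - α) := by
    have h1 : B ^ (1 - α) ≤ psi α s ^ (1 - α) :=
      Real.rpow_le_rpow hBpos.le hsB (one_sub_pos hα).le
    have h2 : B ^ (1 - α) = 1 / M + 1 := by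
      rw [hBdef, ← Real.rpow_mul hB1.le, inv_mul_cancel₀ (ne_of_gt (one_sub_pos hα)),
        Real.rpow_one]
    linarith
  have hsplit : psi α s = psi α s ^ α * psi α s ^ (1 - α) := by
    rw [← Real.rpow_add hψ]
    norm_num
  have hstep : psi α s ^ α * (1 / M + 1) ≤ psi α s := by
    calc psi α s ^ α * (1 / M + 1) ≤ psi α s ^ α * psi α s ^ (1 - α) :=
          mul_le_mul_of_nonneg_left hkey (Real.rpow_nonneg hψ.le _)
      _ = psi α s := hsplit.symm
  have hpow : 0 < psi α s ^ α := Real.rpow_pos_of_pos hψ _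
  have h3 : psi α s ^ α < M * psi α s := by
    have : M * (psi α s ^ α * (1 / M + 1)) ≤ M * psi α s :=
      mul_le_mul_of_nonneg_left hstep hM.le
    have e : M * (psi α s ^ α * (1 / M + 1)) = psi α s ^ α + M * psi α s ^ α := by
      field_simp
    nlinarith
  exact lt_trans (psid_lt hα hs) h3

lemma exists_sstar (hα : α ∈ Set.Ioo (0:ℝ) 1) {v₀ : ℝ} (hv₀ : v₀ ∈ Set.Ioo (0:ℝ) 1) :
    ∃ s, 0 < s ∧ v₀ * psid α s = (1 - v₀) * psi α s := by
  set L := (1 - v₀) / v₀ with hLdef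
  have hv1 : 0 < v₀ := hv₀.1
  have hv2 : 0 < 1 - v₀ := by linarith [hv₀.2]
  have hL : 0 < L := div_pos hv2 hv1
  obtain ⟨s₂, hs₂, hratio₂⟩ := exists_ratio_small hα hL
  obtain ⟨s₁, hs₁, hs₁₂, hratio₁⟩ := exists_ratio_big hα hL hs₂
  set h : ℝ → ℝ := fun s => v₀ * psid α s - (1 - v₀) * psi α s with hhdef
  have hcont : ContinuousOn h (Set.Icc s₁ s₂) :=
    ((continuous_const.mul (psid_cont hα)).sub
      (continuous_const.mul (psi_continuous hα))).continuousOn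
  have hh₁ : 0 < h s₁ := by
    have : L * psi α s₁ < psid α s₁ := hratio₁
    rw [hhdef]
    simp only
    rw [hLdef, div_mul_eq_mul_div, div_lt_iff₀ hv1] at this
    nlinarith
  have hh₂ : h s₂ < 0 := by
    have : psid α s₂ < L * psi α s₂ := hratio₂
    rw [hhdef]
    simp only
    rw [hLdef, div_mul_eq_mul_div, lt_div_iff₀ hv1] at this
    nlinarith
  have hmem : (0:ℝ) ∈ Set.Icc (h s₂) (h s₁) := Set.mem_Icc.mpr ⟨hh₂.le, hh₁.le⟩
  obtain ⟨c, hc, hc0⟩ := intermediate_value_Icc' hs₁₂ hcont hmem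
  refine ⟨c, lt_of_lt_of_le hs₁ hc.1, ?_⟩
  have : v₀ * psid α c - (1 - v₀) * psi α c = 0 := hc0
  linarith

end Shooting

end FBPAux

/-- A solution of the scalar one-phase free boundary problem
`Λ v'' − c v' = v^α` on `(0,R)` with `v(0) = v₀`, `v'(0) = −(c/Λ)(1−v₀)`,
`v(R) = v'(R) = 0`, where `v > 0` and `v' < 0` on `[0,R)`. -/
def IsFBPSolution (α Λ v₀ c R : ℝ) (v : ℝ → ℝ) : Prop :=
  0 < c ∧ 0 < R ∧
  ContDiffOn ℝ 1 v (Set.Icc 0 R) ∧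
  (∀ ξ ∈ Set.Ico 0 R, DifferentiableAt ℝ (deriv v) ξ) ∧
  (∀ ξ ∈ Set.Ioo 0 R, Λ * deriv (deriv v) ξ - c * deriv v ξ = v ξ ^ α) ∧
  v 0 = v₀ ∧ deriv v 0 = -(c / Λ) * (1 - v₀) ∧
  v R = 0 ∧ deriv v R = 0 ∧
  (∀ ξ ∈ Set.Ico 0 R, 0 < v ξ) ∧ (∀ ξ ∈ Set.Ico 0 R, deriv v ξ < 0)

/-- Existence of a solution of the scalar free boundary problem, with moreover
`v > 0`, `v' < 0` and `v'' > 0` on `[0,R)`. -/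
theorem fbp_existence (α Λ v₀ : ℝ) (hα : α ∈ Set.Ioo (0:ℝ) 1) (hΛ : 0 < Λ)
    (hv₀ : v₀ ∈ Set.Ioo (0:ℝ) 1) :
    ∃ (c R : ℝ) (v : ℝ → ℝ), IsFBPSolution α Λ v₀ c R v ∧
      ∀ ξ ∈ Set.Ico 0 R, 0 < deriv (deriv v) ξ := by
  classical
  obtain ⟨S, hS, heq⟩ := FBPAux.exists_sstar hα hv₀
  set ψ : ℝ → ℝ := FBPAux.psi α with hψdef
  set ψ' : ℝ → ℝ := FBPAux.psid α with hψ'def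
  have hv01 : 0 < v₀ := hv₀.1
  have hv02 : 0 < 1 - v₀ := by linarith [hv₀.2]
  have hψS : 0 < ψ S := FBPAux.psi_pos hα hS
  set A : ℝ := ψ S / v₀ with hAdef
  have hA : 0 < A := div_pos hψS hv01
  set k : ℝ := Real.sqrt (A ^ (1 - α) / Λ) with hkdef
  have hApow : 0 < A ^ (1 - α) := Real.rpow_pos_of_pos hA _
  have hk : 0 < k := Real.sqrt_pos.mpr (div_pos hApow hΛ)
  have hk2 : Λ * (k * k) = A ^ (1 - α) := by
    rw [hkdef, Real.mul_self_sqrt (div_pos hApow hΛ).le]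
    field_simp
  set c : ℝ := Λ * k with hcdef
  set R : ℝ := S / k with hRdef
  have hc : 0 < c := mul_pos hΛ hk
  have hR : 0 < R := div_pos hS hk
  set v : ℝ → ℝ := fun ξ => ψ (S - k * ξ) / A with hvdef
  -- derivative facts
  have haff : ∀ ξ : ℝ, HasDerivAt (fun ξ : ℝ => S - k * ξ) (-k) ξ := by
    intro ξ
    simpa using ((hasDerivAt_id ξ).const_mul k).const_sub S
  have hv' : ∀ ξ : ℝ, HasDerivAt v (ψ' (S - k * ξ) * (-k) / A) ξ := by
    intro ξ
    exact ((FBPAux.hasDerivAt_psi hα (S - k * ξ)).comp ξ (haff ξ)).div_const A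
  have hderiv : deriv v = fun ξ => ψ' (S - k * ξ) * (-k) / A :=
    funext fun ξ => (hv' ξ).deriv
  have hv'' : ∀ ξ : ℝ, HasDerivAt (deriv v)
      ((ψ (S - k * ξ) ^ α - ψ' (S - k * ξ)) * (-k) * (-k) / A) ξ := by
    intro ξ
    rw [hderiv]
    exact (((FBPAux.hasDerivAt_psid hα (S - k * ξ)).comp ξ (haff ξ)).mul_const (-k)).div_const A
  have hderiv2 : ∀ ξ : ℝ, deriv (deriv v) ξ
      = (ψ (S - k * ξ) ^ α - ψ' (S - k * ξ)) * (-k) * (-k) / A :=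
    fun ξ => (hv'' ξ).deriv
  -- membership transfers
  have hmem : ∀ ξ : ℝ, ξ ∈ Set.Ico 0 R → 0 < S - k * ξ ∧ S - k * ξ ≤ S := by
    intro ξ hξ
    constructor
    · have : k * ξ < k * R := mul_lt_mul_of_pos_left hξ.2 hk
      rw [hRdef, mul_div_cancel₀ _ (ne_of_gt hk)] at this
      linarith
    · nlinarith [hξ.1, hk.le]
  refine ⟨c, R, v, ⟨hc, hR, ?_, ?_, ?_, ?_, ?_, ?_, ?_, ?_, ?_⟩, ?_⟩
  · -- ContDiffOn
    apply ContDiff.contDiffOn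
    apply contDiff_one_iff_deriv.mpr
    constructor
    · exact fun ξ => (hv' ξ).differentiableAt
    · rw [hderiv]
      apply Continuous.div_const
      apply Continuous.mul _ continuous_const
      exact (FBPAux.psid_cont hα).comp
        (continuous_const.sub (continuous_const.mul continuous_id))
  · -- twice differentiable
    exact fun ξ _ => (hv'' ξ).differentiableAt
  · -- the ODE
    intro ξ hξ
    have hsx : 0 < S - k * ξ := (hmem ξ (Set.mem_Ico.mpr ⟨hξ.1.le, hξ.2⟩)).1
    set x := S - k * ξ with hxdef
    have hψx : 0 < ψ x := FBPAux.psi_pos hα hsx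
    have hAα : 0 < A ^ α := Real.rpow_pos_of_pos hA _
    have hAA : A ^ (1 - α) * A ^ α = A := by
      rw [← Real.rpow_add hA]
      norm_num
    have hvξ : v ξ = ψ x / A := rfl
    have hrpow : v ξ ^ α = ψ x ^ α / A ^ α := by
      rw [hvξ, Real.div_rpow (FBPAux.psi_nonneg hα x) hA.le]
    rw [hderiv2 ξ, hderiv, hrpow]
    show Λ * ((ψ x ^ α - ψ' x) * -k * -k / A) - c * (ψ' x * -k / A) = ψ x ^ α / A ^ α
    rw [hcdef]
    have key : Λ * ((ψ x ^ α - ψ' x) * -k * -k / A) - Λ * k * (ψ' x * -k / A)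
        = A ^ (1 - α) * ψ x ^ α / A := by
      have h' : Λ * ((ψ x ^ α - ψ' x) * -k * -k / A) - Λ * k * (ψ' x * -k / A)
          = (Λ * (k * k)) * ψ x ^ α / A := by ring
      rw [h', hk2]
    have key2 : A ^ (1 - α) * ψ x ^ α / A = ψ x ^ α / A ^ α := by
      rw [div_eq_div_iff (ne_of_gt hA) (ne_of_gt hAα)]
      linear_combination (ψ x ^ α) * hAA
    rw [key, key2]
  · -- v 0 = v₀
    show ψ (S - k * 0) / A = v₀
    rw [mul_zero, sub_zero, hAdef]
    field_simp
  · -- deriv v 0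
    rw [hderiv]
    show ψ' (S - k * 0) * (-k) / A = -(c / Λ) * (1 - v₀)
    rw [mul_zero, sub_zero, hcdef]
    have hψ'S : ψ' S = (1 - v₀) * A := by
      rw [hAdef]
      field_simp
      linarith [heq]
    rw [hψ'S]
    field_simp
  · -- v R = 0
    show ψ (S - k * R) / A = 0
    rw [hRdef, mul_div_cancel₀ _ (ne_of_gt hk), sub_self, hψdef]
    rw [FBPAux.psi_zero_of_nonpos hα le_rfl, zero_div]
  · -- deriv v R = 0
    rw [hderiv]
    show ψ' (S - k * R) * (-k) / A = 0
    rw [hRdef, mul_div_cancel₀ _ (ne_of_gt hk), sub_self, hψ'def]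
    rw [FBPAux.psid_zero hα le_rfl, zero_mul, zero_div]
  · -- v > 0
    intro ξ hξ
    exact div_pos (FBPAux.psi_pos hα (hmem ξ hξ).1) hA
  · -- deriv v < 0
    intro ξ hξ
    rw [hderiv]
    have := FBPAux.psid_pos hα (hmem ξ hξ).1
    apply div_neg_of_neg_of_pos _ hA
    nlinarith
  · -- v'' > 0
    intro ξ hξ
    rw [hderiv2 ξ]
    have h1 := FBPAux.psid_lt hα (hmem ξ hξ).1
    apply div_pos _ hA
    nlinarith
end
end

section
/- Let α ∈ [0,1], Λ > 0 and c ≥ 0. If y₁ and y₂ are both stable-manifold functions for the parameter c, then y₁(x) = y₂(x) for all x ≥ 0. In other words, there is at most one trajectory of the vector field x' = y, Λ·y' = c·y + x^α in the quadrant {x ≥ 0, y ≤ 0} which converges toward the origin in positive time. -/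
open Real Set MeasureTheory Filter

noncomputable section

/-- A stable-manifold function for the parameter `c`: a continuous function on `[0,∞)`
vanishing at `0`, negative for `x > 0`, differentiable on `(0,∞)`, whose graph is a
trajectory of the vector field `x' = y`, `Λ y' = c y + x^α`, i.e.
`Λ y(x) y'(x) = c y(x) + x^α` for all `x > 0`. -/
def IsStableManifold (α Λ c : ℝ) (y : ℝ → ℝ) : Prop :=
  ContinuousOn y (Set.Ici 0) ∧ y 0 = 0 ∧
  (∀ x > 0, y x < 0) ∧ (∀ x > 0, DifferentiableAt ℝ y x) ∧
  (∀ x > 0, Λ * y x * deriv y x = c * y x + x ^ α)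

lemma stable_manifold_sq_le (α Λ c : ℝ) (hΛ : 0 < Λ) (hc : 0 ≤ c) (y₁ y₂ : ℝ → ℝ)
    (h₁ : IsStableManifold α Λ c y₁) (h₂ : IsStableManifold α Λ c y₂) :
    ∀ x ≥ (0:ℝ), (y₁ x)^2 ≤ (y₂ x)^2 := by
  obtain ⟨hc₁, h0₁, hneg₁, hd₁, hode₁⟩ := h₁
  obtain ⟨hc₂, h0₂, hneg₂, hd₂, hode₂⟩ := h₂
  intro x0 hx0
  by_contra hgt
  push_neg at hgt
  set g : ℝ → ℝ := fun x => (y₁ x)^2 - (y₂ x)^2 with hg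
  have hgx0 : 0 < g x0 := by simp only [hg]; linarith
  have hgcont : ContinuousOn g (Set.Ici 0) := (hc₁.pow 2).sub (hc₂.pow 2)
  set s := {x : ℝ | x ∈ Set.Icc (0:ℝ) x0 ∧ g x ≤ 0} with hs
  have h0s : (0:ℝ) ∈ s := ⟨⟨le_refl 0, hx0⟩, by simp [hg, h0₁, h0₂]⟩
  have hsne : s.Nonempty := ⟨0, h0s⟩
  have hsbdd : BddAbove s := ⟨x0, fun x hx => hx.1.2⟩
  have hsclosed : IsClosed s := by
    have : s = Set.Icc (0:ℝ) x0 ∩ g ⁻¹' Set.Iic 0 := by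
      ext x; simp [hs, Set.mem_Icc, and_assoc]
    rw [this]
    exact (hgcont.mono (Set.Icc_subset_Ici_self)).preimage_isClosed_of_isClosed
      isClosed_Icc isClosed_Iic
  set a := sSup s with ha_def
  have ha : a ∈ s := hsclosed.csSup_mem hsne hsbdd
  have ha0 : 0 ≤ a := le_csSup hsbdd h0s
  have hax0 : a < x0 := by
    rcases lt_or_eq_of_le ha.1.2 with h | h
    · exact h
    · exfalso; have := ha.2; rw [h] at this; linarith
  have hgpos : ∀ x, a < x → x ≤ x0 → 0 < g x := by
    intro x hax hxx0
    by_contra hle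
    push_neg at hle
    have hxs : x ∈ s := ⟨⟨le_of_lt (lt_of_le_of_lt ha0 hax), hxx0⟩, hle⟩
    exact absurd (le_csSup hsbdd hxs) (not_le.mpr hax)
  have hanti : AntitoneOn g (Set.Icc a x0) := by
    apply antitoneOn_of_deriv_nonpos (convex_Icc a x0)
    · exact hgcont.mono (fun x hx => le_trans ha0 hx.1)
    · rw [interior_Icc]
      intro x hx
      have hxpos : 0 < x := lt_of_le_of_lt ha0 hx.1
      exact (((hd₁ x hxpos).pow 2).sub ((hd₂ x hxpos).pow 2)).differentiableWithinAt
    · rw [interior_Icc]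
      intro x hx
      have hxpos : 0 < x := lt_of_le_of_lt ha0 hx.1
      have hy₁ := hneg₁ x hxpos
      have hy₂ := hneg₂ x hxpos
      have hgx : 0 < g x := hgpos x hx.1 (le_of_lt hx.2)
      have hdg : HasDerivAt g
          (2 * y₁ x ^ 1 * deriv y₁ x - 2 * y₂ x ^ 1 * deriv y₂ x) x := by
        have H₁ := ((hd₁ x hxpos).hasDerivAt.pow 2)
        have H₂ := ((hd₂ x hxpos).hasDerivAt.pow 2)
        have H := H₁.sub H₂
        simp at H ⊢
        exact H
      rw [hdg.deriv]
      -- From the ODE: Λ*(y₁ y₁' - y₂ y₂') = c*(y₁ - y₂)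
      have he₁ := hode₁ x hxpos
      have he₂ := hode₂ x hxpos
      have hdiff : Λ * (y₁ x * deriv y₁ x - y₂ x * deriv y₂ x) = c * (y₁ x - y₂ x) := by
        ring_nf; ring_nf at he₁ he₂; linarith
      have hle : y₁ x ≤ y₂ x := by
        simp only [hg] at hgx
        nlinarith
      have : c * (y₁ x - y₂ x) ≤ 0 := mul_nonpos_of_nonneg_of_nonpos hc (by linarith)
      nlinarith
  have hga : g a ≤ 0 := ha.2
  have : g x0 ≤ g a :=
    hanti ⟨le_rfl, le_of_lt hax0⟩ ⟨le_of_lt hax0, le_rfl⟩ (le_of_lt hax0)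
  linarith

/-- Uniqueness of the stable manifold: two stable-manifold functions for the same
parameter `c` coincide on `[0,∞)`. -/
theorem stable_manifold_uniqueness (α Λ c : ℝ) (hα : α ∈ Set.Icc (0:ℝ) 1)
    (hΛ : 0 < Λ) (hc : 0 ≤ c) (y₁ y₂ : ℝ → ℝ)
    (h₁ : IsStableManifold α Λ c y₁) (h₂ : IsStableManifold α Λ c y₂) :
    ∀ x ≥ (0:ℝ), y₁ x = y₂ x := by
  intro x hx
  rcases eq_or_lt_of_le hx with h | h
  · rw [← h, h₁.2.1, h₂.2.1]
  · have hsq₁ := stable_manifold_sq_le α Λ c hΛ hc y₁ y₂ h₁ h₂ x hx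
    have hsq₂ := stable_manifold_sq_le α Λ c hΛ hc y₂ y₁ h₂ h₁ x hx
    have hy₁ := h₁.2.2.1 x h
    have hy₂ := h₂.2.2.1 x h
    nlinarith
end
end

section
/- Let α ∈ [0,1] and Λ > 0, and let 0 ≤ c₀ < c₁. If y_{c₀} is a stable-manifold function for the parameter c₀ and y_{c₁} is a stable-manifold function for the parameter c₁, then y_{c₀}(x) < y_{c₁}(x) for all x > 0. That is, for each fixed x > 0, the map c ↦ y_c(x) is strictly increasing. -/
open Real Set MeasureTheory Filter
open Topology

noncomputable section

/-- Monotonicity in the parameter: for each `x > 0`, the map `c ↦ y_c(x)` is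
strictly increasing. -/
theorem stable_manifold_monotone (α Λ c₀ c₁ : ℝ) (hα : α ∈ Set.Icc (0:ℝ) 1)
    (hΛ : 0 < Λ) (hc₀ : 0 ≤ c₀) (hcc : c₀ < c₁) (y₀ y₁ : ℝ → ℝ)
    (h₀ : IsStableManifold α Λ c₀ y₀) (h₁ : IsStableManifold α Λ c₁ y₁) :
    ∀ x > (0:ℝ), y₀ x < y₁ x := by
  obtain ⟨hcont₀, h00, hneg₀, hdiff₀, hode₀⟩ := h₀
  obtain ⟨hcont₁, h01, hneg₁, hdiff₁, hode₁⟩ := h₁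
  set w : ℝ → ℝ := fun x => y₀ x - y₁ x with hwdef
  have hwdiff : ∀ x : ℝ, 0 < x → DifferentiableAt ℝ w x := fun x hx =>
    (hdiff₀ x hx).sub (hdiff₁ x hx)
  have hwderiv : ∀ x : ℝ, 0 < x → y₁ x ≤ y₀ x → deriv w x < 0 := by
    intro x hx hle
    have hd : deriv w x = deriv y₀ x - deriv y₁ x :=
      deriv_sub (hdiff₀ x hx) (hdiff₁ x hx)
    have e₀ := hode₀ x hx
    have e₁ := hode₁ x hx
    have hy₀ := hneg₀ x hx
    have hy₁ := hneg₁ x hx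
    have hp : 0 < x ^ α := Real.rpow_pos_of_pos hx α
    have hyy : 0 < y₀ x * y₁ x := mul_pos_of_neg_of_neg hy₀ hy₁
    rw [hd]
    nlinarith [mul_pos hΛ hyy, mul_lt_mul_of_pos_right hcc hyy,
      mul_nonneg hp.le (sub_nonneg.mpr hle),
      mul_right_cancel₀ (ne_of_lt hy₁) (rfl : (1:ℝ) * y₁ x = 1 * y₁ x)]
  intro x₀ hx₀
  by_contra hcon
  push_neg at hcon
  have hwx₀ : 0 ≤ w x₀ := sub_nonneg.mpr hcon
  have stepA : ∀ x ∈ Set.Ioc (0:ℝ) x₀, 0 ≤ w x := by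
    by_contra hB
    push_neg at hB
    obtain ⟨b₀, hb₀mem, hb₀⟩ := hB
    set B : Set ℝ := {x | x ∈ Set.Ioc (0:ℝ) x₀ ∧ w x < 0} with hBdef
    have hBne : B.Nonempty := ⟨b₀, hb₀mem, hb₀⟩
    have hBbdd : BddAbove B := ⟨x₀, fun x hx => hx.1.2⟩
    set t := sSup B with htdef
    have htle : t ≤ x₀ := csSup_le hBne (fun x hx => hx.1.2)
    have htpos : 0 < t := lt_of_lt_of_le hb₀mem.1 (le_csSup hBbdd ⟨hb₀mem, hb₀⟩)
    have hwt : 0 ≤ w t := by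
      by_contra hwt
      push_neg at hwt
      have htlt : t < x₀ := lt_of_le_of_ne htle (by
        intro h
        rw [h] at hwt
        exact absurd hwx₀ (not_le.mpr hwt))
      have hct : ContinuousAt w t := (hwdiff t htpos).continuousAt
      have hev : ∀ᶠ x in 𝓝 t, w x < 0 := hct.eventually (gt_mem_nhds hwt)
      obtain ⟨ε, hε, hball⟩ := Metric.eventually_nhds_iff.mp hev
      set s := min (t + ε/2) ((t + x₀)/2) with hsdef
      have hts : t < s := lt_min (by linarith) (by linarith)
      have hsx₀ : s ≤ x₀ := le_trans (min_le_right _ _) (by linarith)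
      have hdist : dist s t < ε := by
        have h1 : s ≤ t + ε/2 := min_le_left _ _
        rw [Real.dist_eq, abs_of_pos (by linarith : (0:ℝ) < s - t)]
        linarith
      have hsB : s ∈ B := ⟨⟨lt_trans htpos hts, hsx₀⟩, hball hdist⟩
      exact absurd (le_csSup hBbdd hsB) (not_le.mpr hts)
    have hdt : deriv w t < 0 := hwderiv t htpos (sub_nonneg.mp hwt)
    have hslope : Tendsto (slope w t) (𝓝[≠] t) (𝓝 (deriv w t)) :=
      hasDerivAt_iff_tendsto_slope.mp (hwdiff t htpos).hasDerivAt
    have hev2 : ∀ᶠ x in 𝓝[≠] t, slope w t x < 0 := hslope.eventually (gt_mem_nhds hdt)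
    have hev3 : ∀ᶠ x in 𝓝[<] t, slope w t x < 0 :=
      hev2.filter_mono (nhdsWithin_mono t (fun x (hx : x < t) => ne_of_lt hx))
    obtain ⟨l, hl, hsub⟩ := mem_nhdsLT_iff_exists_Ioo_subset.mp hev3
    obtain ⟨b, hbB, hlb⟩ := exists_lt_of_lt_csSup hBne hl
    have hbt : b < t := lt_of_le_of_ne (le_csSup hBbdd hbB) (by
      intro h; rw [h] at hbB; exact absurd hwt (not_le.mpr hbB.2))
    have hslopeb : slope w t b < 0 := hsub ⟨hlb, hbt⟩
    have hpos : 0 < slope w t b := by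
      rw [slope_def_field]
      apply div_pos_of_neg_of_neg
      · have : w b < 0 := hbB.2
        linarith
      · linarith
    linarith
  have hanti : StrictAntiOn w (Set.Ioc 0 x₀) := by
    apply strictAntiOn_of_deriv_neg (convex_Ioc 0 x₀)
    · intro x hx
      exact ((hwdiff x hx.1).continuousAt).continuousWithinAt
    · intro x hx
      rw [interior_Ioc] at hx
      exact hwderiv x hx.1 (sub_nonneg.mp (stepA x ⟨hx.1, hx.2.le⟩))
  have hhalfmem : x₀/2 ∈ Set.Ioc (0:ℝ) x₀ := ⟨by linarith, by linarith⟩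
  have hhalf : 0 < w (x₀/2) :=
    lt_of_le_of_lt hwx₀ (hanti hhalfmem ⟨hx₀, le_refl _⟩ (by linarith))
  have hcw : ContinuousOn w (Set.Ici 0) := hcont₀.sub hcont₁
  have hw0 : Tendsto w (𝓝[>] 0) (𝓝 0) := by
    have h1 : Tendsto w (𝓝[Set.Ici 0] 0) (𝓝 (w 0)) := hcw 0 Set.self_mem_Ici
    have h2 : w 0 = 0 := by simp [hwdef, h00, h01]
    rw [h2] at h1
    exact h1.mono_left (nhdsWithin_mono 0 Set.Ioi_subset_Ici_self)
  have hevlow : ∀ᶠ x in 𝓝[>] 0, w (x₀/2) ≤ w x := by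
    filter_upwards [Ioo_mem_nhdsGT_of_mem (⟨le_refl 0, by linarith⟩ : (0:ℝ) ∈ Set.Ico (0:ℝ) (x₀/2))] with x hx
    exact (hanti ⟨hx.1, by linarith [hx.2]⟩ hhalfmem hx.2).le
  have := ge_of_tendsto hw0 hevlow
  linarith
end
end

section
/- Let α ∈ [0,1] and Λ > 0, and let Y : [0,∞) × [0,∞) → ℝ be a function such that for every c ≥ 0, the map x ↦ Y(x,c) is a stable-manifold function for the parameter c. Then Y is continuous as a function of the two variables (x,c) on [0,∞) × [0,∞), and Y(0,c) = 0 for all c ≥ 0. -/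
open Real Set MeasureTheory Filter

noncomputable section

open Topology
/-- The primitive `x ↦ ∫_0^x y`. -/
def smP (y : ℝ → ℝ) : ℝ → ℝ := fun x => ∫ t in (0:ℝ)..x, y t

namespace SMaux

variable {α Λ c : ℝ} {y : ℝ → ℝ}

lemma sm_nonpos (hy : IsStableManifold α Λ c y) {x : ℝ} (hx : 0 ≤ x) : y x ≤ 0 := by
  rcases hx.eq_or_lt with h | h
  · rw [← h]; exact le_of_eq hy.2.1
  · exact (hy.2.2.1 x h).le

lemma sm_integ (hy : IsStableManifold α Λ c y) {a b : ℝ} (ha : 0 ≤ a) (hb : 0 ≤ b) :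
    IntervalIntegrable y volume a b := by
  apply (hy.1.mono ?_).intervalIntegrable
  intro t ht
  rw [Set.mem_uIcc] at ht
  rcases ht with ⟨h1, _⟩ | ⟨h1, _⟩ <;> exact le_trans (by assumption) h1

lemma smP_zero : smP y 0 = 0 := intervalIntegral.integral_same

lemma smP_hasDeriv (hy : IsStableManifold α Λ c y) {x : ℝ} (hx : 0 < x) :
    HasDerivAt (smP y) (y x) x :=
  intervalIntegral.integral_hasDerivAt_right (sm_integ hy le_rfl hx.le)
    (ContinuousOn.stronglyMeasurableAtFilter isOpen_Ioi
      (hy.1.mono Ioi_subset_Ici_self) x hx)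
    (hy.1.continuousAt (Ici_mem_nhds hx))

lemma smP_hasDerivWithin0 (hy : IsStableManifold α Λ c y) :
    HasDerivWithinAt (smP y) 0 (Ici 0) 0 := by
  have h := intervalIntegral.integral_hasDerivWithinAt_right (s := Ici (0:ℝ)) (t := Ioi (0:ℝ))
    (sm_integ hy le_rfl le_rfl)
    ((hy.1.mono Ioi_subset_Ici_self).stronglyMeasurableAtFilter_nhdsWithin measurableSet_Ioi 0)
    ((hy.1 0 Set.self_mem_Ici).mono Ioi_subset_Ici_self)
  rwa [hy.2.1] at h

lemma smP_cont (hy : IsStableManifold α Λ c y) : ContinuousOn (smP y) (Ici 0) := by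
  intro x hx
  rcases (mem_Ici.mp hx).eq_or_lt with h | h
  · rw [← h]; exact (smP_hasDerivWithin0 hy).continuousWithinAt
  · exact (smP_hasDeriv hy h).continuousAt.continuousWithinAt

lemma smP_nonpos (hy : IsStableManifold α Λ c y) {x : ℝ} (hx : 0 ≤ x) : smP y x ≤ 0 := by
  have h : 0 ≤ ∫ t in (0:ℝ)..x, -y t :=
    intervalIntegral.integral_nonneg hx (fun u hu => neg_nonneg.2 (sm_nonpos hy hu.1))
  rw [intervalIntegral.integral_neg] at h
  simpa [smP] using neg_nonneg.1 h

lemma hasDerivAt_prim (hα : 0 ≤ α) (u : ℝ) :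
    HasDerivAt (fun v : ℝ => v ^ (α + 1) / (α + 1)) (u ^ α) u := by
  have h := (Real.hasDerivAt_rpow_const (x := u) (p := α + 1)
    (Or.inr (by linarith))).div_const (α + 1)
  have hne : α + 1 ≠ 0 := by positivity
  simpa [add_sub_cancel_right, mul_div_assoc, mul_div_cancel_left₀ _ hne] using h

end SMaux
namespace SMaux

variable {α Λ c : ℝ} {y : ℝ → ℝ}

lemma sm_energy (hα : 0 ≤ α) (hΛ : 0 < Λ) (hy : IsStableManifold α Λ c y)
    {x : ℝ} (hx : 0 ≤ x) :
    Λ * y x ^ 2 / 2 = c * smP y x + x ^ (α + 1) / (α + 1) := by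
  have hα1 : (0:ℝ) < α + 1 := by linarith
  set F : ℝ → ℝ := fun u => Λ * y u ^ 2 / 2 - c * smP y u - u ^ (α + 1) / (α + 1) with hF
  have hF0 : F 0 = 0 := by
    simp [hF, hy.2.1, smP_zero, Real.zero_rpow hα1.ne']
  suffices h : F x = 0 by
    rw [hF] at h; simp only at h; linarith
  have hFd : ∀ u : ℝ, 0 < u → HasDerivAt F 0 u := by
    intro u hu
    have hyd : HasDerivAt y (deriv y u) u := (hy.2.2.2.1 u hu).hasDerivAt
    have h1 : HasDerivAt (fun v => Λ * y v ^ 2 / 2) (Λ * y u * deriv y u) u := by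
      have := ((hyd.pow 2).const_mul Λ).div_const 2
      refine this.congr_deriv ?_
      ring
    have h2 : HasDerivAt (fun v => c * smP y v) (c * y u) u :=
      (smP_hasDeriv hy hu).const_mul c
    have h3 := hasDerivAt_prim hα u
    have h4 := (h1.sub h2).sub h3
    rw [hy.2.2.2.2 u hu] at h4
    refine h4.congr_deriv ?_
    ring
  have hFc : ContinuousOn F (Ici 0) := by
    refine ContinuousOn.sub (ContinuousOn.sub ?_ ?_) ?_
    · exact (continuousOn_const.mul (hy.1.pow 2)).div_const 2
    · exact continuousOn_const.mul (smP_cont hy)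
    · intro u _
      exact ((Real.continuousAt_rpow_const u (α + 1)
        (Or.inr hα1.le)).div_const (α + 1)).continuousWithinAt
  rcases hx.eq_or_lt with h | hxpos
  · rw [← h]; exact hF0
  · have key : ∀ ε ∈ Ioc (0:ℝ) x, F x = F ε := by
      intro ε hε
      refine constant_of_has_deriv_right_zero
        (hFc.mono (Icc_subset_Ici_self.trans (Ici_subset_Ici.mpr hε.1.le))) ?_ x ⟨hε.2, le_rfl⟩
      intro t ht
      exact (hFd t (lt_of_lt_of_le hε.1 ht.1)).hasDerivWithinAt
    have hev : ∀ᶠ ε in 𝓝[>] (0:ℝ), F ε = F x := by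
      filter_upwards [Ioc_mem_nhdsGT_of_mem (Set.left_mem_Ico.mpr hxpos)] with ε hε
      exact (key ε hε).symm
    have ht1 : Tendsto F (𝓝[>] (0:ℝ)) (𝓝 (F 0)) :=
      ((hFc 0 Set.self_mem_Ici).mono Ioi_subset_Ici_self).tendsto
    have ht2 : Tendsto F (𝓝[>] (0:ℝ)) (𝓝 (F x)) := by
      rw [tendsto_congr' hev]
      exact tendsto_const_nhds
    rw [tendsto_nhds_unique ht2 ht1, hF0]

end SMaux
namespace SMaux

variable {α Λ c : ℝ} {y : ℝ → ℝ}

lemma sm_z_pos (hα : 0 ≤ α) (hΛ : 0 < Λ) (hy : IsStableManifold α Λ c y)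
    {x : ℝ} (hx : 0 < x) : 0 < c * smP y x + x ^ (α + 1) / (α + 1) := by
  rw [← sm_energy hα hΛ hy hx.le]
  have h1 : y x < 0 := hy.2.2.1 x hx
  have h2 : 0 < y x ^ 2 := by nlinarith
  exact div_pos (mul_pos hΛ h2) two_pos

lemma sm_z_nonneg (hα : 0 ≤ α) (hΛ : 0 < Λ) (hy : IsStableManifold α Λ c y)
    {x : ℝ} (hx : 0 ≤ x) : 0 ≤ c * smP y x + x ^ (α + 1) / (α + 1) := by
  rw [← sm_energy hα hΛ hy hx]
  positivity

lemma sm_y_eq (hα : 0 ≤ α) (hΛ : 0 < Λ) (hy : IsStableManifold α Λ c y)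
    {x : ℝ} (hx : 0 ≤ x) :
    y x = -Real.sqrt (2 / Λ * (c * smP y x + x ^ (α + 1) / (α + 1))) := by
  have he := sm_energy hα hΛ hy hx
  have h2 : 2 / Λ * (c * smP y x + x ^ (α + 1) / (α + 1)) = y x ^ 2 := by
    rw [← he]
    field_simp
  rw [h2, Real.sqrt_sq_eq_abs, abs_of_nonpos (sm_nonpos hy hx), neg_neg]

lemma sm_sq_le (hα : 0 ≤ α) (hΛ : 0 < Λ) (hc : 0 ≤ c) (hy : IsStableManifold α Λ c y)
    {x : ℝ} (hx : 0 ≤ x) : y x ^ 2 ≤ 2 / Λ * x ^ (α + 1) := by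
  have he := sm_energy hα hΛ hy hx
  have h1 : c * smP y x ≤ 0 := mul_nonpos_iff.mpr (Or.inl ⟨hc, smP_nonpos hy hx⟩)
  have h2 : x ^ (α + 1) / (α + 1) ≤ x ^ (α + 1) :=
    div_le_self (Real.rpow_nonneg hx _) (by linarith)
  have h3 : Λ * y x ^ 2 / 2 ≤ x ^ (α + 1) := by linarith
  rw [div_mul_eq_mul_div, le_div_iff₀ hΛ]
  linarith

lemma sm_abs_y_le (hα : 0 ≤ α) (hΛ : 0 < Λ) (hc : 0 ≤ c) (hy : IsStableManifold α Λ c y)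
    {x : ℝ} (hx : 0 ≤ x) : |y x| ≤ Real.sqrt (2 / Λ * x ^ (α + 1)) := by
  rw [← Real.sqrt_sq_eq_abs]
  exact Real.sqrt_le_sqrt (sm_sq_le hα hΛ hc hy hx)

lemma sm_absP_le (hα : 0 ≤ α) (hΛ : 0 < Λ) (hc : 0 ≤ c) (hy : IsStableManifold α Λ c y)
    {x : ℝ} (hx : 0 ≤ x) : |smP y x| ≤ Real.sqrt (2 / Λ * x ^ (α + 1)) * x := by
  have h := intervalIntegral.norm_integral_le_of_norm_le_const
    (C := Real.sqrt (2 / Λ * x ^ (α + 1))) (f := y) (a := 0) (b := x) ?_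
  · simpa [smP, abs_of_nonneg hx] using h
  · intro t ht
    rw [Set.uIoc_of_le hx] at ht
    calc ‖y t‖ = |y t| := rfl
      _ ≤ Real.sqrt (2 / Λ * t ^ (α + 1)) := sm_abs_y_le hα hΛ hc hy ht.1.le
      _ ≤ Real.sqrt (2 / Λ * x ^ (α + 1)) := by
          apply Real.sqrt_le_sqrt
          have := Real.rpow_le_rpow ht.1.le ht.2 (by linarith : (0:ℝ) ≤ α + 1)
          have h2Λ : (0:ℝ) ≤ 2 / Λ := by positivity
          nlinarith

end SMaux
namespace SMaux

variable {α Λ c : ℝ} {y : ℝ → ℝ}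

lemma sm_barrier (hα0 : 0 ≤ α) (hα1' : α ≤ 1) (hΛ : 0 < Λ) (hc : 0 ≤ c)
    (hy : IsStableManifold α Λ c y) {X : ℝ} (hX : 0 < X) :
    ∃ ρ > (0:ℝ), ∀ x ∈ Ioc (0:ℝ) X,
      ρ * x ^ (α + 1) ≤ c * smP y x + x ^ (α + 1) / (α + 1) := by
  have hα1 : (0:ℝ) < α + 1 := by linarith
  set ρ : ℝ := min (1 / (4 * (α + 1))) (Λ * X ^ (α - 1) / (32 * (c ^ 2 + 1))) with hρdef
  have hXρ : 0 < X ^ (α - 1) := Real.rpow_pos_of_pos hX _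
  have hρ : 0 < ρ := lt_min (by positivity) (by positivity)
  refine ⟨ρ, hρ, ?_⟩
  have main : ∀ η, 0 < η → η < X → ∀ x ∈ Icc η X,
      ρ * (x - η) ^ (α + 1) ≤ c * smP y x + x ^ (α + 1) / (α + 1) := by
    intro η hη hηX x hxI
    have hprim : ∀ u : ℝ,
        HasDerivAt (fun v => ρ * (v - η) ^ (α + 1)) (ρ * ((α + 1) * (u - η) ^ α)) u := by
      intro u
      have h := Real.hasDerivAt_rpow_const (x := u - η) (p := α + 1)
        (Or.inr (by linarith))
      have h2 := (h.comp u ((hasDerivAt_id u).sub_const η)).const_mul ρ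
      simpa [add_sub_cancel_right] using h2
    refine image_le_of_deriv_right_lt_deriv_boundary'
      (f := fun v => ρ * (v - η) ^ (α + 1)) (f' := fun u => ρ * ((α + 1) * (u - η) ^ α))
      (B := fun v => c * smP y v + v ^ (α + 1) / (α + 1)) (B' := fun u => c * y u + u ^ α)
      (a := η) (b := X)
      (fun u _ => (hprim u).continuousAt.continuousWithinAt)
      (fun u _ => (hprim u).hasDerivWithinAt)
      ?_ ?_ ?_ ?_ hxI
    · -- f η ≤ B η
      have h0 : ρ * (η - η) ^ (α + 1) = 0 := by
        simp [Real.zero_rpow hα1.ne']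
      simp only [h0]
      exact sm_z_nonneg hα0 hΛ hy hη.le
    · -- continuity of B
      refine ContinuousOn.add (continuousOn_const.mul ((smP_cont hy).mono ?_)) ?_
      · exact fun t ht => le_trans hη.le ht.1
      · intro u _
        exact ((Real.continuousAt_rpow_const u (α + 1)
          (Or.inr hα1.le)).div_const _).continuousWithinAt
    · -- derivative of B
      intro u hu
      have hu0 : 0 < u := lt_of_lt_of_le hη hu.1
      exact (((smP_hasDeriv hy hu0).const_mul c).add (hasDerivAt_prim hα0 u)).hasDerivWithinAt
    · -- the strict differential inequality at touching points
      intro u hu heq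
      beta_reduce at heq ⊢
      have hu0 : 0 < u := lt_of_lt_of_le hη hu.1
      rcases eq_or_lt_of_le hu.1 with hηu | hηu
      · exfalso
        have hzpos := sm_z_pos hα0 hΛ hy hu0
        rw [← heq, ← hηu] at hzpos
        simp [Real.zero_rpow hα1.ne'] at hzpos
      · have huα : 0 < u ^ α := Real.rpow_pos_of_pos hu0 _
        have hfu : ρ * (u - η) ^ (α + 1) ≤ ρ * u ^ (α + 1) := by
          apply mul_le_mul_of_nonneg_left _ hρ.le
          exact Real.rpow_le_rpow (by linarith) (by linarith) hα1.le
        -- step 1 : f' u ≤ u^α/4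
        have hs1 : ρ * ((α + 1) * (u - η) ^ α) ≤ u ^ α / 4 := by
          have e1 : (u - η) ^ α ≤ u ^ α := Real.rpow_le_rpow (by linarith) (by linarith) hα0
          have e0 : (0:ℝ) ≤ (u - η) ^ α := Real.rpow_nonneg (by linarith) _
          have h' : ρ ≤ 1 / (4 * (α + 1)) := min_le_left _ _
          have heq4 : 1 / (4 * (α + 1)) * (α + 1) = 1 / 4 := by
            field_simp
          have e2 : ρ * (α + 1) ≤ 1 / 4 := by
            calc ρ * (α + 1) ≤ 1 / (4 * (α + 1)) * (α + 1) :=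
                  mul_le_mul_of_nonneg_right h' hα1.le
              _ = 1 / 4 := heq4
          calc ρ * ((α + 1) * (u - η) ^ α) = ρ * (α + 1) * (u - η) ^ α := by ring
            _ ≤ 1 / 4 * u ^ α := mul_le_mul e2 e1 e0 (by norm_num)
            _ = u ^ α / 4 := by ring
        -- step 3 : c * sqrt(2/Λ*(ρ*u^{α+1})) ≤ u^α/4
        have hs3 : c * Real.sqrt (2 / Λ * (ρ * u ^ (α + 1))) ≤ u ^ α / 4 := by
          have hsq : c * Real.sqrt (2 / Λ * (ρ * u ^ (α + 1)))
              = Real.sqrt (c ^ 2 * (2 / Λ * (ρ * u ^ (α + 1)))) := by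
            rw [Real.sqrt_mul (sq_nonneg c), Real.sqrt_sq hc]
          rw [hsq]
          have hρ2 : ρ ≤ Λ * X ^ (α - 1) / (32 * (c ^ 2 + 1)) := min_le_right _ _
          have hXu : X ^ (α - 1) ≤ u ^ (α - 1) :=
            Real.rpow_le_rpow_of_nonpos hu0 hu.2.le (by linarith)
          have hexp : u ^ (α - 1) * u ^ (α + 1) = u ^ α * u ^ α := by
            rw [← Real.rpow_add hu0, ← Real.rpow_add hu0]
            ring_nf
          have hup : (0:ℝ) ≤ u ^ (α + 1) := Real.rpow_nonneg hu0.le _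
          have h16 : c ^ 2 * (2 / Λ * ρ) ≤ X ^ (α - 1) / 16 := by
            have hmid : 2 / Λ * ρ ≤ X ^ (α - 1) / (16 * (c ^ 2 + 1)) := by
              rw [div_mul_eq_mul_div, div_le_div_iff₀ hΛ (by positivity)]
              have := mul_le_mul_of_nonneg_left hρ2 (by norm_num : (0:ℝ) ≤ 2)
              calc 2 * ρ * (16 * (c ^ 2 + 1))
                  ≤ 2 * (Λ * X ^ (α - 1) / (32 * (c ^ 2 + 1))) * (16 * (c ^ 2 + 1)) := by
                    nlinarith [sq_nonneg c]
                _ = Λ * X ^ (α - 1) := by field_simp; ring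
                _ = X ^ (α - 1) * Λ := by ring
            calc c ^ 2 * (2 / Λ * ρ) ≤ c ^ 2 * (X ^ (α - 1) / (16 * (c ^ 2 + 1))) :=
                  mul_le_mul_of_nonneg_left hmid (sq_nonneg c)
              _ ≤ X ^ (α - 1) / 16 := by
                  rw [mul_div_assoc', div_le_div_iff₀ (by positivity) (by norm_num)]
                  nlinarith [hXρ.le, sq_nonneg c]
          have hle : c ^ 2 * (2 / Λ * (ρ * u ^ (α + 1))) ≤ (u ^ α / 4) ^ 2 := by
            calc c ^ 2 * (2 / Λ * (ρ * u ^ (α + 1)))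
                = c ^ 2 * (2 / Λ * ρ) * u ^ (α + 1) := by ring
              _ ≤ X ^ (α - 1) / 16 * u ^ (α + 1) := mul_le_mul_of_nonneg_right h16 hup
              _ ≤ u ^ (α - 1) / 16 * u ^ (α + 1) := by
                  apply mul_le_mul_of_nonneg_right _ hup
                  linarith
              _ = (u ^ α / 4) ^ 2 := by
                  rw [div_mul_eq_mul_div, hexp]
                  ring
          calc Real.sqrt (c ^ 2 * (2 / Λ * (ρ * u ^ (α + 1))))
              ≤ Real.sqrt ((u ^ α / 4) ^ 2) := Real.sqrt_le_sqrt hle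
            _ = u ^ α / 4 := Real.sqrt_sq (by positivity)
        -- step 2 : -(u^α/4) ≤ c * y u
        have hs2 : -(u ^ α / 4) ≤ c * y u := by
          rw [sm_y_eq hα0 hΛ hy hu0.le]
          have hmono : Real.sqrt (2 / Λ * (c * smP y u + u ^ (α + 1) / (α + 1)))
              ≤ Real.sqrt (2 / Λ * (ρ * u ^ (α + 1))) := by
            apply Real.sqrt_le_sqrt
            apply mul_le_mul_of_nonneg_left _ (by positivity)
            rw [← heq]
            exact hfu
          have := mul_le_mul_of_nonneg_left hmono hc
          calc -(u ^ α / 4) ≤ -(c * Real.sqrt (2 / Λ * (ρ * u ^ (α + 1)))) := by linarith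
            _ ≤ -(c * Real.sqrt (2 / Λ * (c * smP y u + u ^ (α + 1) / (α + 1)))) := by linarith
            _ = c * -Real.sqrt (2 / Λ * (c * smP y u + u ^ (α + 1) / (α + 1))) := by ring
        linarith
  intro x hx
  have hev : ∀ᶠ η in 𝓝[>] (0:ℝ),
      ρ * (x - η) ^ (α + 1) ≤ c * smP y x + x ^ (α + 1) / (α + 1) := by
    filter_upwards [Ioo_mem_nhdsGT_of_mem (Set.left_mem_Ico.mpr hx.1)] with η hη
    exact main η hη.1 (lt_of_lt_of_le hη.2 hx.2) x ⟨hη.2.le, hx.2⟩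
  have hto : Tendsto (fun η : ℝ => ρ * (x - η) ^ (α + 1)) (𝓝[>] (0:ℝ))
      (𝓝 (ρ * x ^ (α + 1))) := by
    have hc1 : ContinuousAt (fun η : ℝ => ρ * (x - η) ^ (α + 1)) 0 := by
      apply ContinuousAt.mul continuousAt_const
      have h1 : ContinuousAt (fun t : ℝ => t ^ (α + 1)) (x - 0) :=
        Real.continuousAt_rpow_const _ _ (Or.inr hα1.le)
      exact h1.comp ((continuous_const.sub continuous_id).continuousAt)
    have h2 : Tendsto (fun η : ℝ => ρ * (x - η) ^ (α + 1)) (𝓝[>] (0:ℝ))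
        (𝓝 (ρ * (x - 0) ^ (α + 1))) := hc1.tendsto.mono_left nhdsWithin_le_nhds
    simpa using h2
  exact le_of_tendsto hto hev

end SMaux
namespace SMaux

lemma sqrt_diff_le {a b : ℝ} (ha : 0 < a) :
    |Real.sqrt a - Real.sqrt b| ≤ |a - b| / Real.sqrt a := by
  have hsa : 0 < Real.sqrt a := Real.sqrt_pos.2 ha
  rcases le_or_gt b 0 with hb | hb
  · rw [Real.sqrt_eq_zero'.mpr hb, sub_zero, abs_of_nonneg hsa.le,
      abs_of_nonneg (by linarith : (0:ℝ) ≤ a - b), le_div_iff₀ hsa,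
      Real.mul_self_sqrt ha.le]
    linarith
  · have hsb : 0 < Real.sqrt b := Real.sqrt_pos.2 hb
    have key : (Real.sqrt a - Real.sqrt b) * (Real.sqrt a + Real.sqrt b) = a - b := by
      have h1 := Real.sq_sqrt ha.le
      have h2 := Real.sq_sqrt hb.le
      nlinarith
    have habs : |Real.sqrt a - Real.sqrt b| * (Real.sqrt a + Real.sqrt b) = |a - b| := by
      rw [← abs_of_pos (by linarith : (0:ℝ) < Real.sqrt a + Real.sqrt b), ← abs_mul, key]
    rw [le_div_iff₀ hsa, ← habs]
    apply mul_le_mul_of_nonneg_left _ (abs_nonneg _)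
    linarith

variable {α Λ : ℝ} {c₁ c₂ : ℝ} {y₁ y₂ : ℝ → ℝ}

set_option maxHeartbeats 1000000 in
/-- Grönwall estimate: closeness in `c` of the primitives. -/
lemma sm_close (hα0 : 0 ≤ α) (hΛ : 0 < Λ) (hc₁ : 0 ≤ c₁) (hc₂ : 0 ≤ c₂)
    (hy₁ : IsStableManifold α Λ c₁ y₁) (hy₂ : IsStableManifold α Λ c₂ y₂)
    {X : ℝ} (hX : 0 < X) {ρ : ℝ} (hρ : 0 < ρ)
    (hbar : ∀ x ∈ Ioc (0:ℝ) X, ρ * x ^ (α + 1) ≤ c₁ * smP y₁ x + x ^ (α + 1) / (α + 1)) :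
    ∀ x ∈ Icc (0:ℝ) X, (smP y₂ x - smP y₁ x) ^ 2 ≤
      (2 / Λ * X / Real.sqrt ρ * |c₂ - c₁|) ^ 2 * (Real.exp X - 1) := by
  set M : ℝ := 2 / Λ * X / Real.sqrt ρ with hM
  have hsρ : 0 < Real.sqrt ρ := Real.sqrt_pos.2 hρ
  have hM0 : 0 ≤ M := by positivity
  set ε : ℝ := (M * |c₂ - c₁|) ^ 2 with hε
  have hε0 : 0 ≤ ε := sq_nonneg _
  set u : ℝ → ℝ := fun x => smP y₂ x - smP y₁ x with hu
  set f : ℝ → ℝ := fun x => u x ^ 2 with hf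
  set f' : ℝ → ℝ := fun x => 2 * u x * (y₂ x - y₁ x) with hf'
  have hu0 : u 0 = 0 := by simp [hu, smP_zero]
  have hD : ∀ x ∈ Ico (0:ℝ) X, HasDerivWithinAt f (f' x) (Ici x) x := by
    intro x hx
    have hud : HasDerivWithinAt u (y₂ x - y₁ x) (Ici x) x := by
      rcases hx.1.eq_or_lt with h | h
      · rw [← h]
        have h2 := (smP_hasDerivWithin0 hy₂).sub (smP_hasDerivWithin0 hy₁)
        have hz : y₂ 0 - y₁ 0 = 0 := by rw [hy₁.2.1, hy₂.2.1]; ring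
        rw [hz]
        rw [sub_zero] at h2; exact h2
      · exact ((smP_hasDeriv hy₂ h).sub (smP_hasDeriv hy₁ h)).hasDerivWithinAt
    have h3 := hud.pow 2
    refine h3.congr_deriv ?_
    simp only [hf', Nat.cast_ofNat, pow_one]
    ring
  have hcont : ContinuousOn f (Icc 0 X) := by
    have : ContinuousOn u (Ici 0) := (smP_cont hy₂).sub (smP_cont hy₁)
    exact (this.mono Icc_subset_Ici_self).pow 2
  have bound : ∀ x ∈ Ico (0:ℝ) X, f' x ≤ 1 * f x + ε := by
    intro x hx
    rcases hx.1.eq_or_lt with h | hxpos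
    · have hz0 : f' x = 0 := by
        rw [hf']
        simp only [← h, hu0]
        ring
      rw [hz0]
      have : 0 ≤ f x := sq_nonneg _
      linarith
    · have hw2 := sm_y_eq hα0 hΛ hy₂ hxpos.le
      have hw1 := sm_y_eq hα0 hΛ hy₁ hxpos.le
      set w : ℝ := x ^ (α + 1) / (α + 1) with hwdef
      set s2 : ℝ := Real.sqrt (2 / Λ * (c₂ * smP y₂ x + w)) with hs2
      set sm : ℝ := Real.sqrt (2 / Λ * (c₂ * smP y₁ x + w)) with hsm
      set s1 : ℝ := Real.sqrt (2 / Λ * (c₁ * smP y₁ x + w)) with hs1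
      have hsplit : y₂ x - y₁ x = (sm - s2) + (s1 - sm) := by
        rw [hw2, hw1]; ring
      have hΛ' : (0:ℝ) ≤ 2 / Λ := by positivity
      have h1 : u x * (sm - s2) ≤ 0 := by
        rcases le_total (smP y₁ x) (smP y₂ x) with hle | hle
        · have h0 : 0 ≤ u x := sub_nonneg.mpr hle
          have hss : sm ≤ s2 := by
            apply Real.sqrt_le_sqrt
            have := mul_le_mul_of_nonneg_left hle hc₂
            nlinarith
          nlinarith [mul_nonneg h0 (sub_nonneg.mpr hss)]
        · have h0 : u x ≤ 0 := sub_nonpos.mpr hle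
          have hss : s2 ≤ sm := by
            apply Real.sqrt_le_sqrt
            have := mul_le_mul_of_nonneg_left hle hc₂
            nlinarith
          nlinarith [mul_nonneg (neg_nonneg.mpr h0) (sub_nonneg.mpr hss)]
      have hzpos : 0 < 2 / Λ * (c₁ * smP y₁ x + w) := by
        have hz := sm_z_pos hα0 hΛ hy₁ hxpos
        rw [hwdef]
        have : (0:ℝ) < 2 / Λ := by positivity
        exact mul_pos this hz
      -- bound |s1 - sm| ≤ M * |c₂ - c₁|
      set t : ℝ := 2 / Λ * x ^ (α + 1) with ht
      have htpos : 0 < t := by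
        rw [ht]
        have := Real.rpow_pos_of_pos hxpos (α + 1)
        positivity
      have hst : 0 < Real.sqrt t := Real.sqrt_pos.2 htpos
      have h2 : |s1 - sm| ≤ M * |c₂ - c₁| := by
        have hd := sqrt_diff_le (b := 2 / Λ * (c₂ * smP y₁ x + w)) hzpos
        rw [← hs1, ← hsm] at hd
        have hnum : 2 / Λ * (c₁ * smP y₁ x + w) - 2 / Λ * (c₂ * smP y₁ x + w)
            = 2 / Λ * ((c₁ - c₂) * smP y₁ x) := by ring
        have hnum2 : |2 / Λ * (c₁ * smP y₁ x + w) - 2 / Λ * (c₂ * smP y₁ x + w)|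
            = 2 / Λ * |c₂ - c₁| * |smP y₁ x| := by
          rw [hnum, abs_mul, abs_mul, abs_of_nonneg hΛ', abs_sub_comm, mul_assoc]
        rw [hnum2] at hd
        have hPle : |smP y₁ x| ≤ Real.sqrt t * x := by
          rw [ht]
          exact sm_absP_le hα0 hΛ hc₁ hy₁ hxpos.le
        have hs1low : Real.sqrt ρ * Real.sqrt t ≤ s1 := by
          rw [← Real.sqrt_mul hρ.le, hs1]
          apply Real.sqrt_le_sqrt
          rw [ht]
          rw [hwdef]
          have hmul := mul_le_mul_of_nonneg_left (hbar x ⟨hxpos, hx.2.le⟩) hΛ'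
          linarith
        calc |s1 - sm| ≤ 2 / Λ * |c₂ - c₁| * |smP y₁ x| / s1 := hd
          _ ≤ 2 / Λ * |c₂ - c₁| * (Real.sqrt t * x) / (Real.sqrt ρ * Real.sqrt t) := by
              gcongr <;> first | positivity | exact abs_nonneg _ | exact hPle | exact hs1low
          _ = 2 / Λ * x / Real.sqrt ρ * |c₂ - c₁| := by
              field_simp
          _ ≤ M * |c₂ - c₁| := by
              rw [hM]
              have hxX : x ≤ X := hx.2.le
              gcongr <;> first | positivity | exact abs_nonneg _ | exact hxX
      -- assemble
      have ea : u x * (s1 - sm) ≤ |u x| * (M * |c₂ - c₁|) :=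
        calc u x * (s1 - sm) ≤ |u x * (s1 - sm)| := le_abs_self _
          _ = |u x| * |s1 - sm| := abs_mul _ _
          _ ≤ |u x| * (M * |c₂ - c₁|) := mul_le_mul_of_nonneg_left h2 (abs_nonneg _)
      have hfx : f' x = 2 * (u x * (sm - s2)) + 2 * (u x * (s1 - sm)) := by
        rw [hf']
        simp only
        rw [hsplit]
        ring
      rw [hfx]
      have esq : 2 * (|u x| * (M * |c₂ - c₁|)) ≤ |u x| ^ 2 + (M * |c₂ - c₁|) ^ 2 := by
        nlinarith [sq_nonneg (|u x| - M * |c₂ - c₁|)]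
      have : |u x| ^ 2 = f x := by rw [hf, sq_abs]
      linarith
  have hgr := le_gronwallBound_of_liminf_deriv_right_le (δ := 0) hcont
    (fun x hx r hr => (hD x hx).liminf_right_slope_le hr)
    (by simp [hf, hu0]) bound
  intro x hx
  have hb := hgr x hx
  rw [gronwallBound_of_K_ne_0 one_ne_zero] at hb
  simp only [zero_mul, one_mul, sub_zero, zero_add, div_one] at hb
  have hle : Real.exp x - 1 ≤ Real.exp X - 1 := by
    have := Real.exp_le_exp.mpr hx.2
    linarith
  calc (smP y₂ x - smP y₁ x) ^ 2 = f x := by rw [hf]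
    _ ≤ ε * (Real.exp x - 1) := hb
    _ ≤ ε * (Real.exp X - 1) := mul_le_mul_of_nonneg_left hle hε0

end SMaux
set_option maxHeartbeats 1000000 in
/-- Joint continuity: if `Y(x,c)` is for each `c ≥ 0` the stable-manifold function
for `c`, then `Y` is continuous as a function of the two variables on
`[0,∞) × [0,∞)`, and `Y(0,c) = 0` for all `c ≥ 0`. -/
theorem stable_manifold_joint_continuity (α Λ : ℝ) (hα : α ∈ Set.Icc (0:ℝ) 1)
    (hΛ : 0 < Λ) (Y : ℝ → ℝ → ℝ)
    (hY : ∀ c ≥ (0:ℝ), IsStableManifold α Λ c (fun x => Y x c)) :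
    ContinuousOn (fun p : ℝ × ℝ => Y p.1 p.2) (Set.Ici 0 ×ˢ Set.Ici 0) ∧
      ∀ c ≥ (0:ℝ), Y 0 c = 0 := by
  have hα0 : 0 ≤ α := hα.1
  have hα1 : (0:ℝ) < α + 1 := by linarith
  constructor
  · -- joint continuity of the primitive
    have hG : ContinuousOn (fun p : ℝ × ℝ => smP (fun t => Y t p.2) p.1)
        (Set.Ici 0 ×ˢ Set.Ici 0) := by
      intro p hp
      have hx₀ : (0:ℝ) ≤ p.1 := hp.1
      have hc₀ : (0:ℝ) ≤ p.2 := hp.2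
      have hXpos : (0:ℝ) < p.1 + 1 := by linarith
      obtain ⟨ρ, hρ, hbar⟩ := SMaux.sm_barrier hα0 hα.2 hΛ hc₀ (hY p.2 hc₀) hXpos
      have hsρ : 0 < Real.sqrt ρ := Real.sqrt_pos.2 hρ
      have hM0 : (0:ℝ) ≤ 2 / Λ * (p.1 + 1) / Real.sqrt ρ := by positivity
      have hE0 : (0:ℝ) ≤ Real.sqrt (Real.exp (p.1 + 1) - 1) := Real.sqrt_nonneg _
      have key : ∀ᶠ q : ℝ × ℝ in 𝓝[Set.Ici 0 ×ˢ Set.Ici 0] p,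
          ‖smP (fun t => Y t q.2) q.1 - smP (fun t => Y t p.2) q.1‖ ≤
            2 / Λ * (p.1 + 1) / Real.sqrt ρ * Real.sqrt (Real.exp (p.1 + 1) - 1)
              * |q.2 - p.2| := by
        have hmem : {q : ℝ × ℝ | q.1 < p.1 + 1} ∈ 𝓝[Set.Ici 0 ×ˢ Set.Ici 0] p :=
          mem_nhdsWithin_of_mem_nhds
            ((isOpen_lt continuous_fst continuous_const).mem_nhds (by simp only [Set.mem_setOf_eq]; linarith))
        filter_upwards [hmem, self_mem_nhdsWithin] with q hq1 hq2
        have hqx : (0:ℝ) ≤ q.1 := hq2.1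
        have hqc : (0:ℝ) ≤ q.2 := hq2.2
        have hsq := SMaux.sm_close hα0 hΛ hc₀ hqc (hY p.2 hc₀) (hY q.2 hqc)
          hXpos hρ hbar q.1 ⟨hqx, le_of_lt hq1⟩
        have habs : ‖smP (fun t => Y t q.2) q.1 - smP (fun t => Y t p.2) q.1‖
            = Real.sqrt ((smP (fun t => Y t q.2) q.1 - smP (fun t => Y t p.2) q.1) ^ 2) := by
          rw [Real.sqrt_sq_eq_abs, Real.norm_eq_abs]
        rw [habs]
        calc Real.sqrt ((smP (fun t => Y t q.2) q.1 - smP (fun t => Y t p.2) q.1) ^ 2)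
            ≤ Real.sqrt ((2 / Λ * (p.1 + 1) / Real.sqrt ρ * |q.2 - p.2|) ^ 2
                * (Real.exp (p.1 + 1) - 1)) := Real.sqrt_le_sqrt hsq
          _ = (2 / Λ * (p.1 + 1) / Real.sqrt ρ * |q.2 - p.2|)
                * Real.sqrt (Real.exp (p.1 + 1) - 1) := by
              rw [Real.sqrt_mul (sq_nonneg _), Real.sqrt_sq (by positivity)]
          _ = 2 / Λ * (p.1 + 1) / Real.sqrt ρ * Real.sqrt (Real.exp (p.1 + 1) - 1)
                * |q.2 - p.2| := by ring
      have hF2 : ContinuousWithinAt (fun q : ℝ × ℝ => smP (fun t => Y t p.2) q.1)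
          (Set.Ici 0 ×ˢ Set.Ici 0) p :=
        ((SMaux.smP_cont (hY p.2 hc₀)) p.1 hx₀).comp continuousWithinAt_fst
          (fun q hq => hq.1)
      have hbound : Tendsto (fun q : ℝ × ℝ =>
            2 / Λ * (p.1 + 1) / Real.sqrt ρ * Real.sqrt (Real.exp (p.1 + 1) - 1)
              * |q.2 - p.2|)
          (𝓝[Set.Ici 0 ×ˢ Set.Ici 0] p) (𝓝 0) := by
        have hcont : Continuous (fun q : ℝ × ℝ =>
            2 / Λ * (p.1 + 1) / Real.sqrt ρ * Real.sqrt (Real.exp (p.1 + 1) - 1)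
              * |q.2 - p.2|) :=
          continuous_const.mul ((continuous_snd.sub continuous_const).abs)
        have h := hcont.continuousWithinAt (s := Set.Ici 0 ×ˢ Set.Ici 0) (x := p)
        unfold ContinuousWithinAt at h
        simpa using h
      have hdiff : Tendsto (fun q : ℝ × ℝ =>
            smP (fun t => Y t q.2) q.1 - smP (fun t => Y t p.2) q.1)
          (𝓝[Set.Ici 0 ×ˢ Set.Ici 0] p) (𝓝 0) :=
        squeeze_zero_norm' key hbound
      have hsum := hdiff.add hF2
      unfold ContinuousWithinAt
      rw [show (fun p : ℝ × ℝ => smP (fun t => Y t p.2) p.1) p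
            = 0 + smP (fun t => Y t p.2) p.1 by rw [zero_add]]
      convert hsum using 2 with q
      ring
    -- continuity of x ↦ x^(α+1)
    have hrpowc : Continuous (fun x : ℝ => x ^ (α + 1)) :=
      continuous_iff_continuousAt.mpr
        (fun x => Real.continuousAt_rpow_const x _ (Or.inr hα1.le))
    have hRHS : ContinuousOn (fun p : ℝ × ℝ =>
        -Real.sqrt (2 / Λ * (p.2 * smP (fun t => Y t p.2) p.1 + p.1 ^ (α + 1) / (α + 1))))
        (Set.Ici 0 ×ˢ Set.Ici 0) := by
      apply ContinuousOn.neg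
      apply Real.continuous_sqrt.comp_continuousOn
      apply ContinuousOn.mul continuousOn_const
      apply ContinuousOn.add
      · exact continuous_snd.continuousOn.mul hG
      · exact ((hrpowc.comp continuous_fst).continuousOn).div_const _
    apply hRHS.congr
    intro p hp
    exact SMaux.sm_y_eq hα0 hΛ (hY p.2 hp.2) hp.1
  · exact fun c hc => (hY c hc).2.1
end
end

section
/- Let α ∈ [0,1], Λ > 0, c > 0, and let y_c be a stable-manifold function for the parameter c. Then for all x > 0 the two-sided estimate holds: −(2/((1+α)Λ))^{1/2}·x^{(1+α)/2} < y_c(x) < −(2/((1+α)Λ))^{1/2}·x^{(1+α)/2} + (c/Λ)·x. -/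
open Real Set MeasureTheory Filter

noncomputable section

/-- Two-sided estimate for the stable manifold:
`−(2/((1+α)Λ))^{1/2} x^{(1+α)/2} < y_c(x) < −(2/((1+α)Λ))^{1/2} x^{(1+α)/2} + (c/Λ) x`. -/
theorem stable_manifold_bounds (α Λ c : ℝ) (hα : α ∈ Set.Icc (0:ℝ) 1)
    (hΛ : 0 < Λ) (hc : 0 < c) (y : ℝ → ℝ) (hy : IsStableManifold α Λ c y) :
    ∀ x > (0:ℝ),
      -Real.sqrt (2 / ((1 + α) * Λ)) * x ^ ((1 + α) / 2) < y x ∧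
        y x < -Real.sqrt (2 / ((1 + α) * Λ)) * x ^ ((1 + α) / 2) + c / Λ * x := by
  obtain ⟨hcont, h0, hneg, hdiff, hode⟩ := hy
  have h1α : (0:ℝ) < 1 + α := by linarith [hα.1]
  have hΛ' : Λ ≠ 0 := ne_of_gt hΛ
  set C : ℝ := 2 / ((1 + α) * Λ) with hC
  have hCpos : 0 < C := div_pos two_pos (mul_pos h1α hΛ)
  have hrpow : ∀ t : ℝ, 0 < t →
      HasDerivAt (fun s : ℝ => s ^ (1+α)) ((1+α) * t ^ α) t := by
    intro t ht
    have h := Real.hasDerivAt_rpow_const (x := t) (p := 1+α) (Or.inl (ne_of_gt ht))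
    have he : (1:ℝ) + α - 1 = α := by ring
    rwa [he] at h
  have hrpowcont : ContinuousOn (fun s : ℝ => s ^ (1+α)) (Ici 0) :=
    fun t _ => (Real.continuousAt_rpow_const t (1+α) (Or.inr h1α.le)).continuousWithinAt
  intro x hx
  -- lower bound
  have key1 : (y x)^2 < C * x ^ (1+α) := by
    set F : ℝ → ℝ := fun t => C * t ^ (1+α) - (y t)^2 with hF
    have hFc : ContinuousOn F (Ici 0) :=
      (continuousOn_const.mul hrpowcont).sub (hcont.pow 2)
    have hF0 : F 0 = 0 := by
      simp [hF, h0, Real.zero_rpow (ne_of_gt h1α)]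
    have hFd : ∀ t ∈ interior (Ici (0:ℝ)), 0 < deriv F t := by
      rw [interior_Ici]
      intro t ht
      have ht : (0:ℝ) < t := ht
      have hyt := hdiff t ht
      have hD : HasDerivAt F (C * ((1+α) * t ^ α) - 2 * y t ^ 1 * deriv y t) t :=
        ((hrpow t ht).const_mul C).sub (hyt.hasDerivAt.pow 2)
      rw [hD.deriv]
      have hode' := hode t ht
      have hyneg := hneg t ht
      have htα : (0:ℝ) < t ^ α := Real.rpow_pos_of_pos ht α
      have h2 : 2 * y t ^ 1 * deriv y t = (2/Λ) * (c * y t + t ^ α) := by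
        rw [← hode']; field_simp
      have h3 : C * ((1+α) * t ^ α) = (2/Λ) * t ^ α := by
        rw [hC]; field_simp
      rw [h2, h3]
      have h4 : (2/Λ) * t^α - (2/Λ)*(c * y t + t^α) = (2/Λ)*(c * (-y t)) := by ring
      rw [h4]
      have : 0 < -y t := by linarith
      positivity
    have hmono := strictMonoOn_of_deriv_pos (convex_Ici 0) hFc hFd
    have h5 := hmono (self_mem_Ici) (mem_Ici.mpr hx.le) hx
    rw [hF0] at h5
    simp only [hF] at h5
    linarith
  -- upper bound squared
  have key2 : C * x ^ (1+α) < (y x - c/Λ * x)^2 := by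
    set F : ℝ → ℝ := fun t => (y t - c/Λ * t)^2 - C * t ^ (1+α) with hF
    have hFc : ContinuousOn F (Ici 0) :=
      ((hcont.sub (continuousOn_const.mul continuousOn_id)).pow 2).sub
        (continuousOn_const.mul hrpowcont)
    have hF0 : F 0 = 0 := by
      simp [hF, h0, Real.zero_rpow (ne_of_gt h1α)]
    have hFd : ∀ t ∈ interior (Ici (0:ℝ)), 0 < deriv F t := by
      rw [interior_Ici]
      intro t ht
      have ht : (0:ℝ) < t := ht
      have hyt := hdiff t ht
      have hyneg := hneg t ht
      have hyne : y t ≠ 0 := ne_of_lt hyneg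
      have htα : (0:ℝ) < t ^ α := Real.rpow_pos_of_pos ht α
      have hlin : HasDerivAt (fun s : ℝ => y s - c/Λ * s) (deriv y t - c/Λ) t := by
        have h := hyt.hasDerivAt.sub ((hasDerivAt_id t).const_mul (c/Λ))
        rw [mul_one] at h
        exact h
      have hD : HasDerivAt F
          (2 * (y t - c/Λ * t) ^ 1 * (deriv y t - c/Λ) - C * ((1+α) * t ^ α)) t :=
        (hlin.pow 2).sub ((hrpow t ht).const_mul C)
      rw [hD.deriv]
      have hode' := hode t ht
      have hy' : deriv y t = (c * y t + t ^ α) / (Λ * y t) := by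
        rw [eq_div_iff (mul_ne_zero hΛ' hyne)]
        linarith [hode']
      rw [hy']
      have hkey : 2 * (y t - c/Λ * t) ^ 1 * ((c * y t + t ^ α) / (Λ * y t) - c/Λ)
          - C * ((1+α) * t ^ α) = 2 * c * t * t ^ α / (Λ^2 * (-y t)) := by
        rw [hC]; field_simp; ring
      rw [hkey]
      have : 0 < -y t := by linarith
      positivity
    have hmono := strictMonoOn_of_deriv_pos (convex_Ici 0) hFc hFd
    have h5 := hmono (self_mem_Ici) (mem_Ici.mpr hx.le) hx
    rw [hF0] at h5
    simp only [hF] at h5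
    linarith
  -- convert to sqrt form
  have hs : Real.sqrt (C * x ^ (1+α)) = Real.sqrt C * x ^ ((1 + α) / 2) := by
    rw [Real.sqrt_mul hCpos.le]
    congr 1
    rw [show Real.sqrt (x ^ (1+α)) = (x ^ (1+α)) ^ ((1:ℝ)/2) from Real.sqrt_eq_rpow _,
      ← Real.rpow_mul hx.le]
    congr 1
    ring
  constructor
  · have h6 : Real.sqrt ((y x)^2) < Real.sqrt (C * x ^ (1+α)) :=
      Real.sqrt_lt_sqrt (sq_nonneg _) key1
    rw [Real.sqrt_sq_eq_abs, hs] at h6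
    have := (abs_lt.mp h6).1
    linarith
  · have h7 : Real.sqrt (C * x ^ (1+α)) < Real.sqrt ((y x - c/Λ * x)^2) :=
      Real.sqrt_lt_sqrt (by positivity) key2
    rw [Real.sqrt_sq_eq_abs, hs] at h7
    have hhneg : y x - c/Λ * x < 0 := by
      have := hneg x hx
      have : 0 < c/Λ * x := by positivity
      linarith [hneg x hx]
    rw [abs_of_neg hhneg] at h7
    linarith
end
end

section
/- Let α ∈ [0,1], Λ > 0, c > 0, and let y_c be a stable-manifold function for the parameter c. Then for all x > 0 one has y_c(x) > −(1/c)·x^α, i.e. the stable manifold lies strictly above the curve y = −x^α/c. -/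
open Real Set MeasureTheory Filter
open Topology

noncomputable section

set_option maxHeartbeats 1000000 in
/-- The stable manifold lies strictly above the curve `y = −x^α/c`. -/
theorem stable_manifold_above (α Λ c : ℝ) (hα : α ∈ Set.Icc (0:ℝ) 1)
    (hΛ : 0 < Λ) (hc : 0 < c) (y : ℝ → ℝ) (hy : IsStableManifold α Λ c y) :
    ∀ x > (0:ℝ), -(1 / c) * x ^ α < y x := by
  obtain ⟨hcont, hy0, hneg, hdiff, hode⟩ := hy
  have key : ∀ x > (0:ℝ), 0 < c * y x + x ^ α := by
    intro x0 hx0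
    by_contra hcon
    push_neg at hcon
    rcases eq_or_lt_of_le hα.1 with hα0 | hαpos
    · -- case α = 0 : Gronwall-type argument against the equilibrium y = -1/c
      subst hα0
      rw [Real.rpow_zero] at hcon
      have hcc : c * (1 / c) = 1 := by field_simp
      have hx0T : y x0 ≤ -(1 / c) := by nlinarith
      set T : Set ℝ := {t : ℝ | 0 < t ∧ y t ≤ -(1 / c)} with hT
      have hTne : T.Nonempty := ⟨x0, hx0, hx0T⟩
      have hTbdd : BddBelow T := ⟨0, fun t ht => ht.1.le⟩
      set s₀ := sInf T with hs₀
      -- s₀ > 0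
      have hylim : ContinuousWithinAt y (Ici 0) 0 := hcont 0 self_mem_Ici
      have hlt0 : -(1 / c) < y 0 := by rw [hy0]; exact neg_lt_zero.mpr (by positivity)
      have hev0 : y ⁻¹' Ioi (-(1 / c)) ∈ 𝓝[Ici 0] (0:ℝ) := hylim (Ioi_mem_nhds hlt0)
      obtain ⟨u, hu, husub⟩ := mem_nhdsGE_iff_exists_Ico_subset.mp hev0
      have hs₀pos : 0 < s₀ := by
        have : u ≤ s₀ := le_csInf hTne (by
          intro t ht
          by_contra h
          push_neg at h
          exact absurd (husub ⟨ht.1.le, h⟩) (not_lt.mpr ht.2))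
        exact lt_of_lt_of_le hu this
      -- y s₀ ≤ -1/c
      have hys₀ : y s₀ ≤ -(1 / c) := by
        by_contra h
        push_neg at h
        have hYat : ContinuousAt y s₀ := (hdiff s₀ hs₀pos).continuousAt
        have hmem : y ⁻¹' Ioi (-(1 / c)) ∈ 𝓝 s₀ := hYat (Ioi_mem_nhds h)
        obtain ⟨ε, hε, hball⟩ := Metric.mem_nhds_iff.mp hmem
        have : s₀ + ε ≤ s₀ := le_csInf hTne (by
          intro t ht
          by_contra h2
          push_neg at h2
          have ht0 : s₀ ≤ t := csInf_le hTbdd ht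
          have : t ∈ Metric.ball s₀ ε := by
            rw [Metric.mem_ball, Real.dist_eq, abs_lt]
            constructor <;> linarith
          exact absurd (hball this) (not_lt.mpr ht.2))
        linarith
      have hleft : ∀ t, 0 < t → t < s₀ → -(1 / c) < y t := by
        intro t ht hts
        by_contra h
        push_neg at h
        exact absurd (csInf_le hTbdd ⟨ht, h⟩) (not_le.mpr hts)
      set a := s₀ / 2 with ha
      have ha0 : 0 < a := by positivity
      have has : a < s₀ := by linarith
      have hya : -(1 / c) < y a := hleft a ha0 has
      have hyaneg : y a < 0 := hneg a ha0
      set m := -(y a) with hm'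
      have hm : 0 < m := by simp [hm']; linarith
      set K := c / (Λ * m) with hK
      have hKΛ : K * (Λ * m) = c := div_mul_cancel₀ _ (by positivity)
      -- y is antitone on [a, s₀]
      have hyanti : AntitoneOn y (Icc a s₀) := by
        apply antitoneOn_of_deriv_nonpos (convex_Icc a s₀)
        · intro t ht
          exact ((hdiff t (lt_of_lt_of_le ha0 ht.1)).continuousAt).continuousWithinAt
        · intro t ht
          rw [interior_Icc] at ht
          exact (hdiff t (lt_trans ha0 ht.1)).differentiableWithinAt
        · intro t ht
          rw [interior_Icc] at ht
          have ht0 : 0 < t := lt_trans ha0 ht.1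
          have hODE := hode t ht0
          rw [Real.rpow_zero] at hODE
          have hgt : -(1 / c) < y t := hleft t ht0 ht.2
          have hyt : y t < 0 := hneg t ht0
          have hcy : 0 < c * y t + 1 := by nlinarith
          by_contra hd
          push_neg at hd
          nlinarith [mul_pos (mul_pos hΛ (neg_pos.mpr hyt)) hd]
      have hym : ∀ t ∈ Icc a s₀, y t ≤ -m := by
        intro t ht
        have := hyanti ⟨le_refl a, has.le⟩ ht ht.1
        simpa [hm'] using this
      -- the Gronwall function
      set F : ℝ → ℝ := fun t => (y t + 1 / c) * Real.exp (K * t) with hF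
      have hFd : ∀ t ∈ Ioo a s₀,
          HasDerivAt F ((deriv y t + K * (y t + 1 / c)) * Real.exp (K * t)) t := by
        intro t ht
        have ht0 : 0 < t := lt_trans ha0 ht.1
        have hdy : HasDerivAt y (deriv y t) t := (hdiff t ht0).hasDerivAt
        have he : HasDerivAt (fun u => Real.exp (K * u)) (Real.exp (K * t) * K) t := by
          have := (Real.hasDerivAt_exp (K * t)).comp t ((hasDerivAt_id t).const_mul K)
          simpa [Function.comp_def] using this
        have := (hdy.add_const (1 / c)).mul he
        convert this using 1
        · rfl
        · rfl
        · rfl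
        · ring
      have hFd' : ∀ t ∈ Ioo a s₀, 0 ≤ deriv y t + K * (y t + 1 / c) := by
        intro t ht
        have ht0 : 0 < t := lt_trans ha0 ht.1
        have hODE := hode t ht0
        rw [Real.rpow_zero] at hODE
        have hgt : -(1 / c) < y t := hleft t ht0 ht.2
        have hyt : y t < 0 := hneg t ht0
        have hymt : y t ≤ -m := hym t ⟨ht.1.le, ht.2.le⟩
        have hw : 0 ≤ y t + 1 / c := by linarith
        have hΛy : Λ * y t < 0 := mul_neg_of_pos_of_neg hΛ hyt
        have h1 : Λ * y t * (deriv y t + K * (y t + 1 / c)) ≤ 0 := by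
          have hexp : Λ * y t * (deriv y t + K * (y t + 1 / c))
              = (c * y t + 1) + (K * Λ * y t) * (y t + 1 / c) := by
            rw [mul_add, hODE]; ring
          rw [hexp]
          have hcw : c * (y t + 1 / c) = c * y t + 1 := by
            rw [mul_add, hcc]
          have h2 : K * Λ * y t + c ≤ 0 := by
            have : K * Λ * y t ≤ K * Λ * (-m) := by
              apply mul_le_mul_of_nonneg_left hymt
              positivity
            nlinarith [hKΛ]
          nlinarith [mul_nonneg hw (neg_nonneg.mpr h2)]
        by_contra hX
        push_neg at hX
        nlinarith [mul_pos_of_neg_of_neg hΛy hX]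
      have hFmono : MonotoneOn F (Icc a s₀) := by
        apply monotoneOn_of_deriv_nonneg (convex_Icc a s₀)
        · intro t ht
          have ht0 : 0 < t := lt_of_lt_of_le ha0 ht.1
          exact (((hdiff t ht0).continuousAt.add continuousAt_const).mul
            ((Real.continuous_exp.comp (continuous_const.mul continuous_id)).continuousAt)).continuousWithinAt
        · intro t ht
          rw [interior_Icc] at ht
          exact (hFd t ht).differentiableAt.differentiableWithinAt
        · intro t ht
          rw [interior_Icc] at ht
          rw [(hFd t ht).deriv]
          exact mul_nonneg (hFd' t ht) (Real.exp_pos _).le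
      have hFa : 0 < F a := by
        apply mul_pos (by linarith) (Real.exp_pos _)
      have hFs₀ : F s₀ ≤ 0 := by
        apply mul_nonpos_of_nonpos_of_nonneg (by linarith) (Real.exp_pos _).le
      have := hFmono ⟨le_refl a, has.le⟩ ⟨has.le, le_refl s₀⟩ has.le
      linarith
    · -- case α > 0
      set g : ℝ → ℝ := fun t => c * y t + t ^ α with hg
      have hgc : ∀ t : ℝ, 0 < t → ContinuousAt g t := by
        intro t ht
        exact (continuousAt_const.mul (hdiff t ht).continuousAt).add
          (Real.continuousAt_rpow_const t α (Or.inl ht.ne'))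
      set S : Set ℝ := {t : ℝ | (0 < t ∧ t ≤ x0) ∧ ∀ u, t ≤ u → u ≤ x0 → g u ≤ 0} with hS
      have hx0S : x0 ∈ S := by
        refine ⟨⟨hx0, le_refl x0⟩, ?_⟩
        intro u hu hu'
        have : u = x0 := le_antisymm hu' hu
        rw [this]
        exact hcon
      have hSne : S.Nonempty := ⟨x0, hx0S⟩
      have hSbdd : BddBelow S := ⟨0, fun t ht => ht.1.1.le⟩
      set s := sInf S with hs
      have hsx0 : s ≤ x0 := csInf_le hSbdd hx0S
      have hs0 : 0 ≤ s := le_csInf hSne fun t ht => ht.1.1.le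
      have hgs : ∀ t, s < t → t ≤ x0 → g t ≤ 0 := by
        intro t hst htx
        obtain ⟨x, hxS, hxt⟩ := exists_lt_of_csInf_lt hSne hst
        exact hxS.2 t hxt.le htx
      rcases hs0.eq_or_lt with h0s | hspos
      · -- s = 0 : y is monotone on (0, x0], contradiction with y(0)=0, y(x0)<0
        have hmono : ∀ ε, 0 < ε → ε < x0 → y ε ≤ y x0 := by
          intro ε hε hεx
          have H : MonotoneOn y (Icc ε x0) := by
            apply monotoneOn_of_deriv_nonneg (convex_Icc ε x0)
            · intro t ht
              exact ((hdiff t (lt_of_lt_of_le hε ht.1)).continuousAt).continuousWithinAt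
            · intro t ht
              rw [interior_Icc] at ht
              exact (hdiff t (lt_trans hε ht.1)).differentiableWithinAt
            · intro t ht
              rw [interior_Icc] at ht
              have ht0 : 0 < t := lt_trans hε ht.1
              have hst : s < t := by rw [← h0s]; exact ht0
              have hgt : g t ≤ 0 := hgs t hst ht.2.le
              have hODE := hode t ht0
              have hyt : y t < 0 := hneg t ht0
              by_contra hd
              push_neg at hd
              have : c * y t + t ^ α ≤ 0 := hgt
              nlinarith [mul_pos (mul_pos hΛ (neg_pos.mpr hyt)) (neg_pos.mpr hd)]
          exact H ⟨le_refl ε, hεx.le⟩ ⟨hεx.le, le_refl x0⟩ hεx.le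
        have hev : ∀ᶠ ε in 𝓝[>] (0:ℝ), y ε ≤ y x0 :=
          eventually_of_mem (Ioo_mem_nhdsGT_of_mem ⟨le_refl (0:ℝ), hx0⟩)
            fun ε hε => hmono ε hε.1 hε.2
        have htend : Tendsto y (𝓝[>] (0:ℝ)) (𝓝 0) := by
          have h1 : Tendsto y (𝓝[Ici 0] (0:ℝ)) (𝓝 (y 0)) := hcont 0 self_mem_Ici
          rw [hy0] at h1
          exact h1.mono_left (nhdsWithin_mono 0 Ioi_subset_Ici_self)
        have h0le : 0 ≤ y x0 := le_of_tendsto htend hev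
        linarith [hneg x0 hx0]
      · -- s > 0
        have hgs0 : g s ≤ 0 := by
          rcases eq_or_lt_of_le hsx0 with h | h
          · rw [h]; exact hcon
          · have htd : Tendsto g (𝓝[>] s) (𝓝 (g s)) :=
              (hgc s hspos).tendsto.mono_left nhdsWithin_le_nhds
            have hev : ∀ᶠ t in 𝓝[>] s, g t ≤ 0 :=
              eventually_of_mem (Ioo_mem_nhdsGT_of_mem ⟨le_refl s, h⟩)
                fun t ht => hgs t ht.1 ht.2.le
            exact le_of_tendsto htd hev
        -- produce points strictly below s where g ≤ 0 on the interval up to s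
        have hev : ∀ᶠ t in 𝓝[<] s, g t ≤ 0 := by
          rcases lt_or_eq_of_le hgs0 with hglt | hgeq
          · have : g ⁻¹' Iio 0 ∈ 𝓝 s := (hgc s hspos) (Iio_mem_nhds hglt)
            exact eventually_of_mem (mem_nhdsWithin_of_mem_nhds this) fun t ht => le_of_lt ht
          · -- g s = 0, α > 0 : g has positive derivative at s
            have hys : y s < 0 := hneg s hspos
            have hgseq : c * y s + s ^ α = 0 := hgeq
            have hdys : deriv y s = 0 := by
              have h1 := hode s hspos
              rw [hgseq] at h1
              rcases mul_eq_zero.mp h1 with h2 | h2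
              · exact absurd h2 (mul_ne_zero hΛ.ne' hys.ne)
              · exact h2
            have hD : HasDerivAt g (c * deriv y s + α * s ^ (α - 1)) s :=
              ((hdiff s hspos).hasDerivAt.const_mul c).add
                (Real.hasDerivAt_rpow_const (Or.inl hspos.ne'))
            have hD' : HasDerivAt g (α * s ^ (α - 1)) s := by
              rw [hdys] at hD; simpa using hD
            have hdpos : 0 < α * s ^ (α - 1) :=
              mul_pos hαpos (Real.rpow_pos_of_pos hspos _)
            have hslope : Tendsto (slope g s) (𝓝[≠] s) (𝓝 (α * s ^ (α - 1))) :=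
              hasDerivAt_iff_tendsto_slope.mp hD'
            have h2 : ∀ᶠ t in 𝓝[≠] s, 0 < slope g s t :=
              hslope (Ioi_mem_nhds hdpos)
            have h3 : ∀ᶠ t in 𝓝[<] s, 0 < slope g s t :=
              h2.filter_mono (nhdsWithin_mono s fun t ht => ne_of_lt ht)
            have h4 : ∀ᶠ t in 𝓝[<] s, t < s := eventually_mem_nhdsWithin
            filter_upwards [h3, h4] with t hts htlt
            have hslope_eq : slope g s t = (g t - g s) / (t - s) := slope_def_field g s t
            rw [hslope_eq] at hts
            rcases div_pos_iff.mp hts with ⟨hn, hd⟩ | ⟨hn, hd⟩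
            · linarith
            · rw [← hgeq] at hn; linarith
        obtain ⟨l, hl, hsub⟩ := mem_nhdsLT_iff_exists_Ioo_subset.mp hev
        have hl' : l < s := hl
        set M := max l (s / 2) with hM
        have hMlt : M < s := max_lt hl' (by linarith)
        set b := (M + s) / 2 with hb
        have hbM : M < b := by rw [hb]; linarith
        have hbs : b < s := by rw [hb]; linarith
        have hbpos : 0 < b := lt_of_lt_of_le (lt_of_lt_of_le (by positivity : (0:ℝ) < s/2)
          (le_max_right l (s/2))) hbM.le
        have hbl : l < b := lt_of_le_of_lt (le_max_left l (s/2)) hbM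
        have hbS : b ∈ S := by
          refine ⟨⟨hbpos, le_trans hbs.le hsx0⟩, ?_⟩
          intro u hbu hux0
          rcases lt_trichotomy u s with hus | hus | hus
          · exact hsub ⟨lt_of_lt_of_le hbl hbu, hus⟩
          · rw [hus]; exact hgs0
          · exact hgs u hus hux0
        have : s ≤ b := csInf_le hSbdd hbS
        linarith
  intro x hx
  have h := key x hx
  have h2 : -x ^ α / c < y x := by
    rw [div_lt_iff₀ hc]
    nlinarith
  have e : -(1 / c) * x ^ α = -x ^ α / c := by ring
  rw [e]
  exact h2
end
end

section
/- Let α ∈ (0,1), Λ > 0 and v₀ ∈ (0,1). Suppose c > 0 and y is a stable-manifold function for the parameter c satisfying y(v₀) = −(c/Λ)·(1−v₀). Then c satisfies the estimates (2Λ/(1+α))^{1/2}·v₀^{(1+α)/2} < c < min( (2Λ/(1+α))^{1/2}·v₀^{(1+α)/2}/(1−v₀), (Λ/(1−v₀))^{1/2}·v₀^{α/2} ). -/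
open Real Set MeasureTheory Filter

noncomputable section

set_option maxHeartbeats 1000000 in
/-- Estimates for the speed `c(v₀)`:
`(2Λ/(1+α))^{1/2} v₀^{(1+α)/2} < c < min((2Λ/(1+α))^{1/2} v₀^{(1+α)/2}/(1−v₀), (Λ/(1−v₀))^{1/2} v₀^{α/2})`. -/
theorem speed_estimates (α Λ v₀ c : ℝ) (hα : α ∈ Set.Ioo (0:ℝ) 1)
    (hΛ : 0 < Λ) (hv₀ : v₀ ∈ Set.Ioo (0:ℝ) 1) (hc : 0 < c) (y : ℝ → ℝ)
    (hy : IsStableManifold α Λ c y) (hinit : y v₀ = -(c / Λ) * (1 - v₀)) :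
    Real.sqrt (2 * Λ / (1 + α)) * v₀ ^ ((1 + α) / 2) < c ∧
      c < min (Real.sqrt (2 * Λ / (1 + α)) * v₀ ^ ((1 + α) / 2) / (1 - v₀))
              (Real.sqrt (Λ / (1 - v₀)) * v₀ ^ (α / 2)) := by
  obtain ⟨hcont, h0, hneg, hdiff, hode⟩ := hy
  obtain ⟨hα0, hα1⟩ := hα
  obtain ⟨hv0, hv1⟩ := hv₀
  have h1α : (0:ℝ) < 1 + α := by linarith
  have h1v : (0:ℝ) < 1 - v₀ := by linarith
  -- continuity of t ↦ t ^ α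
  have hrpow_cont : Continuous (fun t : ℝ => t ^ α) := by
    rw [continuous_iff_continuousAt]
    intro x
    exact Real.continuousAt_rpow_const x α (Or.inr hα0.le)
  -- the energy identity
  have energy : ∀ b : ℝ, 0 < b →
      Λ * (y b) ^ 2 / 2 = c * (∫ t in (0:ℝ)..b, y t) + b ^ (α + 1) / (α + 1) := by
    intro b hb
    have hcontI : ContinuousOn y (Icc 0 b) := hcont.mono (Icc_subset_Ici_self)
    have hcontE : ContinuousOn (fun x => Λ * (y x) ^ 2 / 2) (Icc 0 b) :=
      (continuousOn_const.mul (hcontI.pow 2)).div_const 2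
    have hder : ∀ x ∈ Ioo (0:ℝ) b,
        HasDerivWithinAt (fun x => Λ * (y x) ^ 2 / 2) (c * y x + x ^ α) (Ioi x) x := by
      intro x hx
      have hyx := (hdiff x hx.1).hasDerivAt
      have H : HasDerivAt (fun x => Λ * (y x) ^ 2 / 2)
          (Λ * ((2:ℕ) * (y x) ^ 1 * deriv y x) / 2) x :=
        ((hyx.pow 2).const_mul Λ).div_const 2
      have : Λ * ((2:ℕ) * (y x) ^ 1 * deriv y x) / 2 = c * y x + x ^ α := by
        have := hode x hx.1
        push_cast
        nlinarith [this]
      rw [this] at H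
      exact H.hasDerivWithinAt
    have hint : IntervalIntegrable (fun x => c * y x + x ^ α) volume 0 b := by
      apply ContinuousOn.intervalIntegrable_of_Icc hb.le
      exact (continuousOn_const.mul hcontI).add (hrpow_cont.continuousOn)
    have key := intervalIntegral.integral_eq_sub_of_hasDeriv_right_of_le hb.le hcontE hder hint
    have hsplit : (∫ x in (0:ℝ)..b, (c * y x + x ^ α)) =
        c * (∫ t in (0:ℝ)..b, y t) + b ^ (α + 1) / (α + 1) := by
      rw [intervalIntegral.integral_add (f := fun x => c * y x) ((continuousOn_const.mul hcontI).intervalIntegrable_of_Icc hb.le)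
        (hrpow_cont.continuousOn.intervalIntegrable_of_Icc hb.le),
        intervalIntegral.integral_const_mul, integral_rpow (Or.inl (by linarith : (-1:ℝ) < α)),
        Real.zero_rpow (by positivity : α + 1 ≠ 0)]
      ring
    rw [hsplit] at key
    rw [key, h0]
    ring
  -- negativity of the integral of y
  have ineg : ∀ b : ℝ, 0 < b → (∫ t in (0:ℝ)..b, y t) < 0 := by
    intro b hb
    have := intervalIntegral.integral_lt_integral_of_continuousOn_of_le_of_exists_lt hb
      (hcont.mono Icc_subset_Ici_self) (continuousOn_const (c := (0:ℝ)))
      (fun x hx => (hneg x hx.1).le) ⟨b, ⟨hb.le, le_refl b⟩, hneg b hb⟩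
    simpa using this
  -- strict upper bound on the energy
  have energy_lt : ∀ b : ℝ, 0 < b → Λ * (y b) ^ 2 / 2 < b ^ (α + 1) / (α + 1) := by
    intro b hb
    have h1 := energy b hb
    have h2 := ineg b hb
    nlinarith [mul_pos hc (neg_pos.mpr h2)]
  -- deriv y < c / Λ on (0,∞)
  have hds : ∀ x : ℝ, 0 < x → deriv y x < c / Λ := by
    intro x hx
    have hox := hode x hx
    have hxp : (0:ℝ) < x ^ α := Real.rpow_pos_of_pos hx α
    have hyx := hneg x hx
    rw [lt_div_iff₀ hΛ]
    nlinarith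
  -- y x ≥ -(c/Λ)(1-x) on (0, v₀], strictly on (0, v₀)
  have hanti : StrictAntiOn (fun x => y x - c / Λ * x) (Ici (0:ℝ)) := by
    apply strictAntiOn_of_deriv_neg (convex_Ici 0)
    · exact hcont.sub ((continuous_const.mul continuous_id).continuousOn)
    · intro x hx
      rw [interior_Ici] at hx
      have hd : HasDerivAt (fun x => y x - c / Λ * x) (deriv y x - c / Λ) x := by
        exact ((hdiff x hx).hasDerivAt.sub ((hasDerivAt_id x).const_mul (c / Λ))).congr_deriv (by ring)
      rw [hd.deriv]
      have := hds x hx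
      linarith
  have hlow : ∀ x ∈ Ioo (0:ℝ) v₀, -(c / Λ) * (1 - x) < y x := by
    intro x hx
    have := hanti (mem_Ici.mpr hx.1.le) (mem_Ici.mpr hv0.le) hx.2
    simp only at this
    rw [hinit] at this
    have hcl : 0 < c / Λ := div_pos hc hΛ
    nlinarith
  -- lower bound for ∫ y
  have ilow : -(c / Λ) * (v₀ - v₀ ^ 2 / 2) < ∫ t in (0:ℝ)..v₀, y t := by
    have hci : ContinuousOn (fun t : ℝ => -(c / Λ) * (1 - t)) (Icc 0 v₀) :=
      (continuous_const.mul (continuous_const.sub continuous_id)).continuousOn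
    have hltI := intervalIntegral.integral_lt_integral_of_continuousOn_of_le_of_exists_lt hv0
      hci (hcont.mono Icc_subset_Ici_self)
      (fun x hx => by
        rcases eq_or_lt_of_le hx.2 with h | h
        · subst h; rw [hinit]
        · exact (hlow x ⟨hx.1, h⟩).le)
      ⟨v₀ / 2, ⟨by linarith, by linarith⟩, hlow (v₀/2) ⟨by linarith, by linarith⟩⟩
    have hval : (∫ t in (0:ℝ)..v₀, -(c / Λ) * (1 - t)) = -(c / Λ) * (v₀ - v₀ ^ 2 / 2) := by
      rw [intervalIntegral.integral_const_mul, intervalIntegral.integral_sub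
        intervalIntegrable_const (continuous_id'.intervalIntegrable 0 v₀),
        _root_.integral_one, _root_.integral_id]
      ring
    rw [hval] at hltI
    exact hltI
  -- rewrite targets as square roots
  have hsq1 : Real.sqrt (2 * Λ / (1 + α)) * v₀ ^ ((1 + α) / 2)
      = Real.sqrt (2 * Λ / (1 + α) * v₀ ^ (1 + α)) := by
    rw [Real.sqrt_mul (by positivity) (v₀ ^ (1 + α)), Real.sqrt_eq_rpow (v₀ ^ (1+α)),
      ← Real.rpow_mul hv0.le]
    ring_nf
  have hsq2 : Real.sqrt (Λ / (1 - v₀)) * v₀ ^ (α / 2)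
      = Real.sqrt (Λ / (1 - v₀) * v₀ ^ α) := by
    rw [Real.sqrt_mul (by positivity) (v₀ ^ α), Real.sqrt_eq_rpow (v₀ ^ α),
      ← Real.rpow_mul hv0.le]
    ring_nf
  have hval0 : y v₀ ^ 2 = (c / Λ) ^ 2 * (1 - v₀) ^ 2 := by rw [hinit]; ring
  -- first upper bound
  have hub1 : c < Real.sqrt (2 * Λ / (1 + α)) * v₀ ^ ((1 + α) / 2) / (1 - v₀) := by
    rw [hsq1, lt_div_iff₀ h1v, Real.lt_sqrt (by positivity)]
    rw [div_mul_eq_mul_div, lt_div_iff₀ h1α, add_comm 1 α]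
    have h1 := energy_lt v₀ hv0
    rw [hval0] at h1
    have hΛ' : Λ ≠ 0 := hΛ.ne'
    have h1' : Λ * ((c / Λ) ^ 2 * (1 - v₀) ^ 2) / 2 = c ^ 2 * (1 - v₀) ^ 2 / (2 * Λ) := by
      field_simp
    rw [h1', div_lt_div_iff₀ (by positivity) (by positivity)] at h1
    nlinarith [h1]
  -- lower bound
  have hlb : Real.sqrt (2 * Λ / (1 + α)) * v₀ ^ ((1 + α) / 2) < c := by
    rw [hsq1, Real.sqrt_lt' hc]
    rw [div_mul_eq_mul_div, div_lt_iff₀ h1α, add_comm 1 α]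
    have hE := energy v₀ hv0
    rw [hval0] at hE
    have h3 : c * (-(c / Λ) * (v₀ - v₀ ^ 2 / 2)) < c * ∫ t in (0:ℝ)..v₀, y t :=
      (mul_lt_mul_iff_right₀ hc).mpr ilow
    have hΛ' : Λ ≠ 0 := hΛ.ne'
    have h1' : Λ * ((c / Λ) ^ 2 * (1 - v₀) ^ 2) / 2 = c ^ 2 * (1 - v₀) ^ 2 / (2 * Λ) := by
      field_simp
    rw [h1'] at hE
    have h4 : v₀ ^ (α + 1) / (α + 1) < c ^ 2 / (2 * Λ) := by
      have h5 : c * (-(c / Λ) * (v₀ - v₀ ^ 2 / 2)) = -(c ^ 2 * (2 * v₀ - v₀ ^ 2)) / (2 * Λ) := by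
        field_simp
      rw [h5] at h3
      simp only [div_eq_mul_inv] at hE h3 ⊢
      linarith
    rw [div_lt_div_iff₀ (by positivity : (0:ℝ) < α + 1) (by positivity : (0:ℝ) < 2 * Λ)] at h4
    nlinarith [h4]
  -- second upper bound: positivity of y x + x^α/c
  -- |y x| is bounded by k x^((α+1)/2) with k = sqrt (2/(Λ(1+α)))
  set k : ℝ := Real.sqrt (2 / (Λ * (α + 1))) with hk_def
  have hk : 0 < k := Real.sqrt_pos.mpr (by positivity)
  have hbound : ∀ x : ℝ, 0 < x → -y x < k * x ^ ((α + 1) / 2) := by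
    intro x hx
    have h1 := energy_lt x hx
    have hx2 : (x ^ ((α + 1) / 2)) ^ 2 = x ^ (α + 1) := by
      rw [sq, ← Real.rpow_add hx]; ring_nf
    have hk2 : k ^ 2 = 2 / (Λ * (α + 1)) := Real.sq_sqrt (by positivity)
    have hsq : (-y x) ^ 2 < (k * x ^ ((α + 1) / 2)) ^ 2 := by
      rw [mul_pow, hx2, hk2]
      have hxp : (0:ℝ) < x ^ (α + 1) := Real.rpow_pos_of_pos hx _
      rw [div_mul_eq_mul_div, lt_div_iff₀ (by positivity : (0:ℝ) < Λ * (α + 1))]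
      have h1' := (div_lt_div_iff₀ (by norm_num : (0:ℝ) < 2) (by positivity : (0:ℝ) < α + 1)).mp
        (by linarith [h1] : Λ * y x ^ 2 / 2 < x ^ (α + 1) / (α + 1))
      ring_nf
      ring_nf at h1'
      linarith [h1']
    have hrhs : 0 ≤ k * x ^ ((α + 1) / 2) := by positivity
    exact lt_of_pow_lt_pow_left₀ 2 hrhs hsq
  -- choice of δ₀
  set δ₀ : ℝ := (1 / (2 * c * k)) ^ (2 / (1 - α)) with hδ_def
  have hδ0 : 0 < δ₀ := Real.rpow_pos_of_pos (by positivity) _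
  have hδval : δ₀ ^ ((1 - α) / 2) = 1 / (2 * c * k) := by
    rw [hδ_def, ← Real.rpow_mul (by positivity)]
    have h1mα : (1:ℝ) - α ≠ 0 := sub_ne_zero.mpr (by linarith)
    rw [show 2 / (1 - α) * ((1 - α) / 2) = 1 by field_simp, Real.rpow_one]
  have hpos_small : ∀ x : ℝ, 0 < x → x ≤ δ₀ → 0 < y x + x ^ α / c := by
    intro x hx hxδ
    have hb := hbound x hx
    have hxα : (0:ℝ) < x ^ α := Real.rpow_pos_of_pos hx _
    -- k * x^((α+1)/2) ≤ x^α / (2c)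
    have hsplit : x ^ ((α + 1) / 2) = x ^ α * x ^ ((1 - α) / 2) := by
      rw [← Real.rpow_add hx]; ring_nf
    have hmono : x ^ ((1 - α) / 2) ≤ δ₀ ^ ((1 - α) / 2) :=
      Real.rpow_le_rpow hx.le hxδ (by linarith)
    have hkey : k * x ^ ((α + 1) / 2) ≤ x ^ α / (2 * c) := by
      rw [hsplit, hδval] at *
      calc k * (x ^ α * x ^ ((1 - α) / 2)) ≤ k * (x ^ α * (1 / (2 * c * k))) := by
            apply mul_le_mul_of_nonneg_left _ hk.le
            exact mul_le_mul_of_nonneg_left hmono hxα.le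
        _ = x ^ α / (2 * c) := by field_simp
    have : x ^ α / (2 * c) < x ^ α / c := by
      apply div_lt_div_of_pos_left hxα hc; linarith
    linarith
  have hcont_h : ContinuousOn (fun x => y x + x ^ α / c) (Ici 0) :=
    hcont.add ((hrpow_cont.div_const c).continuousOn)
  have hmain : ∀ x : ℝ, 0 < x → 0 < y x + x ^ α / c := by
    by_contra hcon
    push_neg at hcon
    obtain ⟨x₁, hx₁, hx₁le⟩ := hcon
    have hx₁δ : δ₀ < x₁ := by
      by_contra hle
      push_neg at hle
      exact absurd hx₁le (not_le.mpr (hpos_small x₁ hx₁ hle))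
    set h : ℝ → ℝ := fun x => y x + x ^ α / c with hh_def
    set S : Set ℝ := Icc δ₀ x₁ ∩ h ⁻¹' (Iic 0) with hS_def
    have hSclosed : IsClosed S :=
      (hcont_h.mono (Icc_subset_Ici_self.trans (by
        intro t ht; exact le_trans hδ0.le ht))).preimage_isClosed_of_isClosed
        isClosed_Icc isClosed_Iic
    have hSne : S.Nonempty := ⟨x₁, ⟨hx₁δ.le, le_refl _⟩, hx₁le⟩
    have hSbdd : BddBelow S := (bddBelow_Icc).mono inter_subset_left
    set m : ℝ := sInf S with hm_def
    have hmS : m ∈ S := hSclosed.csInf_mem hSne hSbdd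
    have hmδ : δ₀ ≤ m := hmS.1.1
    have hm0 : 0 < m := lt_of_lt_of_le hδ0 hmδ
    have hmne : m ≠ δ₀ := by
      intro h'
      have h2 : h δ₀ ≤ 0 := by rw [← h']; exact hmS.2
      exact absurd h2 (not_le.mpr (hpos_small δ₀ hδ0 le_rfl))
    have hmgt : δ₀ < m := lt_of_le_of_ne hmδ (Ne.symm hmne)
    have hleft : ∀ x : ℝ, 0 < x → x < m → 0 < h x := by
      intro x hx hxm
      rcases le_or_gt x δ₀ with hle | hgt
      · exact hpos_small x hx hle
      · by_contra hcon2
        push_neg at hcon2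
        have hxS : x ∈ S := ⟨⟨hgt.le, hxm.le.trans hmS.1.2⟩, hcon2⟩
        exact absurd (csInf_le hSbdd hxS) (not_le.mpr hxm)
    -- h m = 0
    have hy_dm := (hdiff m hm0).hasDerivAt
    have hrm : HasDerivAt (fun x : ℝ => x ^ α / c) (α * m ^ (α - 1) / c) m :=
      (Real.hasDerivAt_rpow_const (Or.inl hm0.ne')).div_const c
    have hdm : HasDerivAt h (deriv y m + α * m ^ (α - 1) / c) m := hy_dm.add hrm
    have hm_ge : 0 ≤ h m := by
      have htends : Tendsto h (nhdsWithin m (Iio m)) (nhds (h m)) :=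
        (hdm.continuousAt.continuousWithinAt)
      apply ge_of_tendsto htends
      filter_upwards [Ioo_mem_nhdsLT_of_mem (⟨hmgt, le_refl m⟩ : m ∈ Ioc δ₀ m)] with x hx
      exact (hleft x (lt_trans hδ0 hx.1) hx.2).le
    have hm_eq : h m = 0 := le_antisymm hmS.2 hm_ge
    -- deriv y m = 0
    have hym_ne : y m ≠ 0 := (hneg m hm0).ne
    have hodem := hode m hm0
    have hym_val : c * y m + m ^ α = 0 := by
      have : h m = y m + m ^ α / c := rfl
      rw [this] at hm_eq
      field_simp at hm_eq
      linarith [hm_eq]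
    have hderiv0 : deriv y m = 0 := by
      rw [hym_val] at hodem
      rcases mul_eq_zero.mp hodem with h' | h'
      · exact absurd h' (by
          intro hcon3
          rcases mul_eq_zero.mp hcon3 with h'' | h''
          · exact hΛ.ne' h''
          · exact hym_ne h'')
      · exact h'
    rw [hderiv0, zero_add] at hdm
    have hd_pos : 0 < α * m ^ (α - 1) / c := by
      have : (0:ℝ) < m ^ (α - 1) := Real.rpow_pos_of_pos hm0 _
      positivity
    -- slope from the left is ≤ 0, contradiction
    have hslope := hasDerivAt_iff_tendsto_slope.mp hdm
    have hslope' : Tendsto (slope h m) (nhdsWithin m (Iio m)) (nhds (α * m ^ (α - 1) / c)) :=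
      hslope.mono_left (nhdsWithin_mono m (fun x hx => Ne.symm (ne_of_gt hx)))
    have : α * m ^ (α - 1) / c ≤ 0 := by
      apply le_of_tendsto hslope'
      filter_upwards [Ioo_mem_nhdsLT_of_mem (⟨hm0, le_refl m⟩ : m ∈ Ioc 0 m)] with x hx
      have hx_pos : 0 < h x := hleft x hx.1 hx.2
      have : slope h m x = (h x - h m) / (x - m) := slope_def_field h m x
      rw [this, hm_eq, sub_zero]
      apply div_nonpos_of_nonneg_of_nonpos hx_pos.le
      linarith [hx.2]
    linarith
  have hub2 : c < Real.sqrt (Λ / (1 - v₀)) * v₀ ^ (α / 2) := by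
    have := hmain v₀ hv0
    rw [hinit] at this
    rw [hsq2, Real.lt_sqrt hc.le]
    rw [div_mul_eq_mul_div, lt_div_iff₀ h1v]
    have hv0α : (0:ℝ) < v₀ ^ α := Real.rpow_pos_of_pos hv0 α
    have h7 : c / Λ * (1 - v₀) < v₀ ^ α / c := by linarith
    rw [div_mul_eq_mul_div, div_lt_div_iff₀ hΛ hc] at h7
    nlinarith [h7]
  exact ⟨hlb, lt_min hub1 hub2⟩
end
end

section
/- Let α ∈ [0,1), Λ > 0, c > 0, and let y_c be a stable-manifold function for the parameter c. Then for every x > 0 the function s ↦ 1/(−y_c(s)) is integrable on (0,x), so the settling time T(x,c) = ∫₀^x ds/(−y_c(s)) is finite; moreover, for all x with 0 < x < x₁(c) = (2Λ/((1+α)c²))^{1/(1−α)} one has the bounds ((2(1+α)Λ)^{1/2}/(1−α))·x^{(1−α)/2} < T(x,c) < ((2(1+α)Λ)^{1/2}/(1−α))·x^{(1−α)/2}·(1 − c·((1+α)/(2Λ))^{1/2}·x^{(1−α)/2})^{−1}. -/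
open Real Set MeasureTheory Filter

noncomputable section

lemma comp_aux {b : ℝ} {u₁ u₂ : ℝ → ℝ}
    (h₁ : ContinuousOn u₁ (Icc 0 b)) (h₂ : ContinuousOn u₂ (Icc 0 b))
    (hd₁ : ∀ x ∈ Ioo 0 b, DifferentiableAt ℝ u₁ x)
    (hd₂ : ∀ x ∈ Ioo 0 b, DifferentiableAt ℝ u₂ x)
    (h0 : u₁ 0 ≤ u₂ 0)
    (key : ∀ x ∈ Ioo 0 b, u₂ x ≤ u₁ x → deriv u₁ x < deriv u₂ x) :
    (∀ x ∈ Icc 0 b, u₁ x ≤ u₂ x) ∧ (∀ x ∈ Ioo 0 b, u₁ x < u₂ x) := by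
  have weak : ∀ x ∈ Icc 0 b, u₁ x ≤ u₂ x := by
    by_contra hcon
    push_neg at hcon
    obtain ⟨x₀, hx₀, hgt⟩ := hcon
    have hdc : ContinuousOn (fun t => u₁ t - u₂ t) (Icc 0 b) := h₁.sub h₂
    set S := Icc (0:ℝ) x₀ ∩ (fun t => u₁ t - u₂ t) ⁻¹' (Iic 0) with hSdef
    have hS0 : (0:ℝ) ∈ S := ⟨⟨le_refl 0, hx₀.1⟩, by simp [sub_nonpos.2 h0]⟩
    have hSb : BddAbove S := ⟨x₀, fun t ht => ht.1.2⟩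
    have hsub : Icc 0 x₀ ⊆ Icc 0 b := Icc_subset_Icc le_rfl hx₀.2
    have hclosed : IsClosed S :=
      (hdc.mono hsub).preimage_isClosed_of_isClosed isClosed_Icc isClosed_Iic
    set xs := sSup S with hxs
    have hmem : xs ∈ S := hclosed.csSup_mem ⟨0, hS0⟩ hSb
    have hxs0 : 0 ≤ xs := hmem.1.1
    have hxsle : xs ≤ x₀ := hmem.1.2
    have hdxs : u₁ xs - u₂ xs ≤ 0 := hmem.2
    have hxslt : xs < x₀ := hxsle.lt_of_ne (fun heq => by
      rw [heq] at hdxs; linarith)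
    have hpos : ∀ t ∈ Ioc xs x₀, 0 < u₁ t - u₂ t := by
      intro t ht
      by_contra hle
      push_neg at hle
      have : t ∈ S := ⟨⟨hxs0.trans ht.1.le, ht.2⟩, hle⟩
      exact absurd (le_csSup hSb this) (not_le.2 ht.1)
    have hanti : StrictAntiOn (fun t => u₁ t - u₂ t) (Icc xs x₀) := by
      apply strictAntiOn_of_deriv_neg (convex_Icc _ _)
        (hdc.mono (Icc_subset_Icc hxs0 hx₀.2))
      intro t ht
      rw [interior_Icc] at ht
      have htb : t ∈ Ioo 0 b := ⟨lt_of_le_of_lt hxs0 ht.1, lt_of_lt_of_le ht.2 hx₀.2⟩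
      have hk := key t htb (by
        have := hpos t ⟨ht.1, ht.2.le⟩; linarith)
      rw [deriv_fun_sub (hd₁ t htb) (hd₂ t htb)]
      linarith
    have := hanti (left_mem_Icc.2 hxsle) (right_mem_Icc.2 hxsle) hxslt
    simp only at this
    have := hpos x₀ ⟨hxslt, le_rfl⟩
    linarith
  refine ⟨weak, fun x hx => ?_⟩
  rcases lt_or_eq_of_le (weak x (Ioo_subset_Icc_self hx)) with h | h
  · exact h
  · exfalso
    have hmax : IsLocalMax (fun t => u₁ t - u₂ t) x := by
      filter_upwards [Ioo_mem_nhds hx.1 hx.2] with t ht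
      have := weak t (Ioo_subset_Icc_self ht)
      simp only [h]
      linarith
    have h0' := hmax.deriv_eq_zero
    rw [deriv_fun_sub (hd₁ x hx) (hd₂ x hx)] at h0'
    have := key x hx h.symm.le
    linarith

set_option maxHeartbeats 1000000 in
/-- The settling time `T(x,c) = ∫₀^x ds/(−y_c(s))` is finite, and for
`0 < x < x₁(c) = (2Λ/((1+α)c²))^{1/(1−α)}` it satisfies the stated two-sided bounds. -/
theorem settling_time_bounds (α Λ c : ℝ) (hα : 0 ≤ α) (hα1 : α < 1)
    (hΛ : 0 < Λ) (hc : 0 < c) (y : ℝ → ℝ) (hy : IsStableManifold α Λ c y) :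
    (∀ x > (0:ℝ), IntegrableOn (fun s => 1 / (-y s)) (Set.Ioo 0 x)) ∧
      ∀ x : ℝ, 0 < x → x < (2 * Λ / ((1 + α) * c ^ 2)) ^ ((1:ℝ) / (1 - α)) →
        Real.sqrt (2 * (1 + α) * Λ) / (1 - α) * x ^ ((1 - α) / 2)
            < (∫ s in (0:ℝ)..x, 1 / (-y s)) ∧
          (∫ s in (0:ℝ)..x, 1 / (-y s))
            < Real.sqrt (2 * (1 + α) * Λ) / (1 - α) * x ^ ((1 - α) / 2) *
                (1 - c * Real.sqrt ((1 + α) / (2 * Λ)) * x ^ ((1 - α) / 2))⁻¹ := by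
  obtain ⟨hcont, hy0, hneg, hdiff, hode⟩ := hy
  have h1α : (0:ℝ) < 1 + α := by linarith
  have h1a : (0:ℝ) < 1 - α := by linarith
  set A := Real.sqrt (2 / ((1 + α) * Λ)) with hA
  have hA0 : 0 < A := Real.sqrt_pos.2 (by positivity)
  have hA2 : A ^ 2 = 2 / ((1 + α) * Λ) := Real.sq_sqrt (by positivity)
  set X₁ := (2 * Λ / ((1 + α) * c ^ 2)) ^ ((1:ℝ) / (1 - α)) with hX₁
  have hX₁0 : 0 < X₁ := Real.rpow_pos_of_pos (by positivity) _
  -- derivative of w = y²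
  have hwD : ∀ s : ℝ, 0 < s → HasDerivAt (fun t => y t ^ 2) (2 / Λ * (c * y s + s ^ α)) s := by
    intro s hs
    have h := ((hdiff s hs).hasDerivAt).pow 2
    refine h.congr_deriv ?_
    have hode' := hode s hs
    field_simp
    norm_num
    nlinarith [hode s hs]
  -- upper comparison : y s ^ 2 < A^2 s^(1+α) for s > 0
  have hupper : ∀ s : ℝ, 0 < s → y s ^ 2 < A ^ 2 * s ^ (1 + α) := by
    intro s hs
    have hcomp := comp_aux (b := s + 1)
      (u₁ := fun t => y t ^ 2) (u₂ := fun t => A ^ 2 * t ^ (1 + α))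
      ((hcont.mono Icc_subset_Ici_self).pow 2)
      (continuousOn_const.mul (continuousOn_id.rpow_const fun t _ => Or.inr h1α.le))
      (fun t ht => (hdiff t ht.1).pow 2)
      (fun t ht => ((Real.hasDerivAt_rpow_const (p := 1 + α) (Or.inl ht.1.ne')).differentiableAt.const_mul _))
      (by simp [hy0, Real.zero_rpow h1α.ne'])
      ?_
    · exact hcomp.2 s ⟨hs, lt_add_one s⟩
    · intro t ht _
      have hD2 : HasDerivAt (fun t : ℝ => A ^ 2 * t ^ (1 + α)) (A ^ 2 * ((1 + α) * t ^ α)) t := by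
        have := (Real.hasDerivAt_rpow_const (x := t) (p := 1 + α) (Or.inl ht.1.ne')).const_mul (A ^ 2)
        refine this.congr_deriv ?_
        rw [show (1 + α) - 1 = α by ring]
      rw [(hwD t ht.1).deriv, hD2.deriv]
      have hyt := hneg t ht.1
      have htα : 0 < t ^ α := Real.rpow_pos_of_pos ht.1 _
      have hA2' : A ^ 2 * (1 + α) = 2 / Λ := by
        rw [hA2]; field_simp
      have h2Λ : 0 < 2 / Λ := by positivity
      calc 2 / Λ * (c * y t + t ^ α) < 2 / Λ * t ^ α :=
            (mul_lt_mul_iff_right₀ h2Λ).2 (by nlinarith [mul_neg_of_pos_of_neg hc hyt])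
        _ = A ^ 2 * ((1 + α) * t ^ α) := by rw [← hA2']; ring
  -- hence -y s < A * s^((1+α)/2)
  have hv_ub : ∀ s : ℝ, 0 < s → -y s < A * s ^ ((1 + α) / 2) := by
    intro s hs
    have h := hupper s hs
    have hsq : (A * s ^ ((1 + α) / 2)) ^ 2 = A ^ 2 * s ^ (1 + α) := by
      rw [mul_pow, ← Real.rpow_natCast (s ^ ((1 + α) / 2)) 2, ← Real.rpow_mul hs.le]
      norm_num
    have hpos : 0 ≤ A * s ^ ((1 + α) / 2) := by positivity
    have : (-y s) ^ 2 < (A * s ^ ((1 + α) / 2)) ^ 2 := by rw [hsq, neg_sq]; exact h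
    exact lt_of_pow_lt_pow_left₀ 2 hpos this
  -- bridge: t < X₁ implies c * t^((1-α)/2) < A * Λ
  have hbr : ∀ t : ℝ, 0 ≤ t → t < X₁ → c * t ^ ((1 - α) / 2) < A * Λ := by
    intro t ht htX
    have hB : (0:ℝ) < 2 * Λ / ((1 + α) * c ^ 2) := by positivity
    have hX1v : X₁ ^ ((1 - α) / 2) = A * Λ / c := by
      rw [hX₁, ← Real.rpow_mul hB.le]
      rw [show (1:ℝ) / (1 - α) * ((1 - α) / 2) = 1 / 2 by field_simp]
      rw [← Real.sqrt_eq_rpow]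
      rw [show 2 * Λ / ((1 + α) * c ^ 2) = (A * Λ / c) ^ 2 by
        rw [div_pow, mul_pow, hA2]; field_simp]
      exact Real.sqrt_sq (by positivity)
    have hlt : t ^ ((1 - α) / 2) < X₁ ^ ((1 - α) / 2) :=
      Real.rpow_lt_rpow ht htX (by positivity)
    rw [hX1v] at hlt
    calc c * t ^ ((1 - α) / 2) < c * (A * Λ / c) := by
          exact (mul_lt_mul_iff_right₀ hc).2 hlt
      _ = A * Λ := by field_simp
  -- g positivity on (0, X₁)
  have hsplit : ∀ t : ℝ, 0 < t → t = t ^ ((1 + α) / 2) * t ^ ((1 - α) / 2) := by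
    intro t ht
    rw [← Real.rpow_add ht, show (1 + α) / 2 + (1 - α) / 2 = (1:ℝ) by ring, Real.rpow_one]
  have hgpos : ∀ t : ℝ, 0 < t → t < X₁ → 0 < A * t ^ ((1 + α) / 2) - c / Λ * t := by
    intro t ht htX
    have hb := hbr t ht.le htX
    have hte : 0 < t ^ ((1 + α) / 2) := Real.rpow_pos_of_pos ht _
    have := hsplit t ht
    have h2 : c / Λ * t = t ^ ((1 + α) / 2) * (c / Λ * t ^ ((1 - α) / 2)) := by
      nth_rewrite 1 [this]; ring
    rw [h2]
    have : c / Λ * t ^ ((1 - α) / 2) < A := by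
      rw [div_mul_eq_mul_div, div_lt_iff₀ hΛ]
      linarith
    nlinarith
  -- derivative of g
  have hgD : ∀ t : ℝ, 0 < t → HasDerivAt (fun t => A * t ^ ((1 + α) / 2) - c / Λ * t)
      (A * ((1 + α) / 2) * t ^ ((α - 1) / 2) - c / Λ) t := by
    intro t ht
    have h1 := (Real.hasDerivAt_rpow_const (x := t) (p := (1 + α) / 2) (Or.inl ht.ne')).const_mul A
    have h2 := (hasDerivAt_id t).const_mul (c / Λ)
    refine (h1.sub h2).congr_deriv ?_
    rw [show (1 + α) / 2 - 1 = (α - 1) / 2 by ring]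
    ring
  -- the key algebraic identity
  have hgid : ∀ t : ℝ, 0 < t →
      2 * (A * t ^ ((1 + α) / 2) - c / Λ * t) * (A * ((1 + α) / 2) * t ^ ((α - 1) / 2) - c / Λ)
        = 2 / Λ * (t ^ α - c * (A * t ^ ((1 + α) / 2) - c / Λ * t))
          - 2 * c / Λ * ((1 + α) / 2) * (A * t ^ ((1 + α) / 2)) := by
    intro t ht
    have hpr : t ^ ((1 + α) / 2) * t ^ ((α - 1) / 2) = t ^ α := by
      rw [← Real.rpow_add ht, show (1 + α) / 2 + (α - 1) / 2 = α by ring]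
    have hxr : t * t ^ ((α - 1) / 2) = t ^ ((1 + α) / 2) := by
      nth_rewrite 1 [← Real.rpow_one t]
      rw [← Real.rpow_add ht, show (1:ℝ) + (α - 1) / 2 = (1 + α) / 2 by ring]
    have hA2' : A ^ 2 * (1 + α) = 2 / Λ := by rw [hA2]; field_simp
    linear_combination (t ^ ((1 + α) / 2) * t ^ ((α - 1) / 2)) * hA2' + (2 / Λ) * hpr
      - (A * c * (1 + α) / Λ) * hxr
  -- lower comparison on [0, X₁] : g² ≤ y² hence g ≤ -y
  have hlow : ∀ s ∈ Icc (0:ℝ) X₁, (A * s ^ ((1 + α) / 2) - c / Λ * s) ^ 2 ≤ y s ^ 2 := by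
    have hcomp := comp_aux (b := X₁)
      (u₁ := fun t => (A * t ^ ((1 + α) / 2) - c / Λ * t) ^ 2) (u₂ := fun t => y t ^ 2)
      (((continuousOn_const.mul (continuousOn_id.rpow_const fun t _ => Or.inr (by positivity))).sub
        (continuousOn_const.mul continuousOn_id)).pow 2)
      ((hcont.mono Icc_subset_Ici_self).pow 2)
      (fun t ht => ((hgD t ht.1).differentiableAt).pow 2)
      (fun t ht => (hdiff t ht.1).pow 2)
      (by simp [hy0, Real.zero_rpow (by positivity : ((1:ℝ) + α) / 2 ≠ 0)])
      ?_
    · exact hcomp.1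
    · intro t ht hle
      have hgt := hgpos t ht.1 ht.2
      have hyt := hneg t ht.1
      have hvy : -y t ≤ A * t ^ ((1 + α) / 2) - c / Λ * t := by nlinarith
      have hGD : HasDerivAt (fun t => (A * t ^ ((1 + α) / 2) - c / Λ * t) ^ 2)
          (2 * (A * t ^ ((1 + α) / 2) - c / Λ * t) *
            (A * ((1 + α) / 2) * t ^ ((α - 1) / 2) - c / Λ)) t := by
        have := (hgD t ht.1).pow 2
        refine this.congr_deriv ?_
        ring
      rw [hGD.deriv, (hwD t ht.1).deriv, hgid t ht.1]
      have hte : 0 < t ^ ((1 + α) / 2) := Real.rpow_pos_of_pos ht.1 _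
      have h2Λ : 0 < 2 / Λ := by positivity
      have hmono : 2 / Λ * (t ^ α - c * (A * t ^ ((1 + α) / 2) - c / Λ * t))
          ≤ 2 / Λ * (c * y t + t ^ α) := by
        apply (mul_le_mul_iff_right₀ h2Λ).2
        nlinarith [mul_le_mul_of_nonneg_left hvy hc.le]
      have hterm : 0 < 2 * c / Λ * ((1 + α) / 2) * (A * t ^ ((1 + α) / 2)) := by positivity
      linarith
  -- pointwise lower bound for -y in terms of g
  have hglb : ∀ s : ℝ, 0 < s → s < X₁ → A * s ^ ((1 + α) / 2) - c / Λ * s ≤ -y s := by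
    intro s hs hsX
    have h := hlow s ⟨hs.le, hsX.le⟩
    have hgt := hgpos s hs hsX
    have hyt := hneg s hs
    nlinarith
  -- measurability
  have hmeas : ∀ S : Set ℝ, MeasurableSet S → S ⊆ Ioi 0 →
      AEStronglyMeasurable (fun s => 1 / (-y s)) (volume.restrict S) := by
    intro S hS hsub
    refine ContinuousOn.aestronglyMeasurable ?_ hS
    refine ContinuousOn.div continuousOn_const ((hcont.mono ?_).neg) ?_
    · exact fun s hs => mem_Ici.2 (le_of_lt (hsub hs))
    · exact fun s hs => (neg_pos.2 (hneg s (hsub hs))).ne'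
  -- integrability of the power comparison function
  have hrpowInt : ∀ m : ℝ, 0 < m → IntegrableOn (fun s : ℝ => s ^ (-((1 + α) / 2))) (Ioo 0 m) := by
    intro m hm
    have h := intervalIntegral.intervalIntegrable_rpow' (a := 0) (b := m) (r := -((1 + α) / 2)) (by linarith)
    exact ((intervalIntegrable_iff_integrableOn_Ioc_of_le hm.le).1 h).mono_set Ioo_subset_Ioc_self
  -- integrability of 1/(-y)
  have hInt : ∀ m : ℝ, 0 < m → m < X₁ → IntegrableOn (fun s => 1 / (-y s)) (Ioo 0 m) := by
    intro m hm hmX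
    have hbrm := hbr m hm.le hmX
    set κ := A - c / Λ * m ^ ((1 - α) / 2) with hκ
    have hκ0 : 0 < κ := by
      rw [hκ, sub_pos, div_mul_eq_mul_div, div_lt_iff₀ hΛ]; linarith
    have hbound : ∀ s ∈ Ioo (0:ℝ) m, κ * s ^ ((1 + α) / 2) ≤ -y s := by
      intro s hs
      have h1 := hglb s hs.1 (hs.2.trans hmX)
      have hse : 0 < s ^ ((1 + α) / 2) := Real.rpow_pos_of_pos hs.1 _
      have hmono : s ^ ((1 - α) / 2) ≤ m ^ ((1 - α) / 2) :=
        Real.rpow_le_rpow hs.1.le hs.2.le (by positivity)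
      have h2 : c / Λ * s = s ^ ((1 + α) / 2) * (c / Λ * s ^ ((1 - α) / 2)) := by
        nth_rewrite 1 [hsplit s hs.1]; ring
      have h3 : κ * s ^ ((1 + α) / 2) ≤ A * s ^ ((1 + α) / 2) - c / Λ * s := by
        rw [h2, hκ]
        have : c / Λ * s ^ ((1 - α) / 2) ≤ c / Λ * m ^ ((1 - α) / 2) :=
          mul_le_mul_of_nonneg_left hmono (by positivity)
        nlinarith
      linarith
    apply Integrable.mono' (((hrpowInt m hm).const_mul κ⁻¹))
      (hmeas _ measurableSet_Ioo (fun s hs => hs.1))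
    rw [ae_restrict_iff' measurableSet_Ioo]
    refine ae_of_all _ fun s hs => ?_
    have hv0 : 0 < -y s := neg_pos.2 (hneg s hs.1)
    have hse : 0 < s ^ ((1 + α) / 2) := Real.rpow_pos_of_pos hs.1 _
    have hb := hbound s hs
    rw [Real.norm_eq_abs, abs_of_pos (div_pos one_pos hv0)]
    calc 1 / (-y s) ≤ 1 / (κ * s ^ ((1 + α) / 2)) :=
          one_div_le_one_div_of_le (by positivity) hb
      _ = κ⁻¹ * s ^ (-((1 + α) / 2)) := by
          rw [Real.rpow_neg hs.1.le, one_div, mul_inv]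
  constructor
  · -- first conjunct
    intro x hx
    rcases lt_or_ge x X₁ with h | h
    · exact hInt x hx h
    · have hm : (0:ℝ) < X₁ / 2 := by linarith
      have h1 : IntegrableOn (fun s => 1 / (-y s)) (Ioo 0 (X₁ / 2)) := hInt _ hm (by linarith)
      have h2 : IntegrableOn (fun s => 1 / (-y s)) (Icc (X₁ / 2) x) := by
        apply ContinuousOn.integrableOn_Icc
        refine ContinuousOn.div continuousOn_const ((hcont.mono ?_).neg) ?_
        · exact fun s hs => mem_Ici.2 (le_of_lt (lt_of_lt_of_le hm hs.1))
        · exact fun s hs => (neg_pos.2 (hneg s (lt_of_lt_of_le hm hs.1))).ne'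
      apply (h1.union h2).mono_set
      intro s hs
      rcases lt_or_ge s (X₁ / 2) with h' | h'
      · exact Or.inl ⟨hs.1, h'⟩
      · exact Or.inr ⟨h', hs.2.le⟩
  · -- second conjunct
    intro x hx0 hxX
    have hxe : 0 < x ^ ((1 - α) / 2) := Real.rpow_pos_of_pos hx0 _
    have hsq1 : Real.sqrt ((1 + α) / (2 * Λ)) = 1 / (A * Λ) := by
      rw [show (1 + α) / (2 * Λ) = (1 / (A * Λ)) ^ 2 by
        rw [div_pow, mul_pow, hA2]; field_simp]
      exact Real.sqrt_sq (by positivity)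
    have hsq2 : Real.sqrt (2 * (1 + α) * Λ) = 2 / A := by
      rw [show 2 * (1 + α) * Λ = (2 / A) ^ 2 by rw [div_pow, hA2]; field_simp]
      exact Real.sqrt_sq (by positivity)
    set u := c * Real.sqrt ((1 + α) / (2 * Λ)) * x ^ ((1 - α) / 2) with hu
    have hu0 : 0 < u := by
      rw [hu, hsq1]; positivity
    have hu1 : u < 1 := by
      have heq : u = c * x ^ ((1 - α) / 2) / (A * Λ) := by rw [hu, hsq1]; ring
      rw [heq, div_lt_one (by positivity)]
      exact hbr x hx0.le hxX
    have hAu : A * u = c / Λ * x ^ ((1 - α) / 2) := by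
      rw [hu, hsq1]; field_simp
    -- pointwise bounds
    have hlbpt : ∀ s ∈ Ioo (0:ℝ) x, 1 / A * s ^ (-((1 + α) / 2)) < 1 / (-y s) := by
      intro s hs
      have hv0 : 0 < -y s := neg_pos.2 (hneg s hs.1)
      have hse : 0 < s ^ ((1 + α) / 2) := Real.rpow_pos_of_pos hs.1 _
      have h := hv_ub s hs.1
      calc 1 / A * s ^ (-((1 + α) / 2)) = 1 / (A * s ^ ((1 + α) / 2)) := by
            rw [Real.rpow_neg hs.1.le]; field_simp
        _ < 1 / (-y s) := one_div_lt_one_div_of_lt hv0 h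
    have hubpt : ∀ s ∈ Ioo (0:ℝ) x, 1 / (-y s) < 1 / A * (1 - u)⁻¹ * s ^ (-((1 + α) / 2)) := by
      intro s hs
      have hv0 : 0 < -y s := neg_pos.2 (hneg s hs.1)
      have hse : 0 < s ^ ((1 + α) / 2) := Real.rpow_pos_of_pos hs.1 _
      have hsX : s < X₁ := hs.2.trans hxX
      have hg := hglb s hs.1 hsX
      have hsm : s ^ ((1 - α) / 2) < x ^ ((1 - α) / 2) :=
        Real.rpow_lt_rpow hs.1.le hs.2 (by positivity)
      have h2 : c / Λ * s = s ^ ((1 + α) / 2) * (c / Λ * s ^ ((1 - α) / 2)) := by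
        nth_rewrite 1 [hsplit s hs.1]; ring
      have hgl : A * (1 - u) * s ^ ((1 + α) / 2) < A * s ^ ((1 + α) / 2) - c / Λ * s := by
        rw [h2]
        have h3 : c / Λ * s ^ ((1 - α) / 2) < c / Λ * x ^ ((1 - α) / 2) :=
          mul_lt_mul_of_pos_left hsm (by positivity)
        rw [← hAu] at h3
        nlinarith
      have hvg : A * (1 - u) * s ^ ((1 + α) / 2) < -y s := lt_of_lt_of_le hgl hg
      have hpos : 0 < A * (1 - u) * s ^ ((1 + α) / 2) := by
        have : 0 < 1 - u := by linarith
        positivity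
      calc 1 / (-y s) < 1 / (A * (1 - u) * s ^ ((1 + α) / 2)) :=
            one_div_lt_one_div_of_lt hpos hvg
        _ = 1 / A * (1 - u)⁻¹ * s ^ (-((1 + α) / 2)) := by
            rw [Real.rpow_neg hs.1.le]
            have h1u : (1:ℝ) - u ≠ 0 := by linarith
            field_simp
    -- integral identities
    have hIoo : ∀ f : ℝ → ℝ, (∫ s in (0:ℝ)..x, f s) = ∫ s in Ioo 0 x, f s := fun f => by
      rw [intervalIntegral.integral_of_le hx0.le, integral_Ioc_eq_integral_Ioo]
    have hrval : (∫ s in Ioo (0:ℝ) x, s ^ (-((1 + α) / 2)))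
        = x ^ ((1 - α) / 2) / ((1 - α) / 2) := by
      rw [← hIoo fun s => s ^ (-((1 + α) / 2))]
      rw [integral_rpow (Or.inl (by linarith))]
      rw [show -((1 + α) / 2) + 1 = (1 - α) / 2 by ring]
      rw [Real.zero_rpow (by positivity : ((1:ℝ) - α) / 2 ≠ 0)]
      ring
    have hI1 : IntegrableOn (fun s => 1 / (-y s)) (Ioo 0 x) := hInt x hx0 hxX
    have hI2 : IntegrableOn (fun s : ℝ => 1 / A * s ^ (-((1 + α) / 2))) (Ioo 0 x) :=
      (hrpowInt x hx0).const_mul _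
    have hI3 : IntegrableOn (fun s : ℝ => 1 / A * (1 - u)⁻¹ * s ^ (-((1 + α) / 2))) (Ioo 0 x) :=
      (hrpowInt x hx0).const_mul _
    -- strict integral comparison
    have hstrict : ∀ f g : ℝ → ℝ, IntegrableOn f (Ioo 0 x) → IntegrableOn g (Ioo 0 x) →
        (∀ s ∈ Ioo (0:ℝ) x, f s < g s) →
        (∫ s in Ioo (0:ℝ) x, f s) < ∫ s in Ioo (0:ℝ) x, g s := by
      intro f g hf hg hlt
      have hpos : 0 < ∫ s in Ioo (0:ℝ) x, (g s - f s) := by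
        have hgfi : IntegrableOn (fun s => g s - f s) (Ioo (0:ℝ) x) := hg.sub hf
        rw [setIntegral_pos_iff_support_of_nonneg_ae ?_ hgfi]
        · refine lt_of_lt_of_le (b := volume (Ioo (0:ℝ) x)) ?_ (measure_mono ?_)
          · rw [Real.volume_Ioo]
            simpa using hx0
          · intro s hs
            exact Set.mem_inter (by
              simp only [Function.mem_support]
              exact (sub_pos.2 (hlt s hs)).ne') hs
        · filter_upwards [ae_restrict_mem measurableSet_Ioo] with s hs
          simpa using (sub_pos.2 (hlt s hs)).le
      rw [integral_sub hg hf] at hpos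
      linarith
    have hlowint := hstrict _ _ hI2 hI1 hlbpt
    have hubint := hstrict _ _ hI1 hI3 hubpt
    rw [integral_const_mul, hrval] at hlowint
    rw [integral_const_mul, hrval] at hubint
    rw [hsq2, hIoo fun s => 1 / (-y s)]
    constructor
    · calc 2 / A / (1 - α) * x ^ ((1 - α) / 2)
          = 1 / A * (x ^ ((1 - α) / 2) / ((1 - α) / 2)) := by field_simp
        _ < _ := hlowint
    · have h1u : (0:ℝ) < 1 - u := by linarith
      calc (∫ s in Ioo (0:ℝ) x, 1 / (-y s))
          < 1 / A * (1 - u)⁻¹ * (x ^ ((1 - α) / 2) / ((1 - α) / 2)) := hubint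
        _ = 2 / A / (1 - α) * x ^ ((1 - α) / 2) * (1 - u)⁻¹ := by field_simp
end
end

section
/- Let α ∈ (0,1), Λ > 0 and θ ∈ (0,1). Suppose c > 0, 0 < R < ∞, and u, v : ℝ → ℝ are continuously differentiable on [0,R] and twice differentiable on [0,R), satisfying u''(ξ) − c·u'(ξ) = −v(ξ)^α and Λ·v''(ξ) − c·v'(ξ) = v(ξ)^α for all ξ ∈ (0,R), with boundary conditions u(0) = θ, u'(0) = c·θ, 0 < v(0) < 1, v'(0) = −(c/Λ)·(1−v(0)), and free boundary conditions v(R) = v'(R) = 0, u(R) = 1, u'(R) = 0. Then the following two integral identities hold: θ + Λ·v(0) = 1 − c·(1−Λ)·∫₀^R e^{−cs}·v(s) ds, and θ + v(0) = 1 − (1−Λ)·∫₀^R e^{−cs}·v'(s) ds. -/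
open Real Set MeasureTheory Filter

noncomputable section

/-- The integral identities satisfied by a solution `(c, R, u, v)` of the one-phase
free boundary problem for traveling combustion waves:
`θ + Λ v(0) = 1 − c(1−Λ)∫₀^R e^{−cs} v(s) ds` and
`θ + v(0) = 1 − (1−Λ)∫₀^R e^{−cs} v'(s) ds`. -/
theorem fbp_integral_identities (α Λ θ : ℝ) (hα : α ∈ Set.Ioo (0:ℝ) 1)
    (hΛ : 0 < Λ) (hθ : θ ∈ Set.Ioo (0:ℝ) 1) (c R : ℝ) (u v : ℝ → ℝ)
    (hc : 0 < c) (hR : 0 < R)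
    (hu1 : ContDiffOn ℝ 1 u (Set.Icc 0 R))
    (hu2 : ∀ ξ ∈ Set.Ico 0 R, DifferentiableAt ℝ (deriv u) ξ)
    (hv1 : ContDiffOn ℝ 1 v (Set.Icc 0 R))
    (hv2 : ∀ ξ ∈ Set.Ico 0 R, DifferentiableAt ℝ (deriv v) ξ)
    (hode_u : ∀ ξ ∈ Set.Ioo 0 R,
      deriv (deriv u) ξ - c * deriv u ξ = -(v ξ ^ α))
    (hode_v : ∀ ξ ∈ Set.Ioo 0 R,
      Λ * deriv (deriv v) ξ - c * deriv v ξ = v ξ ^ α)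
    (hu0 : u 0 = θ) (hu0' : deriv u 0 = c * θ)
    (hv0 : 0 < v 0) (hv0' : v 0 < 1)
    (hv0d : deriv v 0 = -(c / Λ) * (1 - v 0))
    (hvR : v R = 0) (hvR' : deriv v R = 0)
    (huR : u R = 1) (huR' : deriv u R = 0) :
    θ + Λ * v 0 = 1 - c * (1 - Λ) * ∫ s in (0:ℝ)..R, Real.exp (-(c * s)) * v s ∧
      θ + v 0 = 1 - (1 - Λ) * ∫ s in (0:ℝ)..R, Real.exp (-(c * s)) * deriv v s := by
  have hΛ0 : Λ ≠ 0 := ne_of_gt hΛ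
  have hucont : ContinuousOn u (Icc 0 R) := hu1.continuousOn
  have hvcont : ContinuousOn v (Icc 0 R) := hv1.continuousOn
  have hdu : ContinuousOn (deriv u) (Ico 0 R) :=
    fun x hx => (hu2 x hx).continuousAt.continuousWithinAt
  have hdv : ContinuousOn (deriv v) (Ico 0 R) :=
    fun x hx => (hv2 x hx).continuousAt.continuousWithinAt
  have hudiff : ∀ ξ ∈ Ioo (0:ℝ) R, HasDerivAt u (deriv u ξ) ξ := by
    intro ξ hξ
    exact ((hu1.differentiableOn one_ne_zero ξ (Ioo_subset_Icc_self hξ)).differentiableAt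
      (Icc_mem_nhds hξ.1 hξ.2)).hasDerivAt
  have hvdiff : ∀ ξ ∈ Ioo (0:ℝ) R, HasDerivAt v (deriv v ξ) ξ := by
    intro ξ hξ
    exact ((hv1.differentiableOn one_ne_zero ξ (Ioo_subset_Icc_self hξ)).differentiableAt
      (Icc_mem_nhds hξ.1 hξ.2)).hasDerivAt
  have hexpc : Continuous fun s : ℝ => Real.exp (-(c * s)) :=
    Real.continuous_exp.comp (continuous_const.mul continuous_id).neg
  have hexpc2 : Continuous fun s : ℝ => Real.exp (c * s) :=
    Real.continuous_exp.comp (continuous_const.mul continuous_id)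
  have hEneg : ∀ s : ℝ, HasDerivAt (fun t : ℝ => Real.exp (-(c * t)))
      (-c * Real.exp (-(c * s))) s := by
    intro s
    have h1 : HasDerivAt (fun t : ℝ => -(c * t)) (-c) s := by
      have h := ((hasDerivAt_id s).const_mul c).neg
      simp only [mul_one] at h
      exact h
    simpa [mul_comm] using h1.exp
  have hEpos : ∀ s : ℝ, HasDerivAt (fun t : ℝ => Real.exp (c * t))
      (c * Real.exp (c * s)) s := by
    intro s
    have h1 : HasDerivAt (fun t : ℝ => c * t) c s := by
      simpa using (hasDerivAt_id s).const_mul c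
    simpa [mul_comm] using h1.exp
  -- integrability of e^{-cs} v'(s) on [0,R]
  have hfc : ContinuousOn (fun s => Real.exp (-(c * s)) * derivWithin v (Icc 0 R) s)
      (Icc 0 R) :=
    hexpc.continuousOn.mul (hv1.continuousOn_derivWithin (uniqueDiffOn_Icc hR) le_rfl)
  have haeq : (fun s => Real.exp (-(c * s)) * derivWithin v (Icc 0 R) s)
      =ᵐ[volume.restrict (Icc 0 R)] fun s => Real.exp (-(c * s)) * deriv v s := by
    rw [← Measure.restrict_congr_set Ioo_ae_eq_Icc]
    filter_upwards [ae_restrict_mem measurableSet_Ioo] with s hs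
    rw [derivWithin_of_mem_nhds (Icc_mem_nhds hs.1 hs.2)]
  have hfint : IntegrableOn (fun s => Real.exp (-(c * s)) * deriv v s) (Icc 0 R) volume :=
    (hfc.integrableOn_Icc).congr haeq
  have hfii : IntervalIntegrable (fun s => Real.exp (-(c * s)) * deriv v s) volume 0 R := by
    rw [intervalIntegrable_iff_integrableOn_Icc_of_le hR.le]
    exact hfint
  have hIcont : ContinuousOn (fun x => ∫ s in (0:ℝ)..x, Real.exp (-(c * s)) * deriv v s)
      (Icc 0 R) := by
    have := intervalIntegral.continuousOn_primitive_interval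
      (f := fun s => Real.exp (-(c * s)) * deriv v s) (a := (0:ℝ)) (b := R)
      (by rwa [Set.uIcc_of_le hR.le])
    rwa [Set.uIcc_of_le hR.le] at this
  -- the key first-integral identity on (0, R)
  have hstar : ∀ x ∈ Ioo (0:ℝ) R,
      Real.exp (-(c * x)) * (deriv u x + Λ * deriv v x)
        = c * (θ + v 0 - 1) + c * (1 - Λ) * ∫ s in (0:ℝ)..x, Real.exp (-(c * s)) * deriv v s := by
    intro x hx
    have hsub : Icc (0:ℝ) x ⊆ Ico 0 R := fun t ht => ⟨ht.1, lt_of_le_of_lt ht.2 hx.2⟩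
    have hFcont : ContinuousOn
        (fun s => Real.exp (-(c * s)) * (deriv u s + Λ * deriv v s)) (Icc 0 x) :=
      hexpc.continuousOn.mul ((hdu.mono hsub).add (continuousOn_const.mul (hdv.mono hsub)))
    have hFderiv : ∀ s ∈ Ioo (0:ℝ) x,
        HasDerivAt (fun t => Real.exp (-(c * t)) * (deriv u t + Λ * deriv v t))
          (c * (1 - Λ) * (Real.exp (-(c * s)) * deriv v s)) s := by
      intro s hs
      have hsR : s ∈ Ioo (0:ℝ) R := ⟨hs.1, hs.2.trans hx.2⟩
      have hsico : s ∈ Ico (0:ℝ) R := ⟨hsR.1.le, hsR.2⟩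
      have h1 : HasDerivAt (fun t => deriv u t + Λ * deriv v t)
          (deriv (deriv u) s + Λ * deriv (deriv v) s) s :=
        ((hu2 s hsico).hasDerivAt).add (((hv2 s hsico).hasDerivAt).const_mul Λ)
      have h2 := (hEneg s).mul h1
      refine h2.congr_deriv ?_; symm
      have e1 := hode_u s hsR
      have e2 := hode_v s hsR
      linear_combination (-(Real.exp (-(c * s)))) * e1 + (-(Real.exp (-(c * s)))) * e2
    have hFint : IntervalIntegrable
        (fun s => c * (1 - Λ) * (Real.exp (-(c * s)) * deriv v s)) volume 0 x := by
      apply ContinuousOn.intervalIntegrable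
      rw [Set.uIcc_of_le hx.1.le]
      exact continuousOn_const.mul (hexpc.continuousOn.mul (hdv.mono hsub))
    have hkey := intervalIntegral.integral_eq_sub_of_hasDerivAt_of_le hx.1.le
      hFcont hFderiv hFint
    rw [intervalIntegral.integral_const_mul] at hkey
    have hF0 : Real.exp (-(c * (0:ℝ))) * (deriv u 0 + Λ * deriv v 0)
        = c * (θ + v 0 - 1) := by
      rw [hu0', hv0d]
      simp only [mul_zero, neg_zero, Real.exp_zero, one_mul]
      field_simp
      ring
    linear_combination hF0 - hkey
  -- derivative of the primitive
  have hIderiv : ∀ ξ ∈ Ioo (0:ℝ) R,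
      HasDerivAt (fun x => ∫ s in (0:ℝ)..x, Real.exp (-(c * s)) * deriv v s)
        (Real.exp (-(c * ξ)) * deriv v ξ) ξ := by
    intro ξ hξ
    have hloc : ContinuousOn (fun s => Real.exp (-(c * s)) * deriv v s) (Ioo 0 R) :=
      hexpc.continuousOn.mul (hdv.mono Ioo_subset_Ico_self)
    apply intervalIntegral.integral_hasDerivAt_right
    · exact hfii.mono_set (by
        rw [Set.uIcc_of_le hξ.1.le, Set.uIcc_of_le hR.le]
        exact Icc_subset_Icc le_rfl hξ.2.le)
    · exact hloc.stronglyMeasurableAtFilter isOpen_Ioo ξ hξ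
    · exact hloc.continuousAt (isOpen_Ioo.mem_nhds hξ)
  -- the function Ψ with zero derivative on (0,R)
  have hΨcont : ContinuousOn (fun ξ => u ξ + Λ * v ξ - (θ + v 0 - 1) * Real.exp (c * ξ)
      - (1 - Λ) * (Real.exp (c * ξ) * ∫ s in (0:ℝ)..ξ, Real.exp (-(c * s)) * deriv v s)
      + (1 - Λ) * v ξ) (Icc 0 R) := by
    exact (((hucont.add (continuousOn_const.mul hvcont)).sub
      (continuousOn_const.mul hexpc2.continuousOn)).sub
      (continuousOn_const.mul (hexpc2.continuousOn.mul hIcont))).add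
      (continuousOn_const.mul hvcont)
  have hΨderiv : ∀ ξ ∈ Ioo (0:ℝ) R,
      HasDerivAt (fun ξ => u ξ + Λ * v ξ - (θ + v 0 - 1) * Real.exp (c * ξ)
        - (1 - Λ) * (Real.exp (c * ξ) * ∫ s in (0:ℝ)..ξ, Real.exp (-(c * s)) * deriv v s)
        + (1 - Λ) * v ξ) ((0:ℝ)) ξ := by
    intro ξ hξ
    have h1 := (hudiff ξ hξ).add ((hvdiff ξ hξ).const_mul Λ)
    have h2 := (hEpos ξ).const_mul (θ + v 0 - 1)
    have h3 := ((hEpos ξ).mul (hIderiv ξ hξ)).const_mul (1 - Λ)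
    have h4 := (hvdiff ξ hξ).const_mul (1 - Λ)
    have h5 := ((h1.sub h2).sub h3).add h4
    refine h5.congr_deriv ?_; symm
    have hs := hstar ξ hξ
    have hmul : Real.exp (c * ξ) * Real.exp (-(c * ξ)) = 1 := by
      rw [← Real.exp_add]; simp
    linear_combination (-(Real.exp (c * ξ))) * hs
      + (deriv u ξ + deriv v ξ) * hmul
  have hΨ := intervalIntegral.integral_eq_sub_of_hasDerivAt_of_le hR.le
    hΨcont hΨderiv (intervalIntegrable_const)
  simp only [intervalIntegral.integral_const, smul_eq_mul, mul_zero, neg_zero,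
    Real.exp_zero, one_mul, intervalIntegral.integral_same, hu0, hvR, huR] at hΨ
  -- hΨ : 0 = Ψ R - Ψ 0
  have hkey2 : (1 - Λ) * (∫ s in (0:ℝ)..R, Real.exp (-(c * s)) * deriv v s)
      = 1 - θ - v 0 := by
    have hX : (0:ℝ) < Real.exp (c * R) := Real.exp_pos _
    have h2 : Real.exp (c * R) * ((θ + v 0 - 1)
        + (1 - Λ) * (∫ s in (0:ℝ)..R, Real.exp (-(c * s)) * deriv v s)) = 0 := by
      linear_combination hΨ
    have h3 := (mul_eq_zero.mp h2).resolve_left (ne_of_gt hX)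
    linarith
  -- integration by parts : ∫ e^{-cs} v' = e^{-cR} v(R) - v(0) + c ∫ e^{-cs} v
  have hvprod : ∀ ξ ∈ Ioo (0:ℝ) R, HasDerivAt (fun t => Real.exp (-(c * t)) * v t)
      (Real.exp (-(c * ξ)) * deriv v ξ - c * (Real.exp (-(c * ξ)) * v ξ)) ξ := by
    intro ξ hξ
    have h := (hEneg ξ).mul (hvdiff ξ hξ)
    refine h.congr_deriv ?_; symm
    ring
  have hWint : IntervalIntegrable (fun s => Real.exp (-(c * s)) * v s) volume 0 R := by
    apply ContinuousOn.intervalIntegrable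
    rw [Set.uIcc_of_le hR.le]
    exact hexpc.continuousOn.mul hvcont
  have hφint : IntervalIntegrable
      (fun s => Real.exp (-(c * s)) * deriv v s - c * (Real.exp (-(c * s)) * v s))
      volume 0 R := hfii.sub (hWint.const_mul c)
  have hibp := intervalIntegral.integral_eq_sub_of_hasDerivAt_of_le hR.le
    (hexpc.continuousOn.mul hvcont) hvprod hφint
  rw [intervalIntegral.integral_sub hfii (hWint.const_mul c),
    intervalIntegral.integral_const_mul] at hibp
  simp only [Pi.mul_apply, hvR, mul_zero, neg_zero, Real.exp_zero, one_mul, zero_sub] at hibp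
  -- hibp : I R - c * W = - v 0
  constructor
  · linear_combination hkey2 - (1 - Λ) * hibp
  · linear_combination hkey2
end
end

section
/- Let α ∈ (0,1) and θ ∈ (0,1) be fixed. Then the equation θ = 1 − c·∫₀^{c/(1−α)} e^{−cs}·(1 − s·(1−α)/c)^{1/(1−α)} ds has exactly one solution c in (0, ∞). -/
open Real Set MeasureTheory Filter

noncomputable section

private lemma cont_pow {q : ℝ} (hq : 0 < q) : Continuous fun t : ℝ => (1 - t) ^ q := by
  rw [continuous_iff_continuousAt]
  intro t
  exact (Real.continuousAt_rpow_const _ _ (Or.inr hq.le)).comp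
    ((continuous_const.sub continuous_id).continuousAt)

private lemma cont_integrand {q : ℝ} (hq : 0 < q) (l : ℝ) :
    Continuous fun t : ℝ => Real.exp (-(l * t)) * (1 - t) ^ q :=
  (Real.continuous_exp.comp (by fun_prop)).mul (cont_pow hq)

private lemma hasDeriv_main (l p : ℝ) (hp : 1 ≤ p) (t : ℝ) :
    HasDerivAt (fun t => -(Real.exp (-(l * t)) * (1 - t) ^ p))
      (l * (Real.exp (-(l * t)) * (1 - t) ^ p)
        + p * (Real.exp (-(l * t)) * (1 - t) ^ (p - 1))) t := by
  have h1 : HasDerivAt (fun t : ℝ => 1 - t) (-1) t := by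
    simpa using (hasDerivAt_id t).const_sub 1
  have h2 : HasDerivAt (fun t : ℝ => (1 - t) ^ p) (p * (1 - t) ^ (p - 1) * -1) t :=
    (Real.hasDerivAt_rpow_const (Or.inr hp)).comp t h1
  have h4 : HasDerivAt (fun t : ℝ => -(l * t)) (-l) t := by
    simpa using ((hasDerivAt_id t).const_mul l).fun_neg
  have h3 : HasDerivAt (fun t : ℝ => Real.exp (-(l * t))) (Real.exp (-(l * t)) * -l) t :=
    (Real.hasDerivAt_exp _).comp t h4
  refine (h3.fun_mul h2).fun_neg.congr_deriv ?_
  ring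

private lemma ibp_key {p : ℝ} (hp : 1 < p) (l : ℝ) :
    l * (∫ t in (0:ℝ)..1, Real.exp (-(l * t)) * (1 - t) ^ p)
      + p * (∫ t in (0:ℝ)..1, Real.exp (-(l * t)) * (1 - t) ^ (p - 1)) = 1 := by
  have hq : 0 < p - 1 := by linarith
  have hp0 : 0 < p := by linarith
  have key : (∫ t in (0:ℝ)..1,
      (l * (Real.exp (-(l * t)) * (1 - t) ^ p)
        + p * (Real.exp (-(l * t)) * (1 - t) ^ (p - 1)))) = 1 := by
    rw [intervalIntegral.integral_eq_sub_of_hasDerivAt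
      (fun t _ => hasDeriv_main l p hp.le t)
      (((continuous_const.mul (cont_integrand hp0 l)).add
        (continuous_const.mul (cont_integrand hq l))).intervalIntegrable 0 1)]
    norm_num [Real.zero_rpow hp0.ne']
  rw [← intervalIntegral.integral_const_mul, ← intervalIntegral.integral_const_mul,
    ← intervalIntegral.integral_add
      ((continuous_const.fun_mul (cont_integrand hp0 l)).intervalIntegrable 0 1)
      ((continuous_const.fun_mul (cont_integrand hq l)).intervalIntegrable 0 1)]
  exact key

private lemma K_zero {q : ℝ} (hq : 0 < q) :
    (∫ t in (0:ℝ)..1, Real.exp (-((0:ℝ) * t)) * (1 - t) ^ q) = 1 / (q + 1) := by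
  have h1 : ∀ t : ℝ, Real.exp (-((0:ℝ) * t)) * (1 - t) ^ q = (1 - t) ^ q := by
    intro t; simp
  simp only [h1]
  have hq1 : q + 1 ≠ 0 := by positivity
  have hd : ∀ t : ℝ,
      HasDerivAt (fun t : ℝ => -((1 - t) ^ (q + 1) / (q + 1))) ((1 - t) ^ q) t := by
    intro t
    have h1' : HasDerivAt (fun t : ℝ => 1 - t) (-1) t := by
      simpa using (hasDerivAt_id t).const_sub 1
    have h2 : HasDerivAt (fun t : ℝ => (1 - t) ^ (q + 1))
        ((q + 1) * (1 - t) ^ (q + 1 - 1) * -1) t :=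
      (Real.hasDerivAt_rpow_const (Or.inr (by linarith))).comp t h1'
    have h3 := (h2.div_const (q + 1)).fun_neg
    refine h3.congr_deriv ?_
    rw [show q + 1 - 1 = q by ring]
    field_simp
  rw [intervalIntegral.integral_eq_sub_of_hasDerivAt (fun t _ => hd t)
    ((cont_pow hq).intervalIntegrable 0 1)]
  norm_num [Real.zero_rpow hq1]

private lemma K_anti {q : ℝ} (hq : 0 < q) {l1 l2 : ℝ} (h1 : 0 ≤ l1) (h12 : l1 < l2) :
    (∫ t in (0:ℝ)..1, Real.exp (-(l2 * t)) * (1 - t) ^ q)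
      < ∫ t in (0:ℝ)..1, Real.exp (-(l1 * t)) * (1 - t) ^ q := by
  apply intervalIntegral.integral_lt_integral_of_continuousOn_of_le_of_exists_lt one_pos
    (cont_integrand hq l2).continuousOn (cont_integrand hq l1).continuousOn
  · intro t ht
    have hexp : Real.exp (-(l2 * t)) ≤ Real.exp (-(l1 * t)) :=
      Real.exp_le_exp.2 (by nlinarith [ht.1])
    exact mul_le_mul_of_nonneg_right hexp (Real.rpow_nonneg (by linarith [ht.2]) q)
  · refine ⟨1/2, Set.mem_Icc.2 ⟨by norm_num, by norm_num⟩, ?_⟩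
    have hexp : Real.exp (-(l2 * (1/2))) < Real.exp (-(l1 * (1/2))) :=
      Real.exp_lt_exp.2 (by nlinarith)
    have hpos : (0:ℝ) < (1 - 1/2) ^ q := Real.rpow_pos_of_pos (by norm_num) q
    exact mul_lt_mul_of_pos_right hexp hpos

private lemma K_le {q : ℝ} (hq : 0 < q) {l : ℝ} (hl : 0 < l) :
    (∫ t in (0:ℝ)..1, Real.exp (-(l * t)) * (1 - t) ^ q) ≤ 1 / l := by
  have hmono : (∫ t in (0:ℝ)..1, Real.exp (-(l * t)) * (1 - t) ^ q)
      ≤ ∫ t in (0:ℝ)..1, Real.exp (-(l * t)) := by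
    apply intervalIntegral.integral_mono_on (by norm_num)
      ((cont_integrand hq l).intervalIntegrable 0 1)
      ((Real.continuous_exp.comp (by fun_prop : Continuous fun t : ℝ => -(l * t))).intervalIntegrable 0 1)
    intro t ht
    rw [Set.mem_Icc] at ht
    have hb : (1 - t) ^ q ≤ 1 := Real.rpow_le_one (by linarith) (by linarith) hq.le
    calc Real.exp (-(l * t)) * (1 - t) ^ q ≤ Real.exp (-(l * t)) * 1 :=
          mul_le_mul_of_nonneg_left hb (Real.exp_pos _).le
      _ = Real.exp (-(l * t)) := mul_one _
  have hcalc : (∫ t in (0:ℝ)..1, Real.exp (-(l * t))) = 1 / l - Real.exp (-l) / l := by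
    have hd : ∀ t : ℝ,
        HasDerivAt (fun t : ℝ => -(Real.exp (-(l * t)) / l)) (Real.exp (-(l * t))) t := by
      intro t
      have h4 : HasDerivAt (fun t : ℝ => -(l * t)) (-l) t := by
        simpa using ((hasDerivAt_id t).const_mul l).fun_neg
      have h3 : HasDerivAt (fun t : ℝ => Real.exp (-(l * t))) (Real.exp (-(l * t)) * -l) t :=
        (Real.hasDerivAt_exp _).comp t h4
      have h5 := (h3.div_const l).fun_neg
      refine h5.congr_deriv ?_
      field_simp
    rw [intervalIntegral.integral_eq_sub_of_hasDerivAt (fun t _ => hd t)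
      ((Real.continuous_exp.comp (by fun_prop : Continuous fun t : ℝ => -(l * t))).intervalIntegrable 0 1)]
    simp only [mul_one, mul_zero, neg_zero, Real.exp_zero]
    ring
  have hnn : 0 ≤ Real.exp (-l) / l := by positivity
  linarith

private lemma K_cont {q : ℝ} (hq : 0 < q) :
    Continuous fun l : ℝ => ∫ t in (0:ℝ)..1, Real.exp (-(l * t)) * (1 - t) ^ q := by
  apply intervalIntegral.continuous_parametric_intervalIntegral_of_continuous' (μ := volume)
  show Continuous fun z : ℝ × ℝ => Real.exp (-(z.1 * z.2)) * (1 - z.2) ^ q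
  exact (Real.continuous_exp.comp (by fun_prop)).mul ((cont_pow hq).comp continuous_snd)

/-- In the limit case `Λ = 0` (infinite Lewis number), the transcendental equation
`θ = 1 − c ∫₀^{c/(1−α)} e^{−cs} (1 − s(1−α)/c)^{1/(1−α)} ds` has exactly one
positive root `c`. -/
theorem unique_speed_infinite_Lewis (α θ : ℝ) (hα : α ∈ Set.Ioo (0:ℝ) 1)
    (hθ : θ ∈ Set.Ioo (0:ℝ) 1) :
    ∃! c : ℝ, 0 < c ∧
      θ = 1 - c * ∫ s in (0:ℝ)..(c / (1 - α)),
            Real.exp (-(c * s)) * (1 - s * (1 - α) / c) ^ ((1:ℝ) / (1 - α)) := by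
  obtain ⟨hα0, hα1⟩ := hα
  obtain ⟨hθ0, hθ1⟩ := hθ
  have hβ : (0:ℝ) < 1 - α := by linarith
  set β : ℝ := 1 - α with hβdef
  have hβ1 : β < 1 := by rw [hβdef]; linarith
  have hβ0 : β ≠ 0 := ne_of_gt hβ
  set p : ℝ := (1:ℝ) / β with hpdef
  have hp1 : 1 < p := by rw [hpdef]; exact one_lt_one_div hβ hβ1
  have hq : 0 < p - 1 := by linarith
  have hppos : (0:ℝ) < p := by linarith
  set Φ : ℝ → ℝ := fun c =>
    p * ∫ t in (0:ℝ)..1, Real.exp (-(c ^ 2 / β * t)) * (1 - t) ^ (p - 1) with hΦdef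
  have main_eq : ∀ c : ℝ, 0 < c →
      1 - c * (∫ s in (0:ℝ)..(c / β),
        Real.exp (-(c * s)) * (1 - s * β / c) ^ p) = Φ c := by
    intro c hc
    have hc0 : c ≠ 0 := ne_of_gt hc
    have hk : c / β ≠ 0 := by positivity
    have hsub := intervalIntegral.integral_comp_mul_right (a := (0:ℝ)) (b := 1)
      (fun s => Real.exp (-(c * s)) * (1 - s * β / c) ^ p) hk
    rw [zero_mul, one_mul, smul_eq_mul] at hsub
    have heq : ∀ t : ℝ, Real.exp (-(c * (t * (c / β)))) * (1 - t * (c / β) * β / c) ^ p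
        = Real.exp (-(c ^ 2 / β * t)) * (1 - t) ^ p := by
      intro t
      rw [show c * (t * (c / β)) = c ^ 2 / β * t by ring,
        show t * (c / β) * β / c = t by field_simp]
    simp only [heq] at hsub
    have hJ : (∫ s in (0:ℝ)..(c / β), Real.exp (-(c * s)) * (1 - s * β / c) ^ p)
        = (c / β) * ∫ t in (0:ℝ)..1, Real.exp (-(c ^ 2 / β * t)) * (1 - t) ^ p := by
      rw [hsub, ← mul_assoc, mul_inv_cancel₀ hk, one_mul]
    rw [hJ, hΦdef]
    have hibp := ibp_key hp1 (c ^ 2 / β)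
    linear_combination -hibp
  have hcontΦ : Continuous Φ := by
    rw [hΦdef]
    exact continuous_const.mul
      ((K_cont hq).comp (by fun_prop : Continuous fun c : ℝ => c ^ 2 / β))
  have hanti : StrictAntiOn Φ (Set.Ici 0) := by
    intro c1 hc1 c2 hc2 hlt
    have hc1' : (0:ℝ) ≤ c1 := hc1
    have hsq : c1 ^ 2 < c2 ^ 2 := by nlinarith
    have hll : c1 ^ 2 / β < c2 ^ 2 / β := by gcongr
    exact mul_lt_mul_of_pos_left (K_anti hq (by positivity) hll) hppos
  have hΦ0 : Φ 0 = 1 := by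
    rw [hΦdef]
    simp only
    rw [show (0:ℝ) ^ 2 / β = 0 by simp, K_zero hq, show p - 1 + 1 = p by ring,
      one_div, mul_inv_cancel₀ (ne_of_gt hppos)]
  -- a large point where Φ < θ
  have hx0 : (0:ℝ) < 1 + 1/θ := by positivity
  have hx1 : (1:ℝ) < 1 + 1/θ := by
    have : (0:ℝ) < 1/θ := by positivity
    linarith
  have hlam : 0 < (1 + 1/θ) ^ 2 / β := by positivity
  have hsmall : Φ (1 + 1/θ) < θ := by
    have hKle := K_le hq hlam
    have h2 : p * (1 / ((1 + 1/θ) ^ 2 / β)) < θ := by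
      have he : p * (1 / ((1 + 1/θ) ^ 2 / β)) = 1 / (1 + 1/θ) ^ 2 := by
        rw [hpdef]; field_simp
      rw [he, div_lt_iff₀ (by positivity)]
      have hinv : θ * (1/θ) = 1 := mul_one_div_cancel (ne_of_gt hθ0)
      nlinarith [hinv, hx1, hθ0]
    calc Φ (1 + 1/θ) ≤ p * (1 / ((1 + 1/θ) ^ 2 / β)) := by
          rw [hΦdef]; exact mul_le_mul_of_nonneg_left hKle hppos.le
      _ < θ := h2
  have hIVT := intermediate_value_Ioo' (le_of_lt hx0) hcontΦ.continuousOn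
  have hθmem : θ ∈ Set.Ioo (Φ (1 + 1/θ)) (Φ 0) := ⟨hsmall, by rw [hΦ0]; exact hθ1⟩
  obtain ⟨c, hcmem, hfc⟩ := hIVT hθmem
  refine ⟨c, ⟨hcmem.1, ?_⟩, ?_⟩
  · have h1 := main_eq c hcmem.1
    linarith
  · rintro c' ⟨hc', heq'⟩
    have h1 := main_eq c' hc'
    have h3 : Φ c' = Φ c := by rw [← h1, hfc]; linarith
    exact hanti.injOn (Set.mem_Ici.2 hc'.le) (Set.mem_Ici.2 hcmem.1.le) h3
end
end
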